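/- arXiv:1401.6755 — 4 statements merged into one kernel-verified Lean document; each statement's English description precedes it below -/
import Mathlib

section
/- Let G be a finite group whose power graph P(G) is C_4-free, let x ∈ G have order pq for distinct primes p, q, and suppose a third prime r (r ≠ p, q) divides |C_G(x)|. Then every Sylow subgroup of C_G(x) has prime exponent (exponent p, q, or r respectively), the Sylow r-subgroup of C_G(x) is normal in C_G(x) and cyclic of order r, and there exist elements y, z ∈ C_G(x) with |y| = r, |z| dividing pq, ⟨y⟩ normal in C_G(x) with ⟨y⟩ ∩ ⟨z⟩ = 1, such that C_G(x) is the internal direct product of ⟨x⟩ and the subgroup ⟨y⟩⟨z⟩ = ⟨y⟩ ⋊ ⟨z⟩. -/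
/-- Adjacency in the power graph of a group: two distinct elements are adjacent
iff one is a power of the other. -/
def pgAdj {G : Type*} [Group G] (x y : G) : Prop :=
  x ≠ y ∧ (x ∈ Subgroup.zpowers y ∨ y ∈ Subgroup.zpowers x)

/-- The power graph contains an induced 4-cycle. -/
def pgHasInducedC4 (G : Type*) [Group G] : Prop :=
  ∃ x u y v : G,
    x ≠ u ∧ x ≠ y ∧ x ≠ v ∧ u ≠ y ∧ u ≠ v ∧ y ≠ v ∧
    pgAdj x u ∧ pgAdj u y ∧ pgAdj y v ∧ pgAdj v x ∧
    ¬ pgAdj x y ∧ ¬ pgAdj u v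

/-- The power graph is `C₄`-free. -/
def pgC4Free (G : Type*) [Group G] : Prop := ¬ pgHasInducedC4 G

open Subgroup
open scoped Pointwise

section Helpers

variable {G : Type*} [Group G]

/-- Build an induced `C₄` from two non-adjacent vertices `u, v` together with two
non-adjacent common powers `s, t`. -/
lemma pg_c4_of_pattern {u s v t : G}
    (hsu : s ∈ zpowers u) (hsv : s ∈ zpowers v)
    (htu : t ∈ zpowers u) (htv : t ∈ zpowers v)
    (huv : u ∉ zpowers v) (hvu : v ∉ zpowers u)
    (hst : s ∉ zpowers t) (hts : t ∉ zpowers s) :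
    pgHasInducedC4 G := by
  have hsu' : u ≠ s := fun h => huv (h ▸ hsv)
  have hsv' : v ≠ s := fun h => hvu (h ▸ hsu)
  have htu' : u ≠ t := fun h => huv (h ▸ htv)
  have htv' : v ≠ t := fun h => hvu (h ▸ htu)
  have huv' : u ≠ v := fun h => hvu (h ▸ mem_zpowers v)
  have hst' : s ≠ t := fun h => hst (h ▸ mem_zpowers t)
  exact ⟨u, s, v, t, hsu', huv', htu', hsv'.symm, hst', htv',
    ⟨hsu', Or.inr hsu⟩, ⟨hsv'.symm, Or.inl hsv⟩, ⟨htv', Or.inr htv⟩, ⟨htu'.symm, Or.inl htu⟩,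
    fun hadj => hadj.2.elim huv hvu, fun hadj => hadj.2.elim hst hts⟩

lemma pgC4Free_subgroup (h : pgC4Free G) (H : Subgroup G) : pgC4Free H := by
  rintro ⟨a, b, c, d, h1, h2, h3, h4, h5, h6, a1, a2, a3, a4, n1, n2⟩
  have coe_adj : ∀ u v : H, pgAdj u v → pgAdj (u : G) (v : G) := by
    rintro u v ⟨hne, hm⟩
    refine ⟨fun hh => hne (Subtype.ext hh), ?_⟩
    rcases hm with hm | hm
    · obtain ⟨k, hk⟩ := mem_zpowers_iff.mp hm
      exact Or.inl (mem_zpowers_iff.mpr ⟨k, by rw [← hk]; push_cast; rfl⟩)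
    · obtain ⟨k, hk⟩ := mem_zpowers_iff.mp hm
      exact Or.inr (mem_zpowers_iff.mpr ⟨k, by rw [← hk]; push_cast; rfl⟩)
  have coe_nadj : ∀ u v : H, ¬ pgAdj u v → ¬ pgAdj (u : G) (v : G) := by
    rintro u v hn ⟨hne, hm⟩
    refine hn ⟨fun hh => hne (congrArg _ hh), ?_⟩
    rcases hm with hm | hm
    · obtain ⟨k, hk⟩ := mem_zpowers_iff.mp hm
      exact Or.inl (mem_zpowers_iff.mpr ⟨k, Subtype.ext (by push_cast; exact hk)⟩)
    · obtain ⟨k, hk⟩ := mem_zpowers_iff.mp hm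
      exact Or.inr (mem_zpowers_iff.mpr ⟨k, Subtype.ext (by push_cast; exact hk)⟩)
  exact h ⟨a, b, c, d,
    fun hh => h1 (Subtype.ext hh), fun hh => h2 (Subtype.ext hh),
    fun hh => h3 (Subtype.ext hh), fun hh => h4 (Subtype.ext hh),
    fun hh => h5 (Subtype.ext hh), fun hh => h6 (Subtype.ext hh),
    coe_adj _ _ a1, coe_adj _ _ a2, coe_adj _ _ a3, coe_adj _ _ a4,
    coe_nadj _ _ n1, coe_nadj _ _ n2⟩

/-- If `a` and `b` commute and have coprime orders, then `a` is a power of `a*b`. -/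
lemma mem_zpowers_mul_left {a b : G} (hc : Commute a b)
    (hco : Nat.Coprime (orderOf a) (orderOf b)) : a ∈ zpowers (a * b) := by
  obtain ⟨u, v, huv⟩ := Nat.isCoprime_iff_coprime.mpr hco
  refine mem_zpowers_iff.mpr ⟨v * (orderOf b : ℤ), ?_⟩
  rw [hc.mul_zpow]
  have hb : b ^ (v * (orderOf b : ℤ)) = 1 := by
    rw [mul_comm, zpow_mul, zpow_natCast, pow_orderOf_eq_one, one_zpow]
  have ha : a ^ (v * (orderOf b : ℤ)) = a := by
    have h1 : v * (orderOf b : ℤ) = 1 - u * (orderOf a : ℤ) := by linarith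
    rw [h1, zpow_sub, zpow_one, mul_comm u, zpow_mul, zpow_natCast,
      pow_orderOf_eq_one, one_zpow, inv_one, mul_one]
  rw [hb, ha, mul_one]

lemma mem_zpowers_mul_right {a b : G} (hc : Commute a b)
    (hco : Nat.Coprime (orderOf a) (orderOf b)) : b ∈ zpowers (a * b) := by
  rw [hc.eq]
  exact mem_zpowers_mul_left hc.symm hco.symm

/-- If `e` is coprime to the order of `a`, then `a` is a power of `a ^ e`. -/
lemma mem_zpowers_pow_of_coprime {a : G} {e : ℕ} (hco : Nat.Coprime e (orderOf a)) :
    a ∈ zpowers (a ^ e) := by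
  obtain ⟨u, v, huv⟩ := Nat.isCoprime_iff_coprime.mpr hco
  refine mem_zpowers_iff.mpr ⟨u, ?_⟩
  rw [← zpow_natCast a e, ← zpow_mul, mul_comm (e : ℤ) u]
  have : a ^ (u * (e : ℤ)) = a ^ (1 - v * (orderOf a : ℤ)) := by
    congr 1; linarith
  rw [this, zpow_sub, zpow_one, mul_comm v, zpow_mul, zpow_natCast,
    pow_orderOf_eq_one, one_zpow, inv_one, mul_one]

/-- If `a` has prime order and `a ^ k ≠ 1` then `a` is a power of `a ^ k`. -/
lemma mem_zpowers_zpow_of_prime {a : G} {p : ℕ} (hp : p.Prime) (ha : orderOf a = p)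
    {k : ℤ} (hk : a ^ k ≠ 1) : a ∈ zpowers (a ^ k) := by
  have hnd : ¬ ((p : ℤ) ∣ k) := by
    intro ⟨c, hc⟩
    exact hk (by rw [hc, zpow_mul, zpow_natCast, ← ha, pow_orderOf_eq_one, one_zpow])
  have hco : IsCoprime k (p : ℤ) := by
    rw [Int.isCoprime_iff_gcd_eq_one]
    rcases (Nat.coprime_or_dvd_of_prime hp (Int.gcd k p)).symm with hd | hd
    · exact absurd (dvd_trans (Int.natCast_dvd_natCast.mpr hd) (Int.gcd_dvd_left _ _)) hnd
    · have h1 : Int.gcd k p ∣ p := Int.natCast_dvd_natCast.mp (Int.gcd_dvd_right _ _)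
      rcases (Nat.dvd_prime hp).mp h1 with h | h
      · exact h
      · exact absurd (h ▸ Int.gcd_dvd_left _ _) hnd
  obtain ⟨u, v, huv⟩ := hco
  refine mem_zpowers_iff.mpr ⟨u, ?_⟩
  rw [← zpow_mul]
  have : a ^ (k * u) = a ^ (1 - v * (p : ℤ)) := by
    congr 1; linarith [huv]
  rw [this, zpow_sub, zpow_one, mul_comm v, zpow_mul, zpow_natCast, ← ha,
    pow_orderOf_eq_one, one_zpow, inv_one, mul_one]

lemma zpowers_eq_of_mem_of_orderOf_eq [Finite G] {a b : G} (hb : b ∈ zpowers a)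
    (hord : orderOf b = orderOf a) : zpowers b = zpowers a :=
  Subgroup.eq_of_le_of_card_ge (zpowers_le.mpr hb)
    (by rw [Nat.card_zpowers, Nat.card_zpowers, hord])

end Helpers

section Core

variable {G : Type*} [Group G]

/-- Shifting exponents across a commuting relation. -/
lemma commute_shift {a b : G} (hc : Commute a b) {k l m n : ℤ}
    (hyp : a ^ k * b ^ l = a ^ m * b ^ n) : a ^ (k - m) = b ^ (n - l) := by
  have e' : a ^ (-m) * (a ^ k * b ^ l) * b ^ (-l) = a ^ (-m) * a ^ k := by
    rw [mul_assoc, mul_assoc (a ^ k), ← zpow_add b, add_neg_cancel, zpow_zero, mul_one]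
  have e : a ^ (-m) * (a ^ m * b ^ n) * b ^ (-l) = b ^ (n - l) := by
    rw [← mul_assoc, ← zpow_add a, neg_add_cancel, zpow_zero, one_mul, ← zpow_add b,
      ← sub_eq_add_neg]
  calc a ^ (k - m) = a ^ (-m) * a ^ k := by rw [← zpow_add]; congr 1; ring
    _ = a ^ (-m) * (a ^ k * b ^ l) * b ^ (-l) := e'.symm
    _ = a ^ (-m) * (a ^ m * b ^ n) * b ^ (-l) := by rw [hyp]
    _ = b ^ (n - l) := e

lemma zpow_order_dvd {x : G} {n : ℕ} (hx : orderOf x ∣ n) (k : ℤ) : orderOf (x ^ k) ∣ n := by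
  apply orderOf_dvd_of_pow_eq_one
  rw [← zpow_natCast (x ^ k), ← zpow_mul, mul_comm, zpow_mul, zpow_natCast,
    orderOf_dvd_iff_pow_eq_one.mp hx, one_zpow]

lemma eq_one_of_orderOf_dvd_coprimes {a : G} {m n : ℕ} (hco : Nat.Coprime m n)
    (h1 : orderOf a ∣ m) (h2 : orderOf a ∣ n) : a = 1 :=
  orderOf_eq_one_iff.mp (Nat.dvd_one.mp (hco ▸ Nat.dvd_gcd h1 h2))

variable [Finite G] {p q r : ℕ}

lemma ord_pow_q {x : G} (hx : orderOf x = p * q) (hp0 : 0 < p) : orderOf (x ^ p) = q := by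
  rw [orderOf_pow, hx, Nat.gcd_comm, Nat.gcd_eq_left (dvd_mul_right p q),
    Nat.mul_div_cancel_left q hp0]

lemma ord_pow_p {x : G} (hx : orderOf x = p * q) (hq0 : 0 < q) : orderOf (x ^ q) = p := by
  rw [orderOf_pow, hx, Nat.gcd_comm, Nat.gcd_eq_left (dvd_mul_left q p),
    Nat.mul_div_cancel p hq0]

/-- Key non-adjacency: if `w₁, w₂` commute with `x`, have prime orders different from
`p, q`, and generate different cyclic subgroups, then `x*w₂` is not a power of `x*w₁`. -/
lemma aux_xw_not_mem (hp : p.Prime) (hq : q.Prime)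
    {x w1 w2 : G} (hx : orderOf x = p * q)
    {r1 r2 : ℕ} (hr1 : r1.Prime) (hr2 : r2.Prime)
    (hr1p : r1 ≠ p) (hr1q : r1 ≠ q) (hr2p : r2 ≠ p) (hr2q : r2 ≠ q)
    (h1 : Commute x w1) (h2 : Commute x w2)
    (ho1 : orderOf w1 = r1) (ho2 : orderOf w2 = r2)
    (hne : Subgroup.zpowers w1 ≠ Subgroup.zpowers w2) :
    x * w2 ∉ Subgroup.zpowers (x * w1) := by
  have cop2 : Nat.Coprime (p * q) r2 :=
    Nat.Coprime.mul ((Nat.coprime_primes hp hr2).mpr fun hh => hr2p hh.symm)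
      ((Nat.coprime_primes hq hr2).mpr fun hh => hr2q hh.symm)
  intro hmem
  obtain ⟨k, hk⟩ := Subgroup.mem_zpowers_iff.mp hmem
  rw [h1.mul_zpow] at hk
  have hw2 : w2 = x ^ (k - 1) * w1 ^ k := by
    have h' : w2 = x⁻¹ * (x ^ k * w1 ^ k) := by rw [hk, inv_mul_cancel_left]
    have h'' : (-1 : ℤ) + k = k - 1 := by ring
    rw [h', ← mul_assoc, ← zpow_neg_one, ← zpow_add, h'']
  have hab : Commute (x ^ (k - 1)) (w1 ^ k) := (h1.zpow_zpow _ _)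
  have hda : orderOf (x ^ (k - 1)) ∣ p * q := zpow_order_dvd (hx ▸ dvd_refl _) _
  have hdb : orderOf (w1 ^ k) ∣ r1 := zpow_order_dvd (ho1 ▸ dvd_refl _) _
  have hcopab : Nat.Coprime (orderOf (x ^ (k - 1))) (orderOf (w1 ^ k)) :=
    Nat.Coprime.coprime_dvd_left hda (Nat.Coprime.coprime_dvd_right hdb
      (Nat.Coprime.mul ((Nat.coprime_primes hp hr1).mpr fun hh => hr1p hh.symm)
        ((Nat.coprime_primes hq hr1).mpr fun hh => hr1q hh.symm)))
  have hprod : r2 = orderOf (x ^ (k - 1)) * orderOf (w1 ^ k) := by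
    rw [← ho2, hw2, hab.orderOf_mul_eq_mul_orderOf_of_coprime hcopab]
  have haone : x ^ (k - 1) = 1 := by
    refine eq_one_of_orderOf_dvd_coprimes cop2 hda ?_
    exact Dvd.intro _ hprod.symm
  have hbw : w2 = w1 ^ k := by rw [hw2, haone, one_mul]
  have hordeq : orderOf w2 = orderOf w1 := by
    have h2' : r2 = orderOf (w1 ^ k) := by rwa [haone, orderOf_one, one_mul] at hprod
    rw [ho1, ho2, (Nat.prime_dvd_prime_iff_eq hr2 hr1).mp (h2' ▸ hdb)]
  exact hne (zpowers_eq_of_mem_of_orderOf_eq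
    (hbw ▸ Subgroup.mem_zpowers_iff.mpr ⟨k, rfl⟩ : w2 ∈ Subgroup.zpowers w1) hordeq).symm

lemma not_mem_zpowers_of_orderOf_not_dvd {a b : G} (hnd : ¬ orderOf a ∣ orderOf b) :
    a ∉ Subgroup.zpowers b := fun hm => hnd (orderOf_dvd_of_mem_zpowers hm)

/-- Two commuting-with-`x` elements of prime order `∉ {p,q}` generating distinct
cyclic subgroups yield an induced `C₄`. -/
lemma aux_two_primes_false (hC4 : pgC4Free G) (hp : p.Prime) (hq : q.Prime) (hpq : p ≠ q)
    {x w1 w2 : G} (hx : orderOf x = p * q)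
    {r1 r2 : ℕ} (hr1 : r1.Prime) (hr2 : r2.Prime)
    (hr1p : r1 ≠ p) (hr1q : r1 ≠ q) (hr2p : r2 ≠ p) (hr2q : r2 ≠ q)
    (h1 : Commute x w1) (h2 : Commute x w2)
    (ho1 : orderOf w1 = r1) (ho2 : orderOf w2 = r2)
    (hne : Subgroup.zpowers w1 ≠ Subgroup.zpowers w2) : False := by
  have cop1 : Nat.Coprime (p * q) r1 :=
    Nat.Coprime.mul ((Nat.coprime_primes hp hr1).mpr fun hh => hr1p hh.symm)
      ((Nat.coprime_primes hq hr1).mpr fun hh => hr1q hh.symm)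
  have cop2 : Nat.Coprime (p * q) r2 :=
    Nat.Coprime.mul ((Nat.coprime_primes hp hr2).mpr fun hh => hr2p hh.symm)
      ((Nat.coprime_primes hq hr2).mpr fun hh => hr2q hh.symm)
  have hxu : x ∈ Subgroup.zpowers (x * w1) :=
    mem_zpowers_mul_left h1 (by rw [hx, ho1]; exact cop1)
  have hxv : x ∈ Subgroup.zpowers (x * w2) :=
    mem_zpowers_mul_left h2 (by rw [hx, ho2]; exact cop2)
  have os : orderOf (x ^ p) = q := ord_pow_q hx hp.pos
  have ot : orderOf (x ^ q) = p := ord_pow_p hx hq.pos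
  apply hC4
  refine pg_c4_of_pattern (u := x * w1) (s := x ^ p) (v := x * w2) (t := x ^ q)
    (Subgroup.pow_mem _ hxu p) (Subgroup.pow_mem _ hxv p)
    (Subgroup.pow_mem _ hxu q) (Subgroup.pow_mem _ hxv q)
    (aux_xw_not_mem hp hq hx hr2 hr1 hr2p hr2q hr1p hr1q h2 h1 ho2 ho1 hne.symm)
    (aux_xw_not_mem hp hq hx hr1 hr2 hr1p hr1q hr2p hr2q h1 h2 ho1 ho2 hne)
    (not_mem_zpowers_of_orderOf_not_dvd ?_) (not_mem_zpowers_of_orderOf_not_dvd ?_)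
  · rw [os, ot]; exact fun hd => hpq ((Nat.prime_dvd_prime_iff_eq hq hp).mp hd).symm
  · rw [os, ot]; exact fun hd => hpq ((Nat.prime_dvd_prime_iff_eq hp hq).mp hd)

/-- No element of order `r²` (for a third prime `r`) commutes with `x`. -/
lemma aux_no_rr (hC4 : pgC4Free G) (hp : p.Prime) (hq : q.Prime) (hr : r.Prime)
    (hpq : p ≠ q) (hrp : r ≠ p) (hrq : r ≠ q)
    {x g : G} (hx : orderOf x = p * q) (hg : orderOf g = r * r)
    (hcomm : Commute x g) : False := by
  have copPR : Nat.Coprime p r := (Nat.coprime_primes hp hr).mpr fun hh => hrp hh.symm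
  have copQR : Nat.Coprime q r := (Nat.coprime_primes hq hr).mpr fun hh => hrq hh.symm
  have copPQR : Nat.Coprime (p * q) r := Nat.Coprime.mul copPR copQR
  have oxq : orderOf (x ^ q) = p := ord_pow_p hx hq.pos
  have ogr : orderOf (g ^ r) = r := by
    rw [orderOf_pow, hg, Nat.gcd_comm, Nat.gcd_eq_left (dvd_mul_left r r),
      Nat.mul_div_cancel r hr.pos]
  have hcomm1 : Commute (x ^ q) g := hcomm.pow_left q
  have hcomm2 : Commute x (g ^ r) := hcomm.pow_right r
  have cop_u : Nat.Coprime (orderOf (x ^ q)) (orderOf g) := by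
    rw [oxq, hg]; exact Nat.Coprime.mul_right copPR copPR
  have cop_v : Nat.Coprime (orderOf x) (orderOf (g ^ r)) := by
    rw [hx, ogr]; exact copPQR
  have ou : orderOf (x ^ q * g) = p * (r * r) := by
    rw [hcomm1.orderOf_mul_eq_mul_orderOf_of_coprime cop_u, oxq, hg]
  have ov : orderOf (x * g ^ r) = p * q * r := by
    rw [hcomm2.orderOf_mul_eq_mul_orderOf_of_coprime cop_v, hx, ogr]
  have hxv : x ∈ Subgroup.zpowers (x * g ^ r) := mem_zpowers_mul_left hcomm2 cop_v
  have hgu : g ∈ Subgroup.zpowers (x ^ q * g) := mem_zpowers_mul_right hcomm1 cop_u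
  apply hC4
  refine pg_c4_of_pattern (u := x ^ q * g) (s := x ^ q) (v := x * g ^ r) (t := g ^ r)
    (mem_zpowers_mul_left hcomm1 cop_u) (Subgroup.pow_mem _ hxv q)
    (Subgroup.pow_mem _ hgu r) (mem_zpowers_mul_right hcomm2 cop_v)
    (not_mem_zpowers_of_orderOf_not_dvd ?_) (not_mem_zpowers_of_orderOf_not_dvd ?_)
    (not_mem_zpowers_of_orderOf_not_dvd ?_) (not_mem_zpowers_of_orderOf_not_dvd ?_)
  · -- p * (r*r) ∤ p*q*r
    rw [ou, ov]
    intro hd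
    have h1 : r * r ∣ (p * q) * r := dvd_trans ⟨p, by ring⟩ hd
    have h2 : r ∣ p * q := (mul_dvd_mul_iff_right hr.pos.ne').mp h1
    rcases (Nat.Prime.dvd_mul hr).mp h2 with hd' | hd'
    · exact hrp ((Nat.prime_dvd_prime_iff_eq hr hp).mp hd')
    · exact hrq ((Nat.prime_dvd_prime_iff_eq hr hq).mp hd')
  · -- p*q*r ∤ p * (r*r)
    rw [ou, ov]
    intro hd
    have h1 : q ∣ p * (r * r) := dvd_trans ⟨p * r, by ring⟩ hd
    rcases (Nat.Prime.dvd_mul hq).mp h1 with hd' | hd'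
    · exact hpq ((Nat.prime_dvd_prime_iff_eq hq hp).mp hd').symm
    · rcases (Nat.Prime.dvd_mul hq).mp hd' with hd'' | hd'' <;>
        exact hrq ((Nat.prime_dvd_prime_iff_eq hq hr).mp hd'').symm
  · rw [oxq, ogr]; exact fun hd => hrp ((Nat.prime_dvd_prime_iff_eq hp hr).mp hd).symm
  · rw [oxq, ogr]; exact fun hd => hrp ((Nat.prime_dvd_prime_iff_eq hr hp).mp hd)

end Core


section Core2

variable {G : Type*} [Group G] [Finite G] {p q r : ℕ}

/-- No element of order `p²` commutes with `x` (given a third prime `r` available). -/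
lemma aux_no_pp (hC4 : pgC4Free G) (hp : p.Prime) (hq : q.Prime) (hr : r.Prime)
    (hpq : p ≠ q) (hrp : r ≠ p) (hrq : r ≠ q)
    {x g y : G} (hx : orderOf x = p * q) (hg : orderOf g = p * p) (hy : orderOf y = r)
    (hxg : Commute x g) (hxy : Commute x y) : False := by
  have copPQ : Nat.Coprime p q := (Nat.coprime_primes hp hq).mpr hpq
  have copPPQ : Nat.Coprime (p * p) q := Nat.Coprime.mul copPQ copPQ
  have copPQR : Nat.Coprime (p * q) r :=
    Nat.Coprime.mul ((Nat.coprime_primes hp hr).mpr fun hh => hrp hh.symm)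
      ((Nat.coprime_primes hq hr).mpr fun hh => hrq hh.symm)
  have oxp : orderOf (x ^ p) = q := ord_pow_q hx hp.pos
  have oxq : orderOf (x ^ q) = p := ord_pow_p hx hq.pos
  have hcgu : Commute g (x ^ p) := hxg.symm.pow_right p
  have cop_u : Nat.Coprime (orderOf g) (orderOf (x ^ p)) := by rw [hg, oxp]; exact copPPQ
  have ou : orderOf (g * x ^ p) = p * p * q := by
    rw [hcgu.orderOf_mul_eq_mul_orderOf_of_coprime cop_u, hg, oxp]
  have hgu : g ∈ Subgroup.zpowers (g * x ^ p) := mem_zpowers_mul_left hcgu cop_u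
  have hxpu : x ^ p ∈ Subgroup.zpowers (g * x ^ p) := mem_zpowers_mul_right hcgu cop_u
  have ogp : orderOf (g ^ p) = p := by
    rw [orderOf_pow, hg, Nat.gcd_comm, Nat.gcd_eq_left (dvd_mul_left p p),
      Nat.mul_div_cancel p hp.pos]
  by_cases hcase : x ^ q ∈ Subgroup.zpowers g
  · -- Case 1 : `x ∈ ⟨g·xᵖ⟩`; use `v = x*y`.
    have cop_v : Nat.Coprime (orderOf x) (orderOf y) := by rw [hx, hy]; exact copPQR
    have ov : orderOf (x * y) = p * q * r := by
      rw [hxy.orderOf_mul_eq_mul_orderOf_of_coprime cop_v, hx, hy]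
    have hxv : x ∈ Subgroup.zpowers (x * y) := mem_zpowers_mul_left hxy cop_v
    have hxqu : x ^ q ∈ Subgroup.zpowers (g * x ^ p) := (Subgroup.zpowers_le.mpr hgu) hcase
    apply hC4
    refine pg_c4_of_pattern (u := g * x ^ p) (s := x ^ q) (v := x * y) (t := x ^ p)
      hxqu (Subgroup.pow_mem _ hxv q) hxpu (Subgroup.pow_mem _ hxv p)
      (not_mem_zpowers_of_orderOf_not_dvd ?_) (not_mem_zpowers_of_orderOf_not_dvd ?_)
      (not_mem_zpowers_of_orderOf_not_dvd ?_) (not_mem_zpowers_of_orderOf_not_dvd ?_)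
    · rw [ou, ov]
      intro hd
      have hd' : p * p * q ∣ p * (q * r) := by rw [show p * (q * r) = p * q * r by ring]; exact hd
      have h1 : p * p ∣ p * (q * r) := dvd_trans (dvd_mul_right (p * p) q) hd'
      have h2 : p ∣ q * r := (mul_dvd_mul_iff_left hp.pos.ne').mp h1
      rcases (Nat.Prime.dvd_mul hp).mp h2 with hd'' | hd''
      · exact hpq ((Nat.prime_dvd_prime_iff_eq hp hq).mp hd'')
      · exact hrp ((Nat.prime_dvd_prime_iff_eq hp hr).mp hd'').symm
    · rw [ou, ov]
      intro hd
      have h1 : r ∣ p * p * q := dvd_trans ⟨p * q, by ring⟩ hd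
      rcases (Nat.Prime.dvd_mul hr).mp h1 with hd' | hd'
      · rcases (Nat.Prime.dvd_mul hr).mp hd' with h'' | h'' <;>
          exact hrp ((Nat.prime_dvd_prime_iff_eq hr hp).mp h'')
      · exact hrq ((Nat.prime_dvd_prime_iff_eq hr hq).mp hd')
    · rw [oxq, oxp]; exact fun hd => hpq ((Nat.prime_dvd_prime_iff_eq hp hq).mp hd)
    · rw [oxq, oxp]; exact fun hd => hpq ((Nat.prime_dvd_prime_iff_eq hq hp).mp hd).symm
  · -- Case 2 : `⟨g⟩ ∩ ⟨x⟩ = 1`; use `v = g * x^(p+q)`.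
    have hI : ∀ k m : ℤ, g ^ k = x ^ m → g ^ k = 1 := by
      intro k m he
      by_contra hne1
      have hd1 : orderOf (g ^ k) ∣ p * p := zpow_order_dvd (hg ▸ dvd_refl _) k
      have hd2 : orderOf (g ^ k) ∣ p * q := he ▸ zpow_order_dvd (hx ▸ dvd_refl _) m
      have hgcd : Nat.gcd (p * p) (p * q) = p := by
        rw [Nat.gcd_mul_left, copPQ, mul_one]
      have hdp : orderOf (g ^ k) ∣ p := hgcd ▸ Nat.dvd_gcd hd1 hd2
      have hop : orderOf (g ^ k) = p :=
        ((Nat.dvd_prime hp).mp hdp).resolve_left fun h1 => hne1 (orderOf_eq_one_iff.mp h1)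
      have hxm : x ^ (m * (p : ℤ)) = 1 := by
        rw [zpow_mul, ← he, zpow_natCast, ← hop, pow_orderOf_eq_one]
      have hdvd_m : ((p : ℤ) * q) ∣ m * p := by
        have h0 := orderOf_dvd_iff_zpow_eq_one.mpr hxm
        rwa [hx, Nat.cast_mul] at h0
      have hq_m : (q : ℤ) ∣ m := by
        have h' : (q : ℤ) * p ∣ m * p := by rwa [mul_comm (q : ℤ) (p : ℤ)]
        exact (mul_dvd_mul_iff_right (by exact_mod_cast hp.pos.ne' : (p : ℤ) ≠ 0)).mp h'
      obtain ⟨m', hm'⟩ := hq_m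
      have hmem : g ^ k ∈ Subgroup.zpowers (x ^ q) := by
        refine Subgroup.mem_zpowers_iff.mpr ⟨m', ?_⟩
        rw [← zpow_natCast x q, ← zpow_mul, ← hm', ← he]
      have hzeq : Subgroup.zpowers (g ^ k) = Subgroup.zpowers (x ^ q) :=
        zpowers_eq_of_mem_of_orderOf_eq hmem (by rw [hop, oxq])
      have h1 : x ^ q ∈ Subgroup.zpowers (g ^ k) := hzeq ▸ Subgroup.mem_zpowers _
      exact hcase ((Subgroup.zpowers_le.mpr (Subgroup.mem_zpowers_iff.mpr ⟨k, rfl⟩)) h1)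
    have hcgx : Commute g x := hxg.symm
    have hsv : g ^ p ∈ Subgroup.zpowers (g * x ^ (p + q)) := by
      have hcgv : Commute g (x ^ (p + q)) := hcgx.pow_right _
      have hv1 : (g * x ^ (p + q)) ^ (p * q) = (g ^ p) ^ q := by
        rw [hcgv.mul_pow]
        have hx1 : x ^ ((p + q) * (p * q)) = 1 :=
          orderOf_dvd_iff_pow_eq_one.mp (hx ▸ dvd_mul_left (p * q) (p + q))
        rw [← pow_mul x, hx1, mul_one, ← pow_mul g]
      have hmem : (g ^ p) ^ q ∈ Subgroup.zpowers (g * x ^ (p + q)) :=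
        hv1 ▸ Subgroup.pow_mem _ (Subgroup.mem_zpowers _) _
      exact (Subgroup.zpowers_le.mpr hmem)
        (mem_zpowers_pow_of_coprime (by rw [ogp]; exact (Nat.coprime_primes hq hp).mpr hpq.symm))
    have htv : x ^ p ∈ Subgroup.zpowers (g * x ^ (p + q)) := by
      have hcgv : Commute g (x ^ (p + q)) := hcgx.pow_right _
      have hv2 : (g * x ^ (p + q)) ^ (p * p) = (x ^ p) ^ ((p + q) * p) := by
        rw [hcgv.mul_pow]
        have hg1 : g ^ (p * p) = 1 := by rw [← hg]; exact pow_orderOf_eq_one g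
        rw [hg1, one_mul, ← pow_mul, ← pow_mul]
        congr 1; ring
      have hmem : (x ^ p) ^ ((p + q) * p) ∈ Subgroup.zpowers (g * x ^ (p + q)) :=
        hv2 ▸ Subgroup.pow_mem _ (Subgroup.mem_zpowers _) _
      refine (Subgroup.zpowers_le.mpr hmem) (mem_zpowers_pow_of_coprime ?_)
      rw [oxp]
      refine Nat.Coprime.mul ?_ copPQ
      refine Nat.coprime_comm.mp (hq.coprime_iff_not_dvd.mpr ?_)
      intro hdq
      have hqp : q ∣ p := by
        have h0 := Nat.dvd_sub hdq (dvd_refl q)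
        simpa using h0
      exact hpq ((Nat.prime_dvd_prime_iff_eq hq hp).mp hqp).symm
    have key : ∀ (k : ℤ) (c d : ℕ), (g * x ^ c) ^ k = g * x ^ d →
        g ^ (k - 1) = x ^ ((d : ℤ) - (c : ℤ) * k) := by
      intro k c d hk
      have e0 : (g * x ^ c) ^ k = g ^ k * x ^ ((c : ℤ) * k) := by
        rw [(hcgx.pow_right c).mul_zpow, ← zpow_natCast x c, ← zpow_mul]
      have h1 : g ^ k * x ^ ((c : ℤ) * k) = g ^ (1 : ℤ) * x ^ ((d : ℤ)) := by
        rw [← e0, hk, zpow_one, zpow_natCast]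
      exact commute_shift hcgx h1
    apply hC4
    refine pg_c4_of_pattern (u := g * x ^ p) (s := g ^ p) (v := g * x ^ (p + q)) (t := x ^ p)
      (Subgroup.pow_mem _ hgu p) hsv hxpu htv ?_ ?_
      (not_mem_zpowers_of_orderOf_not_dvd ?_) (not_mem_zpowers_of_orderOf_not_dvd ?_)
    · -- u ∉ zpowers v
      intro hmem
      obtain ⟨k, hk⟩ := Subgroup.mem_zpowers_iff.mp hmem
      have hkey := key k (p + q) p hk
      have hone := hI _ _ hkey
      rw [hone] at hkey
      have hdvd' : ((p : ℤ) * q) ∣ ((p : ℤ) - ((p : ℤ) + q) * k) := by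
        have h0 := orderOf_dvd_iff_zpow_eq_one.mpr hkey.symm
        rw [hx, Nat.cast_mul] at h0
        convert h0 using 2
        all_goals (push_cast; ring)
      have h2 : (p : ℤ) ∣ (p : ℤ) - ((p : ℤ) + q) * k := dvd_trans (dvd_mul_right _ _) hdvd'
      have hdk : ((p : ℤ) * p) ∣ (k - 1) := by
        have h0 := orderOf_dvd_iff_zpow_eq_one.mpr hone
        rwa [hg, Nat.cast_mul] at h0
      have hp_k1 : (p : ℤ) ∣ k - 1 := dvd_trans (dvd_mul_right _ _) hdk
      have hpqk : (p : ℤ) ∣ (q : ℤ) * k := by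
        have h3 : (q : ℤ) * k = -((p : ℤ) - ((p : ℤ) + q) * k) + p - p * k := by ring
        rw [h3]
        exact dvd_sub (dvd_add (dvd_neg.mpr h2) dvd_rfl) (dvd_mul_right _ _)
      have hpq' : (p : ℤ) ∣ (q : ℤ) := by
        have h3 : (q : ℤ) = (q : ℤ) * k - (q : ℤ) * (k - 1) := by ring
        rw [h3]
        exact dvd_sub hpqk (Dvd.dvd.mul_left hp_k1 (q : ℤ))
      exact hpq ((Nat.prime_dvd_prime_iff_eq hp hq).mp (Int.natCast_dvd_natCast.mp hpq'))
    · -- v ∉ zpowers u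
      intro hmem
      obtain ⟨k, hk⟩ := Subgroup.mem_zpowers_iff.mp hmem
      have hkey := key k p (p + q) hk
      have hone := hI _ _ hkey
      rw [hone] at hkey
      have hdvd' : ((p : ℤ) * q) ∣ (((p : ℤ) + q) - (p : ℤ) * k) := by
        have h0 := orderOf_dvd_iff_zpow_eq_one.mpr hkey.symm
        rw [hx, Nat.cast_mul] at h0
        convert h0 using 2
        all_goals (push_cast; ring)
      have h2 : (p : ℤ) ∣ ((p : ℤ) + q) - (p : ℤ) * k := dvd_trans (dvd_mul_right _ _) hdvd'
      have hpq' : (p : ℤ) ∣ (q : ℤ) := by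
        have h3 : (q : ℤ) = (((p : ℤ) + q) - (p : ℤ) * k) - p + p * k := by ring
        rw [h3]
        exact dvd_add (dvd_sub h2 dvd_rfl) (dvd_mul_right _ _)
      exact hpq ((Nat.prime_dvd_prime_iff_eq hp hq).mp (Int.natCast_dvd_natCast.mp hpq'))
    · rw [ogp, oxp]; exact fun hd => hpq ((Nat.prime_dvd_prime_iff_eq hp hq).mp hd)
    · rw [ogp, oxp]; exact fun hd => hpq ((Nat.prime_dvd_prime_iff_eq hq hp).mp hd).symm

end Core2


section Core3

variable {G : Type*} [Group G] [Finite G] {p q r : ℕ}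

/-- An element of order `p` commuting with both `x` and `y` lies in `⟨x^q⟩`. -/
lemma aux_p_elt_in_xq (hC4 : pgC4Free G) (hp : p.Prime) (hq : q.Prime) (hr : r.Prime)
    (hpq : p ≠ q) (hrp : r ≠ p) (hrq : r ≠ q)
    {x y w : G} (hx : orderOf x = p * q) (hy : orderOf y = r) (hw : orderOf w = p)
    (hxy : Commute x y) (hxw : Commute x w) (hyw : Commute y w) :
    w ∈ Subgroup.zpowers (x ^ q) := by
  by_contra hcon
  have copPQ : Nat.Coprime p q := (Nat.coprime_primes hp hq).mpr hpq
  have copPR : Nat.Coprime p r := (Nat.coprime_primes hp hr).mpr fun hh => hrp hh.symm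
  have copPQR : Nat.Coprime (p * q) r :=
    Nat.Coprime.mul copPR ((Nat.coprime_primes hq hr).mpr fun hh => hrq hh.symm)
  have oxp : orderOf (x ^ p) = q := ord_pow_q hx hp.pos
  have hwp1 : w ^ p = 1 := by rw [← hw]; exact pow_orderOf_eq_one w
  have hxpq1 : x ^ (p * q) = 1 := by rw [← hx]; exact pow_orderOf_eq_one x
  have hxp_ne : x ^ p ≠ 1 := by
    intro h1
    have h2 : p * q ∣ p * 1 := by
      rw [mul_one]; exact hx ▸ orderOf_dvd_iff_pow_eq_one.mpr h1
    exact hq.one_lt.ne' (Nat.dvd_one.mp ((Nat.mul_dvd_mul_iff_left hp.pos).mp h2))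
  have hno : orderOf (x * w) = p * q := by
    have hdvd : orderOf (x * w) ∣ p * q := by
      apply orderOf_dvd_of_pow_eq_one
      have hw1 : w ^ (p * q) = 1 := orderOf_dvd_iff_pow_eq_one.mp (hw ▸ dvd_mul_right p q)
      rw [hxw.mul_pow, hxpq1, hw1, one_mul]
    have hnp : ¬ orderOf (x * w) ∣ p := by
      intro hd
      have h1 : (x * w) ^ p = 1 := orderOf_dvd_iff_pow_eq_one.mp hd
      rw [hxw.mul_pow, hwp1, mul_one] at h1
      exact hxp_ne h1
    have hnq : ¬ orderOf (x * w) ∣ q := by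
      intro hd
      have h1 : (x * w) ^ q = 1 := orderOf_dvd_iff_pow_eq_one.mp hd
      rw [hxw.mul_pow] at h1
      have h2 : w ^ q = (x ^ q)⁻¹ := eq_inv_of_mul_eq_one_right h1
      have hmemw : w ∈ Subgroup.zpowers (w ^ q) :=
        mem_zpowers_pow_of_coprime (by rw [hw]; exact copPQ.symm)
      rw [h2] at hmemw
      exact hcon ((Subgroup.zpowers_le.mpr
        (Subgroup.inv_mem _ (Subgroup.mem_zpowers _))) hmemw)
    have hpn : p ∣ orderOf (x * w) := by
      by_contra hnp'
      exact hnq (Nat.Coprime.dvd_of_dvd_mul_left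
        (Nat.coprime_comm.mp (hp.coprime_iff_not_dvd.mpr hnp')) hdvd)
    have hqn : q ∣ orderOf (x * w) := by
      by_contra hnq'
      exact hnp (Nat.Coprime.dvd_of_dvd_mul_right
        (Nat.coprime_comm.mp (hq.coprime_iff_not_dvd.mpr hnq')) hdvd)
    exact Nat.dvd_antisymm hdvd (Nat.Coprime.mul_dvd_of_dvd_of_dvd copPQ hpn hqn)
  have hcxwy : Commute (x * w) y := Commute.mul_left hxy hyw.symm
  have cop_u : Nat.Coprime (orderOf x) (orderOf y) := by rw [hx, hy]; exact copPQR
  have cop_v : Nat.Coprime (orderOf (x * w)) (orderOf y) := by rw [hno, hy]; exact copPQR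
  have hxu : x ∈ Subgroup.zpowers (x * y) := mem_zpowers_mul_left hxy cop_u
  have hyu : y ∈ Subgroup.zpowers (x * y) := mem_zpowers_mul_right hxy cop_u
  have hxwv : x * w ∈ Subgroup.zpowers ((x * w) * y) := mem_zpowers_mul_left hcxwy cop_v
  have hyv : y ∈ Subgroup.zpowers ((x * w) * y) := mem_zpowers_mul_right hcxwy cop_v
  have hxpv : x ^ p ∈ Subgroup.zpowers ((x * w) * y) := by
    have h0 : (x * w) ^ p = x ^ p := by rw [hxw.mul_pow, hwp1, mul_one]
    exact h0 ▸ Subgroup.pow_mem _ hxwv p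
  -- helper to pass from `q ∣ k-1` plus `w-form` to membership in `⟨x^q⟩`
  have mem_xq : ∀ k : ℤ, x ^ ((k : ℤ)) = x ^ k → True := fun _ _ => trivial
  apply hC4
  refine pg_c4_of_pattern (u := x * y) (s := x ^ p) (v := (x * w) * y) (t := y)
    (Subgroup.pow_mem _ hxu p) hxpv hyu hyv ?_ ?_
    (not_mem_zpowers_of_orderOf_not_dvd ?_) (not_mem_zpowers_of_orderOf_not_dvd ?_)
  · -- (x*y) ∉ zpowers ((x*w)*y)
    intro hmem
    obtain ⟨k, hk⟩ := Subgroup.mem_zpowers_iff.mp hmem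
    rw [hcxwy.mul_zpow] at hk
    have hc : x⁻¹ * (x * w) ^ k = y ^ (1 - k : ℤ) := by
      have h1 : x⁻¹ * ((x * w) ^ k * y ^ k) * y ^ (-k : ℤ) = x⁻¹ * (x * w) ^ k := by
        rw [mul_assoc x⁻¹, mul_assoc ((x * w) ^ k), ← zpow_add y, add_neg_cancel,
          zpow_zero, mul_one]
      have h2 : x⁻¹ * (x * y) * y ^ (-k : ℤ) = y ^ (1 - k : ℤ) := by
        rw [inv_mul_cancel_left, sub_eq_add_neg, zpow_add, zpow_one]
      rw [← h1, hk]; exact h2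
    have hcomm' : Commute x⁻¹ ((x * w) ^ k) :=
      (((Commute.refl x).mul_right hxw).zpow_right k).inv_left
    have hcord : orderOf (x⁻¹ * (x * w) ^ k) ∣ p * q := by
      apply orderOf_dvd_of_pow_eq_one
      rw [hcomm'.mul_pow]
      have e1 : (x⁻¹) ^ (p * q) = 1 := by rw [inv_pow, hxpq1, inv_one]
      have e2 : ((x * w) ^ k) ^ (p * q) = 1 := by
        rw [← zpow_natCast ((x * w) ^ k), ← zpow_mul, mul_comm k, zpow_mul, zpow_natCast,
          orderOf_dvd_iff_pow_eq_one.mp (hno ▸ dvd_refl _), one_zpow]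
      rw [e1, e2, one_mul]
    have hcord2 : orderOf (x⁻¹ * (x * w) ^ k) ∣ r := by
      rw [hc]; exact zpow_order_dvd (hy ▸ dvd_refl _) _
    have hc1 : x⁻¹ * (x * w) ^ k = 1 := eq_one_of_orderOf_dvd_coprimes copPQR hcord hcord2
    have hxk : (x * w) ^ k = x := (inv_mul_eq_one.mp hc1).symm
    have h1 : x ^ k * w ^ k = x ^ (1 : ℤ) * w ^ (0 : ℤ) := by
      rw [zpow_one, zpow_zero, mul_one, ← hxw.mul_zpow, hxk]
    have hshift := commute_shift hxw h1
    rw [zero_sub] at hshift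
    by_cases hwk : w ^ (-k : ℤ) = 1
    · rw [hwk] at hshift
      have d1 : ((p : ℤ) * q) ∣ k - 1 := by
        have h0 := orderOf_dvd_iff_zpow_eq_one.mpr hshift
        rwa [hx, Nat.cast_mul] at h0
      have d2 : (p : ℤ) ∣ -k := by
        have h0 := orderOf_dvd_iff_zpow_eq_one.mpr hwk
        rwa [hw] at h0
      have hp1 : (p : ℤ) ∣ 1 := by
        have h4 : (p : ℤ) ∣ (k - 1) + -k := dvd_add (dvd_trans (dvd_mul_right _ _) d1) d2
        rw [show (k - 1) + -k = (-1 : ℤ) by ring] at h4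
        exact dvd_neg.mp h4
      have := Int.le_of_dvd one_pos hp1
      exact absurd this (by exact_mod_cast hp.one_lt.not_ge)
    · have hmm : w ∈ Subgroup.zpowers (w ^ (-k : ℤ)) := mem_zpowers_zpow_of_prime hp hw hwk
      have hwkord : orderOf (w ^ (-k : ℤ)) = p := by
        have hdp : orderOf (w ^ (-k : ℤ)) ∣ p := zpow_order_dvd (hw ▸ dvd_refl _) _
        rcases (Nat.dvd_prime hp).mp hdp with h1' | h1'
        · exact absurd (orderOf_eq_one_iff.mp h1') hwk
        · exact h1'
      have hxx : x ^ ((k - 1) * (p : ℤ)) = 1 := by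
        rw [zpow_mul, hshift, zpow_natCast, ← hwkord, pow_orderOf_eq_one]
      have d3 : ((p : ℤ) * q) ∣ (k - 1) * p := by
        have h0 := orderOf_dvd_iff_zpow_eq_one.mpr hxx
        rwa [hx, Nat.cast_mul] at h0
      have d4 : (q : ℤ) ∣ k - 1 := by
        have h5 : (q : ℤ) * p ∣ (k - 1) * p := by rwa [mul_comm (q : ℤ) (p : ℤ)]
        exact (mul_dvd_mul_iff_right (by exact_mod_cast hp.pos.ne' : (p : ℤ) ≠ 0)).mp h5
      obtain ⟨m, hm⟩ := d4
      have hwmem : w ^ (-k : ℤ) ∈ Subgroup.zpowers (x ^ q) := by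
        refine Subgroup.mem_zpowers_iff.mpr ⟨m, ?_⟩
        rw [← zpow_natCast x q, ← zpow_mul, ← hm, hshift]
      exact hcon ((Subgroup.zpowers_le.mpr hwmem) hmm)
  · -- ((x*w)*y) ∉ zpowers (x*y)
    intro hmem
    obtain ⟨k, hk⟩ := Subgroup.mem_zpowers_iff.mp hmem
    rw [hxy.mul_zpow] at hk
    have hw' : w = x ^ (k - 1 : ℤ) * y ^ (k - 1 : ℤ) := by
      have h1 : x⁻¹ * (x ^ k * y ^ k) * y⁻¹ = x ^ (k - 1 : ℤ) * y ^ (k - 1 : ℤ) := by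
        rw [← zpow_neg_one x, ← zpow_neg_one y, ← mul_assoc, ← zpow_add x, mul_assoc,
          ← zpow_add y]
        have e1 : (-1 : ℤ) + k = k - 1 := by ring
        have e2 : k + (-1 : ℤ) = k - 1 := by ring
        rw [e1, e2]
      have h2 : x⁻¹ * ((x * w) * y) * y⁻¹ = w := by group
      rw [← h2, ← hk, h1]
    have hcomm2 : Commute (x ^ (k - 1 : ℤ)) (y ^ (k - 1 : ℤ)) := hxy.zpow_zpow _ _
    have da : orderOf (x ^ (k - 1 : ℤ)) ∣ p * q := zpow_order_dvd (hx ▸ dvd_refl _) _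
    have db : orderOf (y ^ (k - 1 : ℤ)) ∣ r := zpow_order_dvd (hy ▸ dvd_refl _) _
    have hcop' : Nat.Coprime (orderOf (x ^ (k - 1 : ℤ))) (orderOf (y ^ (k - 1 : ℤ))) :=
      Nat.Coprime.coprime_dvd_left da (Nat.Coprime.coprime_dvd_right db copPQR)
    have hprod : p = orderOf (x ^ (k - 1 : ℤ)) * orderOf (y ^ (k - 1 : ℤ)) := by
      rw [← hw, hw', hcomm2.orderOf_mul_eq_mul_orderOf_of_coprime hcop']
    have hb1 : y ^ (k - 1 : ℤ) = 1 :=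
      eq_one_of_orderOf_dvd_coprimes copPR (Dvd.intro_left _ hprod.symm) db
    have hwx : w = x ^ (k - 1 : ℤ) := by rw [hw', hb1, mul_one]
    have hxx : x ^ ((k - 1) * (p : ℤ)) = 1 := by
      rw [zpow_mul, ← hwx, zpow_natCast, ← hw, pow_orderOf_eq_one]
    have d3 : ((p : ℤ) * q) ∣ (k - 1) * p := by
      have h0 := orderOf_dvd_iff_zpow_eq_one.mpr hxx
      rwa [hx, Nat.cast_mul] at h0
    have d4 : (q : ℤ) ∣ k - 1 := by
      have h5 : (q : ℤ) * p ∣ (k - 1) * p := by rwa [mul_comm (q : ℤ) (p : ℤ)]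
      exact (mul_dvd_mul_iff_right (by exact_mod_cast hp.pos.ne' : (p : ℤ) ≠ 0)).mp h5
    obtain ⟨m, hm⟩ := d4
    apply hcon
    refine Subgroup.mem_zpowers_iff.mpr ⟨m, ?_⟩
    rw [← zpow_natCast x q, ← zpow_mul, ← hm, ← hwx]
  · rw [oxp, hy]; exact fun hd => hrq ((Nat.prime_dvd_prime_iff_eq hq hr).mp hd).symm
  · rw [oxp, hy]; exact fun hd => hrq ((Nat.prime_dvd_prime_iff_eq hr hq).mp hd)

end Core3


theorem centralizer_structure_of_order_pq_third_prime {G : Type*} [Group G] [Finite G]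
    (h : pgC4Free G) (p q r : ℕ) (hp : p.Prime) (hq : q.Prime) (hr : r.Prime)
    (hpq : p ≠ q) (hrp : r ≠ p) (hrq : r ≠ q)
    (x : G) (hx : orderOf x = p * q)
    (hdvd : r ∣ Nat.card (Subgroup.centralizer ({x} : Set G))) :
    (∀ P : Sylow p (Subgroup.centralizer ({x} : Set G)),
        Monoid.exponent (P : Subgroup (Subgroup.centralizer ({x} : Set G))) = p) ∧
    (∀ Q : Sylow q (Subgroup.centralizer ({x} : Set G)),
        Monoid.exponent (Q : Subgroup (Subgroup.centralizer ({x} : Set G))) = q) ∧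
    (∀ R : Sylow r (Subgroup.centralizer ({x} : Set G)),
        (R : Subgroup (Subgroup.centralizer ({x} : Set G))).Normal ∧
        IsCyclic (R : Subgroup (Subgroup.centralizer ({x} : Set G))) ∧
        Nat.card (R : Subgroup (Subgroup.centralizer ({x} : Set G))) = r) ∧
    (∃ xc y z : (Subgroup.centralizer ({x} : Set G)),
        (xc : G) = x ∧ orderOf y = r ∧ orderOf z ∣ p * q ∧
        (Subgroup.zpowers y).Normal ∧
        Subgroup.zpowers y ⊓ Subgroup.zpowers z = ⊥ ∧
        Subgroup.zpowers xc ⊓ (Subgroup.zpowers y ⊔ Subgroup.zpowers z) = ⊥ ∧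
        Subgroup.zpowers xc ⊔ (Subgroup.zpowers y ⊔ Subgroup.zpowers z) = ⊤ ∧
        ∀ a ∈ Subgroup.zpowers xc, ∀ b ∈ Subgroup.zpowers y ⊔ Subgroup.zpowers z,
          Commute a b) := by
  haveI hpF : Fact p.Prime := ⟨hp⟩
  haveI hqF : Fact q.Prime := ⟨hq⟩
  haveI hrF : Fact r.Prime := ⟨hr⟩
  set C : Subgroup G := Subgroup.centralizer ({x} : Set G) with hCdef
  have hC4K : pgC4Free ↥C := pgC4Free_subgroup h C
  have hxmem : x ∈ C := by
    rw [hCdef, Subgroup.mem_centralizer_iff]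
    rintro g hg
    rw [Set.mem_singleton_iff] at hg
    subst hg
    rfl
  set x' : ↥C := ⟨x, hxmem⟩ with hx'def
  have hx' : orderOf x' = p * q := by rw [hx'def, Subgroup.orderOf_mk, hx]
  have hcent : ∀ g : ↥C, Commute x' g := by
    intro g
    have hg : ∀ m ∈ ({x} : Set G), m * (↑g : G) = ↑g * m := g.2
    exact Subtype.ext (hg x rfl)
  have copPQ : Nat.Coprime p q := (Nat.coprime_primes hp hq).mpr hpq
  have copPQR : Nat.Coprime (p * q) r :=
    Nat.Coprime.mul ((Nat.coprime_primes hp hr).mpr fun hh => hrp hh.symm)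
      ((Nat.coprime_primes hq hr).mpr fun hh => hrq hh.symm)
  obtain ⟨y', hy'⟩ := exists_prime_orderOf_dvd_card' (G := ↥C) r hdvd
  have hnoPP : ∀ g : ↥C, orderOf g ≠ p * p := fun g hg =>
    aux_no_pp hC4K hp hq hr hpq hrp hrq hx' hg hy' (hcent g) (hcent y')
  have hnoQQ : ∀ g : ↥C, orderOf g ≠ q * q := fun g hg =>
    aux_no_pp hC4K hq hp hr hpq.symm hrq hrp (by rw [hx']; ring) hg hy' (hcent g) (hcent y')
  have hnoRR : ∀ g : ↥C, orderOf g ≠ r * r := fun g hg =>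
    aux_no_rr hC4K hp hq hr hpq hrp hrq hx' hg (hcent g)
  have uniqR : ∀ w : ↥C, orderOf w = r → Subgroup.zpowers w = Subgroup.zpowers y' := by
    intro w hw
    by_contra hne
    exact aux_two_primes_false hC4K hp hq hpq hx' hr hr hrp hrq hrp hrq
      (hcent w) (hcent y') hw hy' hne
  have noOther : ∀ w : ↥C, (orderOf w).Prime →
      orderOf w = p ∨ orderOf w = q ∨ orderOf w = r := by
    intro w hwp
    by_cases h1 : orderOf w = p
    · exact Or.inl h1
    by_cases h2 : orderOf w = q
    · exact Or.inr (Or.inl h2)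
    refine Or.inr (Or.inr ?_)
    by_contra h3
    refine aux_two_primes_false hC4K hp hq hpq hx' hwp hr h1 h2 hrp hrq
      (hcent w) (hcent y') rfl hy' ?_
    intro heq
    apply h3
    have hcc := congrArg (fun S : Subgroup ↥C => Nat.card S) heq
    simp only [Nat.card_zpowers] at hcc
    rw [hcc, hy']
  have hpqr0 : p * q * r ≠ 0 :=
    Nat.mul_ne_zero (Nat.mul_ne_zero hp.pos.ne' hq.pos.ne') hr.pos.ne'
  have ordDvd : ∀ g : ↥C, orderOf g ∣ p * q * r := by
    intro g
    have hg0 : orderOf g ≠ 0 := (orderOf_pos g).ne'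
    rw [← Nat.factorization_le_iff_dvd hg0 hpqr0, Finsupp.le_def]
    intro s
    by_cases hs : (orderOf g).factorization s = 0
    · rw [hs]; exact Nat.zero_le _
    have hmem : s ∈ (orderOf g).primeFactors := by
      rw [← Nat.support_factorization]
      exact Finsupp.mem_support_iff.mpr hs
    have hsp : s.Prime := Nat.prime_of_mem_primeFactors hmem
    have hsd : s ∣ orderOf g := Nat.dvd_of_mem_primeFactors hmem
    have hord_elt : orderOf (g ^ (orderOf g / s)) = s := by
      rw [orderOf_pow, Nat.gcd_eq_right (Nat.div_dvd_of_dvd hsd), Nat.div_div_self hsd hg0]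
    have hs_eq := noOther (g ^ (orderOf g / s)) (by rw [hord_elt]; exact hsp)
    rw [hord_elt] at hs_eq
    have hle1 : (orderOf g).factorization s ≤ 1 := by
      by_contra hgt
      push_neg at hgt
      have hdvd2 : s ^ 2 ∣ orderOf g :=
        (Nat.Prime.pow_dvd_iff_le_factorization hsp hg0).mpr hgt
      have hord2 : orderOf (g ^ (orderOf g / s ^ 2)) = s ^ 2 := by
        rw [orderOf_pow, Nat.gcd_eq_right (Nat.div_dvd_of_dvd hdvd2),
          Nat.div_div_self hdvd2 hg0]
      rcases hs_eq with rfl | rfl | rfl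
      · exact hnoPP _ (by rw [hord2, pow_two])
      · exact hnoQQ _ (by rw [hord2, pow_two])
      · exact hnoRR _ (by rw [hord2, pow_two])
    refine le_trans hle1 ?_
    have hsdvd : s ∣ p * q * r := by
      rcases hs_eq with rfl | rfl | rfl
      · exact ⟨q * r, by ring⟩
      · exact ⟨p * r, by ring⟩
      · exact ⟨p * q, by ring⟩
    exact Nat.Prime.factorization_pos_of_dvd hsp hpqr0 hsdvd
  have hsqf : Squarefree (p * q * r) :=
    (Nat.squarefree_mul copPQR).mpr
      ⟨(Nat.squarefree_mul copPQ).mpr ⟨hp.prime.squarefree, hq.prime.squarefree⟩,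
        hr.prime.squarefree⟩
  -- no r² in the group order
  have hnr2 : ¬ r ^ 2 ∣ Nat.card ↥C := by
    intro hdd
    obtain ⟨H2, hH2⟩ := Sylow.exists_subgroup_card_pow_prime (G := ↥C) r (n := 2) hdd
    by_cases hex : ∃ g : ↥H2, orderOf g = r ^ 2
    · obtain ⟨g, hg⟩ := hex
      exact hnoRR ↑g (by rw [Subgroup.orderOf_coe, hg, pow_two])
    · push_neg at hex
      have hordr : ∀ g : ↥H2, g ≠ 1 → orderOf g = r := by
        intro g hg1
        have hdvd' : orderOf g ∣ r ^ 2 := hH2 ▸ orderOf_dvd_natCard g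
        obtain ⟨k, hk, he⟩ := (Nat.dvd_prime_pow hr).mp hdvd'
        interval_cases k
        · exact absurd (orderOf_eq_one_iff.mp (by rw [he, pow_zero])) hg1
        · rw [he, pow_one]
        · exact absurd he (hex g)
      have hnt : Nontrivial ↥H2 := by
        rw [← Finite.one_lt_card_iff_nontrivial, hH2]
        exact Nat.one_lt_pow two_ne_zero hr.one_lt
      obtain ⟨a, ha1⟩ := exists_ne (1 : ↥H2)
      have hbex : ∃ b : ↥H2, (↑b : ↥C) ∉ Subgroup.zpowers (↑a : ↥C) := by
        by_contra hall
        push_neg at hall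
        have hinj : Function.Injective
            (fun b : ↥H2 => (⟨↑b, hall b⟩ : ↥(Subgroup.zpowers (↑a : ↥C)))) := by
          intro b1 b2 hb
          have hb' : (⟨↑b1, hall b1⟩ : ↥(Subgroup.zpowers (↑a : ↥C))) = ⟨↑b2, hall b2⟩ := hb
          have hval := congrArg (Subtype.val : ↥(Subgroup.zpowers (↑a : ↥C)) → ↥C) hb'
          exact Subtype.ext hval
        have hle := Nat.card_le_card_of_injective _ hinj
        rw [hH2, Nat.card_zpowers, Subgroup.orderOf_coe, hordr a ha1] at hle
        have : r < r ^ 2 := by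
          calc r = r ^ 1 := (pow_one r).symm
          _ < r ^ 2 := Nat.pow_lt_pow_right hr.one_lt one_lt_two
        omega
      obtain ⟨b, hb⟩ := hbex
      have hb1 : b ≠ 1 := by
        rintro rfl
        exact hb (by simpa using Subgroup.one_mem (Subgroup.zpowers (↑a : ↥C)))
      have hZne : Subgroup.zpowers (↑a : ↥C) ≠ Subgroup.zpowers (↑b : ↥C) := by
        intro heq
        exact hb (heq ▸ Subgroup.mem_zpowers _)
      exact aux_two_primes_false hC4K hp hq hpq hx' hr hr hrp hrq hrp hrq
        (hcent _) (hcent _) (by rw [Subgroup.orderOf_coe, hordr a ha1])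
        (by rw [Subgroup.orderOf_coe, hordr b hb1]) hZne
  have hcard0 : Nat.card ↥C ≠ 0 := Nat.card_pos.ne'
  have hfactr : (Nat.card ↥C).factorization r = 1 := by
    have h1 : 0 < (Nat.card ↥C).factorization r :=
      Nat.Prime.factorization_pos_of_dvd hr hcard0 hdvd
    have h2 : ¬ 2 ≤ (Nat.card ↥C).factorization r := by
      intro hge
      exact hnr2 ((Nat.Prime.pow_dvd_iff_le_factorization hr hcard0).mpr hge)
    omega
  -- Sylow r analysis
  have sylRcard : ∀ R : Sylow r ↥C, Nat.card (R : Subgroup ↥C) = r := by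
    intro R
    have := Sylow.card_eq_multiplicity R
    rw [hfactr, pow_one] at this
    exact this
  -- normality of ⟨y'⟩
  have hyNormal : (Subgroup.zpowers y').Normal := by
    constructor
    intro n hn g
    obtain ⟨k, hk⟩ := Subgroup.mem_zpowers_iff.mp hn
    have hco : orderOf ((MulAut.conj g) y') = r := by
      rw [show ((MulAut.conj g) y') = (MulAut.conj g).toMonoidHom y' from rfl,
        orderOf_injective _ (MulAut.conj g).injective, hy']
    have hzz := uniqR _ hco
    have hmm : g * n * g⁻¹ ∈ Subgroup.zpowers ((MulAut.conj g) y') := by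
      rw [← hk]
      have he : g * y' ^ k * g⁻¹ = ((MulAut.conj g) y') ^ k := by
        rw [← map_zpow]
        rfl
      rw [he]
      exact Subgroup.zpow_mem _ (Subgroup.mem_zpowers _) k
    rwa [hzz] at hmm
  have sylRall : ∀ R : Sylow r ↥C, (R : Subgroup ↥C).Normal ∧
      IsCyclic ↥(R : Subgroup ↥C) ∧ Nat.card (R : Subgroup ↥C) = r := by
    intro R
    have hcard := sylRcard R
    have hcyc : IsCyclic ↥(R : Subgroup ↥C) := isCyclic_of_prime_card hcard
    obtain ⟨gR, hgR⟩ := exists_prime_orderOf_dvd_card' (G := ↥(R : Subgroup ↥C)) r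
      (by rw [hcard])
    have hzR : Subgroup.zpowers ((gR : ↥C)) = (R : Subgroup ↥C) := by
      apply Subgroup.eq_of_le_of_card_ge (Subgroup.zpowers_le.mpr gR.2)
      rw [Nat.card_zpowers, Subgroup.orderOf_coe, hgR, hcard]
    have hRN : (R : Subgroup ↥C) = Subgroup.zpowers y' := by
      rw [← hzR, uniqR _ (by rw [Subgroup.orderOf_coe, hgR])]
    refine ⟨by rw [hRN]; exact hyNormal, hcyc, hcard⟩
  -- Sylow exponent result
  have expSyl : ∀ (s : ℕ), s.Prime → (∀ g : ↥C, orderOf g ≠ s * s) →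
      s ∣ Nat.card ↥C → ∀ P : Sylow s ↥C, Monoid.exponent ↥(P : Subgroup ↥C) = s := by
    intro s hs hno hsd P
    haveI : Fact s.Prime := ⟨hs⟩
    have hords : ∀ g : ↥(P : Subgroup ↥C), orderOf g ∣ s := by
      intro g
      obtain ⟨k, hk⟩ := IsPGroup.iff_orderOf.mp P.isPGroup' g
      rcases Nat.lt_or_ge k 2 with hk2 | hk2
      · interval_cases k
        · rw [hk, pow_zero]; exact one_dvd s
        · rw [hk, pow_one]
      · exfalso
        apply hno ↑(g ^ s ^ (k - 2))
        rw [Subgroup.orderOf_coe, orderOf_pow, hk,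
          Nat.gcd_eq_right (pow_dvd_pow s (by omega)),
          Nat.pow_div (by omega) hs.pos, show k - (k - 2) = 2 by omega, pow_two]
    have hdvd_exp : Monoid.exponent ↥(P : Subgroup ↥C) ∣ s := Monoid.exponent_dvd.mpr hords
    have hcardP : Nat.card ↥(P : Subgroup ↥C) = s ^ (Nat.card ↥C).factorization s :=
      Sylow.card_eq_multiplicity P
    have hpos : (Nat.card ↥C).factorization s ≠ 0 := by
      have := Nat.Prime.factorization_pos_of_dvd hs hcard0 hsd
      omega
    obtain ⟨gP, hgP⟩ := exists_prime_orderOf_dvd_card' (G := ↥(P : Subgroup ↥C)) s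
      (by rw [hcardP]; exact dvd_pow_self s hpos)
    refine Nat.dvd_antisymm hdvd_exp ?_
    have := Monoid.order_dvd_exponent gP
    rwa [hgP] at this
  have hpdvd : p ∣ Nat.card ↥C :=
    dvd_trans (dvd_mul_right p q) (hx' ▸ orderOf_dvd_natCard x')
  have hqdvd : q ∣ Nat.card ↥C :=
    dvd_trans (dvd_mul_left q p) (hx' ▸ orderOf_dvd_natCard x')
  refine ⟨expSyl p hp hnoPP hpdvd, expSyl q hq hnoQQ hqdvd, sylRall, ?_⟩
  -- Part 4: the direct-product decomposition
  haveI instN : (Subgroup.zpowers y').Normal := hyNormal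
  set φ : ↥C →* MulAut ↥(Subgroup.zpowers y') :=
    MulAut.conjNormal (H := Subgroup.zpowers y') with hφdef
  set D : Subgroup ↥C := φ.ker with hDdef
  have hker : ∀ d : ↥C, d ∈ D ↔ Commute d y' := by
    intro d
    constructor
    · intro hd
      have h1 := DFunLike.congr_fun (MonoidHom.mem_ker.mp hd)
        (⟨y', Subgroup.mem_zpowers y'⟩ : ↥(Subgroup.zpowers y'))
      have h2 := Subtype.ext_iff.mp h1
      rw [MulAut.conjNormal_apply] at h2
      exact mul_inv_eq_iff_eq_mul.mp h2
    · intro hcm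
      rw [MonoidHom.mem_ker]
      refine MulEquiv.ext fun nn => ?_
      obtain ⟨n, hn⟩ := nn
      obtain ⟨k, hk⟩ := Subgroup.mem_zpowers_iff.mp hn
      apply Subtype.ext
      rw [MulAut.conjNormal_apply]
      have hcdn : Commute d n := by rw [← hk]; exact hcm.zpow_right k
      show d * n * d⁻¹ = n
      exact mul_inv_eq_iff_eq_mul.mpr hcdn.eq
  have hxyc : Commute x' y' := hcent y'
  have hcop_xy : Nat.Coprime (orderOf x') (orderOf y') := by rw [hx', hy']; exact copPQR
  have hxmem' : x' ∈ Subgroup.zpowers (x' * y') := mem_zpowers_mul_left hxyc hcop_xy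
  have hymem' : y' ∈ Subgroup.zpowers (x' * y') := mem_zpowers_mul_right hxyc hcop_xy
  have hDeq : D = Subgroup.zpowers (x' * y') := by
    apply le_antisymm
    · intro d hd
      have hdy : Commute d y' := (hker d).mp hd
      have hdco : orderOf d ∣ p * q * r := ordDvd d
      have hep : d ^ (q * r) ∈ Subgroup.zpowers (x' * y') := by
        by_cases h1 : d ^ (q * r) = 1
        · rw [h1]; exact Subgroup.one_mem _
        · have hdp : orderOf (d ^ (q * r)) ∣ p := by
            apply orderOf_dvd_of_pow_eq_one
            rw [← pow_mul]
            exact orderOf_dvd_iff_pow_eq_one.mp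
              (by rw [show q * r * p = p * q * r by ring]; exact hdco)
          have hord : orderOf (d ^ (q * r)) = p :=
            ((Nat.dvd_prime hp).mp hdp).resolve_left fun hh => h1 (orderOf_eq_one_iff.mp hh)
          have hres := aux_p_elt_in_xq hC4K hp hq hr hpq hrp hrq hx' hy' hord
            (hcent y') (hcent _) (hdy.symm.pow_right _)
          exact (Subgroup.zpowers_le.mpr (Subgroup.pow_mem _ hxmem' q)) hres
      have heq' : d ^ (p * r) ∈ Subgroup.zpowers (x' * y') := by
        by_cases h1 : d ^ (p * r) = 1
        · rw [h1]; exact Subgroup.one_mem _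
        · have hdp : orderOf (d ^ (p * r)) ∣ q := by
            apply orderOf_dvd_of_pow_eq_one
            rw [← pow_mul]
            exact orderOf_dvd_iff_pow_eq_one.mp
              (by rw [show p * r * q = p * q * r by ring]; exact hdco)
          have hord : orderOf (d ^ (p * r)) = q :=
            ((Nat.dvd_prime hq).mp hdp).resolve_left fun hh => h1 (orderOf_eq_one_iff.mp hh)
          have hres := aux_p_elt_in_xq hC4K hq hp hr hpq.symm hrq hrp
            (by rw [hx']; ring) hy' hord (hcent y') (hcent _) (hdy.symm.pow_right _)
          exact (Subgroup.zpowers_le.mpr (Subgroup.pow_mem _ hxmem' p)) hres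
      have her : d ^ (p * q) ∈ Subgroup.zpowers (x' * y') := by
        by_cases h1 : d ^ (p * q) = 1
        · rw [h1]; exact Subgroup.one_mem _
        · have hdp : orderOf (d ^ (p * q)) ∣ r := by
            apply orderOf_dvd_of_pow_eq_one
            rw [← pow_mul]
            exact orderOf_dvd_iff_pow_eq_one.mp hdco
          have hord : orderOf (d ^ (p * q)) = r :=
            ((Nat.dvd_prime hr).mp hdp).resolve_left fun hh => h1 (orderOf_eq_one_iff.mp hh)
          have hzz := uniqR _ hord
          have hmm : d ^ (p * q) ∈ Subgroup.zpowers y' := hzz ▸ Subgroup.mem_zpowers _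
          exact (Subgroup.zpowers_le.mpr hymem') hmm
      obtain ⟨u, v, huv⟩ := Nat.isCoprime_iff_coprime.mpr copPQ.symm
      obtain ⟨a, b, hab⟩ := Nat.isCoprime_iff_coprime.mpr copPQR.symm
      have hdecomp : d = (d ^ (q * r)) ^ (a * u) *
          ((d ^ (p * r)) ^ (a * v) * (d ^ (p * q)) ^ b) := by
        rw [← zpow_natCast d (q * r), ← zpow_natCast d (p * r), ← zpow_natCast d (p * q),
          ← zpow_mul, ← zpow_mul, ← zpow_mul, ← zpow_add, ← zpow_add]
        have hexp : ((q * r : ℕ) : ℤ) * (a * u) +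
            (((p * r : ℕ) : ℤ) * (a * v) + ((p * q : ℕ) : ℤ) * b) = 1 := by
          push_cast at hab ⊢
          linear_combination (a * (r : ℤ)) * huv + hab
        rw [hexp, zpow_one]
      rw [hdecomp]
      exact mul_mem (Subgroup.zpow_mem _ hep _)
        (mul_mem (Subgroup.zpow_mem _ heq' _) (Subgroup.zpow_mem _ her _))
    · apply Subgroup.zpowers_le.mpr
      exact (hker _).mpr (Commute.mul_left hxyc (Commute.refl y'))
  have hcardD : Nat.card D = p * q * r := by
    rw [hDeq, Nat.card_zpowers,
      hxyc.orderOf_mul_eq_mul_orderOf_of_coprime hcop_xy, hx', hy']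
  -- the quotient is cyclic
  have hNcard : Nat.card ↥(Subgroup.zpowers y') = r := by rw [Nat.card_zpowers, hy']
  have hNcyc : IsCyclic ↥(Subgroup.zpowers y') := isCyclic_of_prime_card hNcard
  have hMA : IsCyclic (MulAut ↥(Subgroup.zpowers y')) := by
    have e2 : MulAut (Multiplicative (ZMod (Nat.card ↥(Subgroup.zpowers y')))) ≃*
        Multiplicative (AddAut (ZMod (Nat.card ↥(Subgroup.zpowers y')))) :=
      MulAutMultiplicative _
    let e : MulAut ↥(Subgroup.zpowers y') ≃* (ZMod (Nat.card ↥(Subgroup.zpowers y')))ˣ :=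
      (MulAut.congr (zmodCyclicMulEquiv hNcyc)).symm.trans
        (e2.trans (ZMod.AddAutEquivUnits _).toMultiplicative)
    have hu : IsCyclic ((ZMod (Nat.card ↥(Subgroup.zpowers y')))ˣ) := by
      rw [hNcard]
      infer_instance
    exact isCyclic_of_surjective e.symm.toMonoidHom e.symm.surjective
  have Qcyc : IsCyclic (↥C ⧸ D) := by
    have hinj := QuotientGroup.kerLift_injective φ
    haveI := hMA
    haveI : IsCyclic ↥(QuotientGroup.kerLift φ).range := Subgroup.isCyclic _
    exact isCyclic_of_surjective (MonoidHom.ofInjective hinj).symm.toMonoidHom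
      (MulEquiv.surjective _)
  obtain ⟨gen, hgen⟩ := Qcyc.exists_generator
  obtain ⟨c, hc⟩ := QuotientGroup.mk'_surjective D gen
  have hordgen : orderOf gen = Nat.card (↥C ⧸ D) := by
    have htop : Subgroup.zpowers gen = ⊤ := (Subgroup.eq_top_iff' _).mpr hgen
    rw [← Nat.card_zpowers, htop, Subgroup.card_top]
  have hmdvd : orderOf gen ∣ orderOf c := by
    rw [← hc]; exact orderOf_map_dvd (QuotientGroup.mk' D) c
  have hcd : orderOf c ∣ p * q * r := ordDvd c
  have hsqf_n : Squarefree (orderOf c) := hsqf.squarefree_of_dvd hcd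
  have hc0 : orderOf c ≠ 0 := (orderOf_pos c).ne'
  set m : ℕ := orderOf gen with hmdef
  set e : ℕ := orderOf c / m with hedef
  have he : orderOf c = m * e := (Nat.mul_div_cancel' hmdvd).symm
  have he_dvd : e ∣ orderOf c := ⟨m, by rw [he]; ring⟩
  have he0 : e ≠ 0 := by
    intro h0
    rw [h0, mul_zero] at he
    exact hc0 he
  have hcop_me : Nat.Coprime m e := by
    have hgg : Nat.gcd m e * Nat.gcd m e ∣ orderOf c := by
      rw [he]
      exact mul_dvd_mul (Nat.gcd_dvd_left m e) (Nat.gcd_dvd_right m e)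
    exact Nat.isUnit_iff.mp (hsqf_n _ hgg)
  set z : ↥C := c ^ e with hzdef
  have hz_ord : orderOf z = m := by
    rw [hzdef, orderOf_pow, Nat.gcd_eq_right he_dvd, he, Nat.mul_div_cancel _
      (Nat.pos_of_ne_zero he0)]
  have hπz : (QuotientGroup.mk' D) z = gen ^ e := by rw [hzdef, map_pow, hc]
  have hgen_in : gen ∈ Subgroup.zpowers ((QuotientGroup.mk' D) z) := by
    rw [hπz]
    exact mem_zpowers_pow_of_coprime (by rw [← hmdef]; exact hcop_me.symm)
  have hztop : ∀ a : ↥C ⧸ D, a ∈ Subgroup.zpowers ((QuotientGroup.mk' D) z) :=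
    fun a => (Subgroup.zpowers_le.mpr hgen_in) (hgen a)
  have hr_not_m : ¬ r ∣ m := by
    intro hrm
    apply hnr2
    have h1 : m ∣ Nat.card (↥C ⧸ D) := by rw [hmdef]; exact orderOf_dvd_natCard gen
    have h2 : r ∣ Nat.card (↥C ⧸ D) := dvd_trans hrm h1
    have h3 : r ∣ Nat.card D := by rw [hcardD]; exact ⟨p * q, by ring⟩
    rw [Subgroup.card_eq_card_quotient_mul_card_subgroup D, pow_two]
    exact mul_dvd_mul h2 h3
  have hm_pq : m ∣ p * q := by
    have h4 : m ∣ p * q * r := dvd_trans hmdvd hcd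
    have h5 : Nat.Coprime m r := Nat.coprime_comm.mp (hr.coprime_iff_not_dvd.mpr hr_not_m)
    exact Nat.Coprime.dvd_of_dvd_mul_right h5 h4
  have hordπz : orderOf ((QuotientGroup.mk' D) z) = m := by
    apply Nat.dvd_antisymm
    · rw [← hz_ord]; exact orderOf_map_dvd (QuotientGroup.mk' D) z
    · exact orderOf_dvd_of_mem_zpowers hgen_in
  have hND : Subgroup.zpowers y' ≤ D :=
    Subgroup.zpowers_le.mpr ((hker y').mpr (Commute.refl y'))
  have hxD : x' ∈ D := (hker x').mpr hxyc
  refine ⟨x', y', z, rfl, hy', by rw [hz_ord]; exact hm_pq, hyNormal, ?_, ?_, ?_, ?_⟩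
  · -- ⟨y⟩ ⊓ ⟨z⟩ = ⊥
    apply inf_eq_bot_of_coprime
    rw [Nat.card_zpowers, Nat.card_zpowers, hy', hz_ord]
    exact hr.coprime_iff_not_dvd.mpr hr_not_m
  · -- ⟨x⟩ ⊓ (⟨y⟩ ⊔ ⟨z⟩) = ⊥
    rw [Subgroup.eq_bot_iff_forall]
    intro w hw
    obtain ⟨hw1, hw2⟩ := Subgroup.mem_inf.mp hw
    have hwset : w ∈ ((Subgroup.zpowers y' : Set ↥C) * (Subgroup.zpowers z : Set ↥C)) := by
      rw [← Subgroup.normal_mul]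
      exact hw2
    obtain ⟨a2, ha2, b2, hb2, hab2⟩ := hwset
    obtain ⟨j, hj⟩ := Subgroup.mem_zpowers_iff.mp hb2
    have hwD : w ∈ D := (Subgroup.zpowers_le.mpr hxD) hw1
    have hπb : (QuotientGroup.mk' D) b2 = 1 := by
      have h1 : (QuotientGroup.mk' D) w = 1 := (QuotientGroup.eq_one_iff w).mpr hwD
      have h2 : (QuotientGroup.mk' D) a2 = 1 := (QuotientGroup.eq_one_iff a2).mpr (hND ha2)
      have h3 := congrArg (QuotientGroup.mk' D) hab2
      rw [map_mul, h2, one_mul] at h3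
      rw [h3, h1]
    have hb2one : b2 = 1 := by
      rw [← hj] at hπb ⊢
      rw [map_zpow] at hπb
      have hdd : ((m : ℕ) : ℤ) ∣ j := by
        rw [← hordπz]
        exact orderOf_dvd_iff_zpow_eq_one.mpr hπb
      obtain ⟨t, ht⟩ := hdd
      rw [ht, zpow_mul, zpow_natCast, ← hz_ord, pow_orderOf_eq_one, one_zpow]
    have hwa : w = a2 := by rw [← hab2, hb2one]; exact mul_one a2
    have hd1 : orderOf w ∣ r := by
      rw [hwa, ← hy']
      exact orderOf_dvd_of_mem_zpowers ha2
    have hd2 : orderOf w ∣ p * q := by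
      rw [← hx']
      exact orderOf_dvd_of_mem_zpowers hw1
    exact eq_one_of_orderOf_dvd_coprimes copPQR hd2 hd1
  · -- join is everything
    refine (Subgroup.eq_top_iff' _).mpr fun g => ?_
    obtain ⟨j, hj⟩ := Subgroup.mem_zpowers_iff.mp (hztop ((QuotientGroup.mk' D) g))
    have hin : g * (z ^ j)⁻¹ ∈ D := by
      refine (QuotientGroup.eq_one_iff _).mp ?_
      show (QuotientGroup.mk' D) (g * (z ^ j)⁻¹) = 1
      rw [map_mul, map_inv, map_zpow, hj, mul_inv_cancel]
    have hDle : D ≤ Subgroup.zpowers x' ⊔ (Subgroup.zpowers y' ⊔ Subgroup.zpowers z) := by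
      rw [hDeq]
      apply Subgroup.zpowers_le.mpr
      exact Subgroup.mul_mem _ (Subgroup.mem_sup_left (Subgroup.mem_zpowers _))
        (Subgroup.mem_sup_right (Subgroup.mem_sup_left (Subgroup.mem_zpowers _)))
    have h1 : g * (z ^ j)⁻¹ ∈ Subgroup.zpowers x' ⊔
        (Subgroup.zpowers y' ⊔ Subgroup.zpowers z) := hDle hin
    have h2 : z ^ j ∈ Subgroup.zpowers x' ⊔
        (Subgroup.zpowers y' ⊔ Subgroup.zpowers z) :=
      Subgroup.mem_sup_right (Subgroup.mem_sup_right
        (Subgroup.zpow_mem _ (Subgroup.mem_zpowers _) j))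
    have hgz : g = (g * (z ^ j)⁻¹) * z ^ j := by group
    rw [hgz]
    exact Subgroup.mul_mem _ h1 h2
  · -- commuting
    intro a ha b hb
    obtain ⟨k, hk⟩ := Subgroup.mem_zpowers_iff.mp ha
    rw [← hk]
    exact (hcent b).zpow_left k
end

section
/- Let G be a finite group whose power graph P(G) is C_4-free, let x ∈ G have order pq for distinct primes p, q, and suppose |C_G(x)| = p^u q^v. Then there is an ordering (r, s) of the pair (p, q) such that every Sylow r-subgroup of C_G(x) has exponent r, and for any Sylow s-subgroup S of C_G(x) the Hughes subgroup H_s(S) is a cyclic subgroup that is normal in C_G(x). -/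
/-- The Hughes subgroup of `H` with respect to the prime `p`: the subgroup
generated by all elements whose order is different from `p`. -/
def hughesSubgroup (p : ℕ) (H : Type*) [Group H] : Subgroup H :=
  Subgroup.closure {h : H | orderOf h ≠ p}

section Helpers
set_option linter.unusedSectionVars false

variable {H : Type*} [Group H] [Finite H]

lemma pg_exists_nat_pow {a b : H} (h : a ∈ Subgroup.zpowers b) : ∃ n : ℕ, b ^ n = a := by
  rw [← mem_powers_iff_mem_zpowers] at h; exact h

lemma pg_adj_of_pow {u v : H} (hne : u ≠ v) {k : ℕ} (hk : v ^ k = u) : pgAdj u v :=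
  ⟨hne, Or.inl (hk ▸ Subgroup.npow_mem_zpowers v k)⟩

lemma pg_adj_symm {u v : H} (h : pgAdj u v) : pgAdj v u := ⟨h.1.symm, h.2.symm⟩

lemma pg_eq_one_of_coprime_pows {w : H} {m n : ℕ} (hco : Nat.Coprime m n)
    (h1 : w ^ m = 1) (h2 : w ^ n = 1) : w = 1 := by
  have d1 : orderOf w ∣ m := orderOf_dvd_iff_pow_eq_one.mpr h1
  have d2 : orderOf w ∣ n := orderOf_dvd_iff_pow_eq_one.mpr h2
  have : orderOf w ∣ Nat.gcd m n := Nat.dvd_gcd d1 d2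
  rw [hco] at this
  have h1 : orderOf w = 1 := Nat.eq_one_of_dvd_one this
  exact orderOf_eq_one_iff.mp h1

lemma pg_split_one {w t : H} {m n : ℕ} (hco : Nat.Coprime m n)
    (hm : w ^ m = 1) (hn : t ^ n = 1) (h : w * t = 1) : w = 1 ∧ t = 1 := by
  have hw : w = t⁻¹ := eq_inv_of_mul_eq_one_left h
  have h2 : w ^ n = 1 := by rw [hw, inv_pow, hn, inv_one]
  have hw1 : w = 1 := pg_eq_one_of_coprime_pows hco hm h2
  exact ⟨hw1, by rwa [hw1, one_mul] at h⟩

lemma pg_pow_eq_one_of_mem_zpowers {a w : H} (hw : w ∈ Subgroup.zpowers a) {N : ℕ}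
    (hN : orderOf a ∣ N) : w ^ N = 1 :=
  orderOf_dvd_iff_pow_eq_one.mp ((orderOf_dvd_of_mem_zpowers hw).trans hN)

lemma pg_crt_pow {a z : H} (hc : Commute a z) {n m : ℕ} (han : orderOf a = n)
    (hzm : orderOf z = m) (hco : n.Coprime m) (e f : ℕ) :
    ∃ k : ℕ, (a * z) ^ k = a ^ e * z ^ f := by
  obtain ⟨k, hk1, hk2⟩ : ∃ k, k ≡ e [MOD n] ∧ k ≡ f [MOD m] :=
    ⟨Nat.chineseRemainder hco e f, (Nat.chineseRemainder hco e f).2⟩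
  refine ⟨k, ?_⟩
  rw [hc.mul_pow]
  congr 1
  · exact pow_eq_pow_iff_modEq.mpr (by rw [han]; exact hk1)
  · exact pow_eq_pow_iff_modEq.mpr (by rw [hzm]; exact hk2)

lemma pg_isCyclic_zpowers (a : H) : IsCyclic (Subgroup.zpowers a) := by
  refine ⟨⟨⟨a, Subgroup.mem_zpowers a⟩, ?_⟩⟩
  rintro ⟨x, hx⟩
  obtain ⟨k, rfl⟩ := hx
  exact ⟨k, by ext; simp⟩

lemma pg_zpowers_eq_of_mem_of_orderOf_eq {a b : H} (h : a ∈ Subgroup.zpowers b)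
    (ho : orderOf a = orderOf b) : Subgroup.zpowers a = Subgroup.zpowers b := by
  refine Subgroup.eq_of_le_of_card_ge (Subgroup.zpowers_le.mpr h) ?_
  rw [Nat.card_zpowers, Nat.card_zpowers, ho]

lemma pg_orderOf_conj (g a : H) : orderOf (g * a * g⁻¹) = orderOf a := by
  simpa using orderOf_injective (MulAut.conj g).toMonoidHom (MulEquiv.injective _) a

end Helpers

section LemA
set_option linter.unusedSectionVars false
variable {H : Type*} [Group H] [Finite H]

lemma pg_ne_of_orderOf_ne {u v : H} (h : orderOf u ≠ orderOf v) : u ≠ v :=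
  fun e => h (by rw [e])

lemma pg_lemA (h4 : pgC4Free H)
    {p q : ℕ} (hp : p.Prime) (hq : q.Prime) (hpq : p ≠ q)
    {a c z : H} (hac : Commute a c) (haz : Commute a z) (hcz : Commute c z)
    {i : ℕ} (hi : 2 ≤ i) (ha : orderOf a = p ^ i) (hc : orderOf c = p) (hz : orderOf z = q)
    (hmem : c ∉ Subgroup.zpowers a) : False := by
  have hppos : 0 < p := hp.pos
  have hqpos : 0 < q := hq.pos
  have hp1 : 1 < p := hp.one_lt
  have hP1 : 1 < p ^ i := Nat.one_lt_pow (by omega) hp1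
  have hcopq : Nat.Coprime p q := (Nat.coprime_primes hp hq).mpr hpq
  have hcop : Nat.Coprime (p ^ i) q := hcopq.pow_left i
  have hpdvd : p ∣ p ^ i := dvd_pow_self p (by omega)
  have hpdvd' : p ∣ p ^ (i - 1) := dvd_pow_self p (by omega)
  have hapow : a ^ p ^ i = 1 := by rw [← ha]; exact pow_orderOf_eq_one a
  have hcpow : ∀ {N : ℕ}, p ∣ N → c ^ N = 1 := fun hN =>
    orderOf_dvd_iff_pow_eq_one.mp (by rw [hc]; exact hN)
  -- order of a*c
  have hoac : orderOf (a * c) = p ^ i := by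
    have h1 : (a * c) ^ p ^ i = 1 := by rw [hac.mul_pow, hapow, hcpow hpdvd, one_mul]
    have hdvd : orderOf (a * c) ∣ p ^ i := orderOf_dvd_iff_pow_eq_one.mpr h1
    obtain ⟨k, hk, hoe⟩ := (Nat.dvd_prime_pow hp).mp hdvd
    rcases Nat.lt_or_ge k i with hlt | hge
    · exfalso
      have h2 : (a * c) ^ p ^ (i - 1) = 1 := by
        have : orderOf (a * c) ∣ p ^ (i - 1) := by
          rw [hoe]; exact pow_dvd_pow p (by omega)
        exact orderOf_dvd_iff_pow_eq_one.mp this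
      rw [hac.mul_pow, hcpow hpdvd', mul_one] at h2
      have : p ^ i ∣ p ^ (i - 1) := by
        rw [← ha]; exact orderOf_dvd_iff_pow_eq_one.mpr h2
      have hle := Nat.le_of_dvd (Nat.pow_pos hppos) this
      have hlt2 : p ^ (i - 1) < p ^ i := Nat.pow_lt_pow_right hp1 (by omega)
      omega
    · rw [hoe]; congr 1; omega
  have hacz : Commute (a * c) z := haz.mul_left hcz
  -- orders of vertices
  have o1 : orderOf (a * z) = p ^ i * q := by
    rw [haz.orderOf_mul_eq_mul_orderOf_of_coprime (by rw [ha, hz]; exact hcop), ha, hz]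
  have o3 : orderOf (a * c * z) = p ^ i * q := by
    rw [hacz.orderOf_mul_eq_mul_orderOf_of_coprime (by rw [hoac, hz]; exact hcop), hoac, hz]
  have o4 : orderOf (a ^ p ^ (i - 1)) = p := by
    rw [orderOf_pow a, ha, Nat.gcd_eq_right (pow_dvd_pow p (by omega)),
      Nat.pow_div (by omega) hppos, show i - (i - 1) = 1 by omega, pow_one]
  have hc1 : c ≠ 1 := by
    intro h; rw [h, orderOf_one] at hc; omega
  -- distinctness
  have d12 : a * z ≠ z := pg_ne_of_orderOf_ne (by
    rw [o1, hz]; intro h; nlinarith [hP1, hqpos])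
  have d13 : a * z ≠ a * c * z := by
    intro h
    have h' : a * z = a * (c * z) := by rw [h, mul_assoc]
    exact hc1 (right_eq_mul.mp (mul_left_cancel h'))
  have d14 : a * z ≠ a ^ p ^ (i - 1) := pg_ne_of_orderOf_ne (by
    rw [o1, o4]; intro h
    have : q ∣ p := h ▸ dvd_mul_left q (p ^ i)
    exact hpq ((Nat.prime_dvd_prime_iff_eq hq hp).mp this).symm)
  have d23 : z ≠ a * c * z := pg_ne_of_orderOf_ne (by
    rw [hz, o3]; intro h; nlinarith [hP1, hqpos])
  have d24 : z ≠ a ^ p ^ (i - 1) := pg_ne_of_orderOf_ne (by rw [hz, o4]; exact hpq.symm)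
  have d34 : a * c * z ≠ a ^ p ^ (i - 1) := pg_ne_of_orderOf_ne (by
    rw [o3, o4]; intro h
    have : q ∣ p := h ▸ dvd_mul_left q (p ^ i)
    exact hpq ((Nat.prime_dvd_prime_iff_eq hq hp).mp this).symm)
  -- edges
  have e21 : pgAdj z (a * z) := by
    obtain ⟨k, hk⟩ := pg_crt_pow haz ha hz hcop 0 1
    exact pg_adj_of_pow d12.symm (by rw [hk, pow_zero, one_mul, pow_one])
  have e23 : pgAdj z (a * c * z) := by
    obtain ⟨k, hk⟩ := pg_crt_pow hacz hoac hz hcop 0 1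
    exact pg_adj_of_pow d23 (by rw [hk, pow_zero, one_mul, pow_one])
  have e43 : pgAdj (a ^ p ^ (i - 1)) (a * c * z) := by
    obtain ⟨k, hk⟩ := pg_crt_pow hacz hoac hz hcop (p ^ (i - 1)) 0
    refine pg_adj_of_pow d34.symm (k := k) ?_
    rw [hk, pow_zero, mul_one, hac.mul_pow, hcpow hpdvd', mul_one]
  have e41 : pgAdj (a ^ p ^ (i - 1)) (a * z) := by
    obtain ⟨k, hk⟩ := pg_crt_pow haz ha hz hcop (p ^ (i - 1)) 0
    exact pg_adj_of_pow d14.symm (by rw [hk, pow_zero, mul_one])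
  -- non-adjacency of z and a^p^(i-1)
  have n24 : ¬ pgAdj z (a ^ p ^ (i - 1)) := by
    rintro ⟨-, h | h⟩
    · have := orderOf_dvd_of_mem_zpowers h
      rw [hz, o4] at this
      exact hpq ((Nat.prime_dvd_prime_iff_eq hq hp).mp this).symm
    · have := orderOf_dvd_of_mem_zpowers h
      rw [hz, o4] at this
      exact hpq ((Nat.prime_dvd_prime_iff_eq hp hq).mp this)
  -- non-adjacency of a*z and a*c*z
  have n13 : ¬ pgAdj (a * z) (a * c * z) := by
    rintro ⟨-, h | h⟩
    · -- a*z ∈ zpowers (a*c*z)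
      obtain ⟨k, hk⟩ := pg_exists_nat_pow h
      rw [hacz.mul_pow, hac.mul_pow] at hk
      -- hk : a^k * c^k * z^k = a * z
      have e2 : ((a⁻¹ * a ^ k) * c ^ k) * (z ^ k * z⁻¹) = 1 := by
        calc ((a⁻¹ * a ^ k) * c ^ k) * (z ^ k * z⁻¹)
            = a⁻¹ * (a ^ k * c ^ k * z ^ k) * z⁻¹ := by group
          _ = a⁻¹ * (a * z) * z⁻¹ := by rw [hk]
          _ = 1 := by group
      have hWc : Commute (a⁻¹ * a ^ k) (c ^ k) :=
        ((hac.pow_right k).inv_left).mul_left (hac.pow_pow k k)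
      have hW : ((a⁻¹ * a ^ k) * c ^ k) ^ p ^ i = 1 := by
        rw [hWc.mul_pow]
        have h1 : (a⁻¹ * a ^ k) ^ p ^ i = 1 :=
          pg_pow_eq_one_of_mem_zpowers
            (mul_mem (inv_mem (Subgroup.mem_zpowers a)) (Subgroup.npow_mem_zpowers a k))
            (by rw [ha])
        have h2 : (c ^ k) ^ p ^ i = 1 :=
          pg_pow_eq_one_of_mem_zpowers (Subgroup.npow_mem_zpowers c k) (by rw [hc]; exact hpdvd)
        rw [h1, h2, one_mul]
      have hT : (z ^ k * z⁻¹) ^ q = 1 :=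
        pg_pow_eq_one_of_mem_zpowers
          (mul_mem (Subgroup.npow_mem_zpowers z k) (inv_mem (Subgroup.mem_zpowers z)))
          (by rw [hz])
      obtain ⟨hW1, hT1⟩ := pg_split_one hcop hW hT e2
      by_cases hpk : p ∣ k
      · have hck : c ^ k = 1 := hcpow hpk
        rw [hck, mul_one] at hW1
        have hak : a ^ k = a := (inv_mul_eq_one.mp hW1).symm
        have hmod : k ≡ 1 [MOD p ^ i] := by
          have h' : a ^ k = a ^ 1 := by rw [pow_one]; exact hak
          have := pow_eq_pow_iff_modEq.mp h'
          rwa [ha] at this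
        have hmodp : k ≡ 1 [MOD p] := hmod.of_dvd hpdvd
        have h0 : k ≡ 0 [MOD p] := (Nat.modEq_zero_iff_dvd).mpr hpk
        have : (1 : ℕ) ≡ 0 [MOD p] := hmodp.symm.trans h0
        have hle : p ∣ 1 := (Nat.modEq_zero_iff_dvd).mp this
        exact absurd (Nat.le_of_dvd one_pos hle) (by omega)
      · have hgcd : Nat.gcd p k = 1 := (hp.coprime_iff_not_dvd.mpr hpk)
        have hock : orderOf (c ^ k) = p := by
          rw [orderOf_pow c, hc, hgcd, Nat.div_one]
        have hckza : c ^ k ∈ Subgroup.zpowers a := by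
          have : c ^ k = (a⁻¹ * a ^ k)⁻¹ := by
            rw [mul_eq_one_iff_eq_inv.mp hW1, inv_inv]
          rw [this]
          exact inv_mem (mul_mem (inv_mem (Subgroup.mem_zpowers a))
            (Subgroup.npow_mem_zpowers a k))
        have hzeq : Subgroup.zpowers (c ^ k) = Subgroup.zpowers c :=
          pg_zpowers_eq_of_mem_of_orderOf_eq (Subgroup.npow_mem_zpowers c k) (by rw [hock, hc])
        have : c ∈ Subgroup.zpowers (c ^ k) := by rw [hzeq]; exact Subgroup.mem_zpowers c
        exact hmem (Subgroup.zpowers_le.mpr hckza this)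
    · -- a*c*z ∈ zpowers (a*z)
      obtain ⟨k, hk⟩ := pg_exists_nat_pow h
      rw [haz.mul_pow] at hk
      -- hk : a^k * z^k = a*c*z
      have e2 : (c⁻¹ * (a⁻¹ * a ^ k)) * (z ^ k * z⁻¹) = 1 := by
        calc (c⁻¹ * (a⁻¹ * a ^ k)) * (z ^ k * z⁻¹)
            = c⁻¹ * a⁻¹ * (a ^ k * z ^ k) * z⁻¹ := by group
          _ = c⁻¹ * a⁻¹ * (a * c * z) * z⁻¹ := by rw [hk]
          _ = 1 := by group
      have hWc : Commute c⁻¹ (a⁻¹ * a ^ k) :=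
        ((hac.symm.inv_right).mul_right (hac.symm.pow_right k)).inv_left
      have hW : (c⁻¹ * (a⁻¹ * a ^ k)) ^ p ^ i = 1 := by
        rw [hWc.mul_pow]
        have h1 : (c⁻¹) ^ p ^ i = 1 :=
          pg_pow_eq_one_of_mem_zpowers (inv_mem (Subgroup.mem_zpowers c))
            (by rw [hc]; exact hpdvd)
        have h2 : (a⁻¹ * a ^ k) ^ p ^ i = 1 :=
          pg_pow_eq_one_of_mem_zpowers
            (mul_mem (inv_mem (Subgroup.mem_zpowers a)) (Subgroup.npow_mem_zpowers a k))
            (by rw [ha])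
        rw [h1, h2, one_mul]
      have hT : (z ^ k * z⁻¹) ^ q = 1 :=
        pg_pow_eq_one_of_mem_zpowers
          (mul_mem (Subgroup.npow_mem_zpowers z k) (inv_mem (Subgroup.mem_zpowers z)))
          (by rw [hz])
      obtain ⟨hW1, hT1⟩ := pg_split_one hcop hW hT e2
      have : c = a⁻¹ * a ^ k := inv_mul_eq_one.mp hW1
      exact hmem (this ▸ mul_mem (inv_mem (Subgroup.mem_zpowers a))
        (Subgroup.npow_mem_zpowers a k))
  exact h4 ⟨a * z, z, a * c * z, a ^ p ^ (i - 1),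
    d12, d13, d14, d23, d24, d34,
    pg_adj_symm e21, e23, pg_adj_symm e43, e41, n13, n24⟩

end LemA

section LemBC
set_option linter.unusedSectionVars false
variable {H : Type*} [Group H] [Finite H]

lemma pg_lemB (h4 : pgC4Free H) {p q : ℕ} (hp : p.Prime) (hq : q.Prime) (hpq : p ≠ q)
    {a b zp zq : H}
    (hazp : Commute a zp) (hazq : Commute a zq) (hbzp : Commute b zp) (hbzq : Commute b zq)
    {i j : ℕ} (hi : 2 ≤ i) (hj : 2 ≤ j)
    (ha : orderOf a = p ^ i) (hb : orderOf b = q ^ j)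
    (hzp : orderOf zp = p) (hzq : orderOf zq = q)
    (hzpa : zp ∈ Subgroup.zpowers a) (hzqb : zq ∈ Subgroup.zpowers b) : False := by
  have hppos : 0 < p := hp.pos
  have hqpos : 0 < q := hq.pos
  have hp1 : 1 < p := hp.one_lt
  have hq1 : 1 < q := hq.one_lt
  have hcopq : Nat.Coprime p q := (Nat.coprime_primes hp hq).mpr hpq
  have hcopiq : Nat.Coprime (p ^ i) q := hcopq.pow_left i
  have hcopjp : Nat.Coprime (q ^ j) p := (hcopq.symm).pow_left j
  have hcopij : Nat.Coprime (p ^ i) (q ^ j) := Nat.Coprime.pow i j hcopq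
  have hpdvd : p ∣ p ^ i := dvd_pow_self p (by omega)
  have hqdvd : q ∣ q ^ j := dvd_pow_self q (by omega)
  have o1 : orderOf (a * zq) = p ^ i * q := by
    rw [hazq.orderOf_mul_eq_mul_orderOf_of_coprime (by rw [ha, hzq]; exact hcopiq), ha, hzq]
  have o3 : orderOf (b * zp) = q ^ j * p := by
    rw [hbzp.orderOf_mul_eq_mul_orderOf_of_coprime (by rw [hb, hzp]; exact hcopjp), hb, hzp]
  -- distinctness
  have d12 : a * zq ≠ zp := pg_ne_of_orderOf_ne (by
    rw [o1, hzp]; intro h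
    have : q ∣ p := h ▸ dvd_mul_left q (p ^ i)
    exact hpq ((Nat.prime_dvd_prime_iff_eq hq hp).mp this).symm)
  have d13 : a * zq ≠ b * zp := pg_ne_of_orderOf_ne (by
    rw [o1, o3]; intro h
    have h2 : p ^ 2 ∣ p ^ i * q := dvd_mul_of_dvd_left (pow_dvd_pow p hi) q
    rw [h] at h2
    have h3 : p * p ∣ p * q ^ j := by
      rw [pow_two] at h2
      calc p * p ∣ q ^ j * p := h2
        _ = p * q ^ j := mul_comm _ _
    have h4 : p ∣ q ^ j := (mul_dvd_mul_iff_left (by omega : p ≠ 0)).mp h3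
    exact hpq ((Nat.prime_dvd_prime_iff_eq hp hq).mp (hp.dvd_of_dvd_pow h4)))
  have d14 : a * zq ≠ zq := pg_ne_of_orderOf_ne (by
    rw [o1, hzq]; intro h
    have : p ∣ q := h ▸ dvd_mul_of_dvd_left hpdvd q
    exact hpq ((Nat.prime_dvd_prime_iff_eq hp hq).mp this))
  have d23 : zp ≠ b * zp := pg_ne_of_orderOf_ne (by
    rw [hzp, o3]; intro h
    have : q ∣ p := by rw [h]; exact dvd_mul_of_dvd_left hqdvd p
    exact hpq ((Nat.prime_dvd_prime_iff_eq hq hp).mp this).symm)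
  have d24 : zp ≠ zq := pg_ne_of_orderOf_ne (by rw [hzp, hzq]; exact hpq)
  have d34 : b * zp ≠ zq := pg_ne_of_orderOf_ne (by
    rw [o3, hzq]; intro h
    have : p ∣ q := h ▸ dvd_mul_left p (q ^ j)
    exact hpq ((Nat.prime_dvd_prime_iff_eq hp hq).mp this))
  -- edges
  have e12 : pgAdj (a * zq) zp := by
    obtain ⟨e, he⟩ := pg_exists_nat_pow hzpa
    obtain ⟨m, hm⟩ := pg_crt_pow hazq ha hzq hcopiq e 0
    exact pg_adj_symm (pg_adj_of_pow d12.symm (by rw [hm, pow_zero, mul_one, he]))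
  have e23 : pgAdj zp (b * zp) := by
    obtain ⟨m, hm⟩ := pg_crt_pow hbzp hb hzp hcopjp 0 1
    exact pg_adj_of_pow d23 (by rw [hm, pow_zero, one_mul, pow_one])
  have e34 : pgAdj (b * zp) zq := by
    obtain ⟨f, hf⟩ := pg_exists_nat_pow hzqb
    obtain ⟨m, hm⟩ := pg_crt_pow hbzp hb hzp hcopjp f 0
    exact pg_adj_symm (pg_adj_of_pow d34.symm (by rw [hm, pow_zero, mul_one, hf]))
  have e41 : pgAdj zq (a * zq) := by
    obtain ⟨m, hm⟩ := pg_crt_pow hazq ha hzq hcopiq 0 1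
    exact pg_adj_of_pow d14.symm (by rw [hm, pow_zero, one_mul, pow_one])
  -- non-adjacencies
  have n24 : ¬ pgAdj zp zq := by
    rintro ⟨-, h | h⟩
    · have := orderOf_dvd_of_mem_zpowers h
      rw [hzp, hzq] at this
      exact hpq ((Nat.prime_dvd_prime_iff_eq hp hq).mp this)
    · have := orderOf_dvd_of_mem_zpowers h
      rw [hzp, hzq] at this
      exact hpq ((Nat.prime_dvd_prime_iff_eq hq hp).mp this).symm
  have n13 : ¬ pgAdj (a * zq) (b * zp) := by
    rintro ⟨-, h | h⟩
    · -- a*zq ∈ zpowers (b*zp)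
      obtain ⟨m, hm⟩ := pg_exists_nat_pow h
      rw [hbzp.mul_pow] at hm
      -- hm : b^m * zp^m = a * zq
      have e2 : (a⁻¹ * zp ^ m) * (b ^ m * zq⁻¹) = 1 := by
        calc (a⁻¹ * zp ^ m) * (b ^ m * zq⁻¹)
            = a⁻¹ * (zp ^ m * b ^ m) * zq⁻¹ := by group
          _ = a⁻¹ * (b ^ m * zp ^ m) * zq⁻¹ := by rw [← (hbzp.pow_pow m m).eq]
          _ = a⁻¹ * (a * zq) * zq⁻¹ := by rw [hm]
          _ = 1 := by group
      have hWc : Commute a⁻¹ (zp ^ m) := (hazp.pow_right m).inv_left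
      have hW : (a⁻¹ * zp ^ m) ^ p ^ i = 1 := by
        rw [hWc.mul_pow]
        rw [pg_pow_eq_one_of_mem_zpowers (inv_mem (Subgroup.mem_zpowers a)) (by rw [ha]),
          pg_pow_eq_one_of_mem_zpowers (Subgroup.npow_mem_zpowers zp m) (by rw [hzp]; exact hpdvd),
          one_mul]
      have hT : (b ^ m * zq⁻¹) ^ q ^ j = 1 := by
        rw [((hbzq.pow_left m).inv_right).mul_pow]
        rw [pg_pow_eq_one_of_mem_zpowers (Subgroup.npow_mem_zpowers b m) (by rw [hb]),
          pg_pow_eq_one_of_mem_zpowers (inv_mem (Subgroup.mem_zpowers zq)) (by rw [hzq]; exact hqdvd),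
          one_mul]
      obtain ⟨hW1, -⟩ := pg_split_one hcopij hW hT e2
      have hazpk : a = zp ^ m := inv_mul_eq_one.mp hW1
      have hdvd : orderOf a ∣ orderOf zp :=
        orderOf_dvd_of_mem_zpowers (hazpk ▸ Subgroup.npow_mem_zpowers zp m)
      rw [ha, hzp] at hdvd
      have h2 : p ^ 2 ∣ p := (pow_dvd_pow p hi).trans hdvd
      have := Nat.le_of_dvd hppos h2
      nlinarith [hp1]
    · -- b*zp ∈ zpowers (a*zq)
      obtain ⟨m, hm⟩ := pg_exists_nat_pow h
      rw [hazq.mul_pow] at hm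
      -- hm : a^m * zq^m = b * zp
      have e2 : (b⁻¹ * zq ^ m) * (a ^ m * zp⁻¹) = 1 := by
        calc (b⁻¹ * zq ^ m) * (a ^ m * zp⁻¹)
            = b⁻¹ * (zq ^ m * a ^ m) * zp⁻¹ := by group
          _ = b⁻¹ * (a ^ m * zq ^ m) * zp⁻¹ := by rw [← (hazq.pow_pow m m).eq]
          _ = b⁻¹ * (b * zp) * zp⁻¹ := by rw [hm]
          _ = 1 := by group
      have hW : (b⁻¹ * zq ^ m) ^ q ^ j = 1 := by
        rw [((hbzq.pow_right m).inv_left).mul_pow]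
        rw [pg_pow_eq_one_of_mem_zpowers (inv_mem (Subgroup.mem_zpowers b)) (by rw [hb]),
          pg_pow_eq_one_of_mem_zpowers (Subgroup.npow_mem_zpowers zq m) (by rw [hzq]; exact hqdvd),
          one_mul]
      have hT : (a ^ m * zp⁻¹) ^ p ^ i = 1 := by
        rw [((hazp.pow_left m).inv_right).mul_pow]
        rw [pg_pow_eq_one_of_mem_zpowers (Subgroup.npow_mem_zpowers a m) (by rw [ha]),
          pg_pow_eq_one_of_mem_zpowers (inv_mem (Subgroup.mem_zpowers zp)) (by rw [hzp]; exact hpdvd),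
          one_mul]
      obtain ⟨hW1, -⟩ := pg_split_one hcopij.symm hW hT e2
      have hbzqk : b = zq ^ m := inv_mul_eq_one.mp hW1
      have hdvd : orderOf b ∣ orderOf zq :=
        orderOf_dvd_of_mem_zpowers (hbzqk ▸ Subgroup.npow_mem_zpowers zq m)
      rw [hb, hzq] at hdvd
      have h2 : q ^ 2 ∣ q := (pow_dvd_pow q hj).trans hdvd
      have := Nat.le_of_dvd hqpos h2
      nlinarith [hq1]
  exact h4 ⟨a * zq, zp, b * zp, zq,
    d12, d13, d14, d23, d24, d34, e12, e23, e34, e41, n13, n24⟩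

lemma pg_absorb {p q : ℕ} (hp : p.Prime) (hq : q.Prime) (hpq : p ≠ q)
    {b y zp : H} (hyzp : Commute y zp)
    {j k : ℕ} (hj : 1 ≤ j) (hk : 1 ≤ k)
    (hb : orderOf b = q ^ j) (hy : orderOf y = q ^ k) (hzp : orderOf zp = p)
    {m : ℕ} (hm : y ^ m * zp ^ m = b * zp) : b ∈ Subgroup.zpowers y := by
  have hcopq : Nat.Coprime p q := (Nat.coprime_primes hp hq).mpr hpq
  have hbeq : b = y ^ m * (zp ^ m * zp⁻¹) := by
    rw [← mul_assoc, hm]; group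
  have hT : zp ^ m * zp⁻¹ ∈ Subgroup.zpowers zp :=
    mul_mem (Subgroup.npow_mem_zpowers zp m) (inv_mem (Subgroup.mem_zpowers zp))
  have hyT : Commute (y ^ m) (zp ^ m * zp⁻¹) :=
    ((hyzp.pow_pow m m)).mul_right ((hyzp.pow_left m).inv_right)
  have e3 : (y ^ m) ^ q ^ j * (zp ^ m * zp⁻¹) ^ q ^ j = 1 := by
    rw [← hyT.mul_pow, ← hbeq]
    rw [← hb]; exact pow_orderOf_eq_one b
  have hw : ((y ^ m) ^ q ^ j) ^ q ^ k = 1 := by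
    rw [← pow_mul, mul_comm, pow_mul]
    rw [pg_pow_eq_one_of_mem_zpowers (Subgroup.npow_mem_zpowers y m) (by rw [hy]), one_pow]
  have ht : ((zp ^ m * zp⁻¹) ^ q ^ j) ^ p = 1 := by
    rw [← pow_mul, mul_comm, pow_mul]
    rw [pg_pow_eq_one_of_mem_zpowers hT (by rw [hzp]), one_pow]
  obtain ⟨-, hT1⟩ := pg_split_one ((hcopq.symm).pow_left k) hw ht e3
  have hTone : zp ^ m * zp⁻¹ = 1 := by
    refine pg_eq_one_of_coprime_pows (m := q ^ j) (n := p) ((hcopq.symm).pow_left j) hT1 ?_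
    exact pg_pow_eq_one_of_mem_zpowers hT (by rw [hzp])
  rw [hTone, mul_one] at hbeq
  exact hbeq ▸ Subgroup.npow_mem_zpowers y m

lemma pg_lemC (h4 : pgC4Free H) {p q : ℕ} (hp : p.Prime) (hq : q.Prime) (hpq : p ≠ q)
    {b y zp zq : H}
    (hbzp : Commute b zp) (hyzp : Commute y zp)
    {j k : ℕ} (hj : 2 ≤ j) (hk : 2 ≤ k)
    (hb : orderOf b = q ^ j) (hy : orderOf y = q ^ k)
    (hzp : orderOf zp = p) (hzq : orderOf zq = q)
    (hzqb : zq ∈ Subgroup.zpowers b) (hzqy : zq ∈ Subgroup.zpowers y)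
    (hby : b ∉ Subgroup.zpowers y) (hyb : y ∉ Subgroup.zpowers b) : False := by
  have hppos : 0 < p := hp.pos
  have hcopq : Nat.Coprime p q := (Nat.coprime_primes hp hq).mpr hpq
  have hcopjp : Nat.Coprime (q ^ j) p := (hcopq.symm).pow_left j
  have hcopkp : Nat.Coprime (q ^ k) p := (hcopq.symm).pow_left k
  have hqdvdj : q ∣ q ^ j := dvd_pow_self q (by omega)
  have hqdvdk : q ∣ q ^ k := dvd_pow_self q (by omega)
  have o1 : orderOf (b * zp) = q ^ j * p := by
    rw [hbzp.orderOf_mul_eq_mul_orderOf_of_coprime (by rw [hb, hzp]; exact hcopjp), hb, hzp]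
  have o3 : orderOf (y * zp) = q ^ k * p := by
    rw [hyzp.orderOf_mul_eq_mul_orderOf_of_coprime (by rw [hy, hzp]; exact hcopkp), hy, hzp]
  have d12 : b * zp ≠ zp := pg_ne_of_orderOf_ne (by
    rw [o1, hzp]; intro h
    have : q ∣ p := h ▸ dvd_mul_of_dvd_left hqdvdj p
    exact hpq ((Nat.prime_dvd_prime_iff_eq hq hp).mp this).symm)
  have d13 : b * zp ≠ y * zp := by
    intro h
    exact hby (mul_right_cancel h ▸ Subgroup.mem_zpowers y)
  have d14 : b * zp ≠ zq := pg_ne_of_orderOf_ne (by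
    rw [o1, hzq]; intro h
    have : p ∣ q := h ▸ dvd_mul_left p (q ^ j)
    exact hpq ((Nat.prime_dvd_prime_iff_eq hp hq).mp this))
  have d23 : zp ≠ y * zp := pg_ne_of_orderOf_ne (by
    rw [hzp, o3]; intro h
    have : q ∣ p := by rw [h]; exact dvd_mul_of_dvd_left hqdvdk p
    exact hpq ((Nat.prime_dvd_prime_iff_eq hq hp).mp this).symm)
  have d24 : zp ≠ zq := pg_ne_of_orderOf_ne (by rw [hzp, hzq]; exact hpq)
  have d34 : y * zp ≠ zq := pg_ne_of_orderOf_ne (by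
    rw [o3, hzq]; intro h
    have : p ∣ q := h ▸ dvd_mul_left p (q ^ k)
    exact hpq ((Nat.prime_dvd_prime_iff_eq hp hq).mp this))
  have e12 : pgAdj (b * zp) zp := by
    obtain ⟨m, hm⟩ := pg_crt_pow hbzp hb hzp hcopjp 0 1
    exact pg_adj_symm (pg_adj_of_pow d12.symm (by rw [hm, pow_zero, one_mul, pow_one]))
  have e23 : pgAdj zp (y * zp) := by
    obtain ⟨m, hm⟩ := pg_crt_pow hyzp hy hzp hcopkp 0 1
    exact pg_adj_of_pow d23 (by rw [hm, pow_zero, one_mul, pow_one])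
  have e34 : pgAdj (y * zp) zq := by
    obtain ⟨g, hg⟩ := pg_exists_nat_pow hzqy
    obtain ⟨m, hm⟩ := pg_crt_pow hyzp hy hzp hcopkp g 0
    exact pg_adj_symm (pg_adj_of_pow d34.symm (by rw [hm, pow_zero, mul_one, hg]))
  have e41 : pgAdj zq (b * zp) := by
    obtain ⟨f, hf⟩ := pg_exists_nat_pow hzqb
    obtain ⟨m, hm⟩ := pg_crt_pow hbzp hb hzp hcopjp f 0
    exact pg_adj_of_pow d14.symm (by rw [hm, pow_zero, mul_one, hf])
  have n24 : ¬ pgAdj zp zq := by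
    rintro ⟨-, h | h⟩
    · have := orderOf_dvd_of_mem_zpowers h
      rw [hzp, hzq] at this
      exact hpq ((Nat.prime_dvd_prime_iff_eq hp hq).mp this)
    · have := orderOf_dvd_of_mem_zpowers h
      rw [hzp, hzq] at this
      exact hpq ((Nat.prime_dvd_prime_iff_eq hq hp).mp this).symm
  have n13 : ¬ pgAdj (b * zp) (y * zp) := by
    rintro ⟨-, h | h⟩
    · obtain ⟨m, hm⟩ := pg_exists_nat_pow h
      rw [hyzp.mul_pow] at hm
      exact hby (pg_absorb hp hq hpq hyzp (by omega) (by omega) hb hy hzp hm)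
    · obtain ⟨m, hm⟩ := pg_exists_nat_pow h
      rw [hbzp.mul_pow] at hm
      exact hyb (pg_absorb hp hq hpq hbzp (by omega) (by omega) hy hb hzp hm)
  exact h4 ⟨b * zp, zp, y * zp, zq,
    d12, d13, d14, d23, d24, d34, e12, e23, e34, e41, n13, n24⟩

end LemBC

section Sides
open Pointwise
set_option linter.unusedSectionVars false
variable {H : Type*} [Group H] [Finite H]

lemma pg_c4free_subgroup {G : Type*} [Group G] (K : Subgroup G) (h : pgC4Free G) :
    pgC4Free K := by
  have adj_iff : ∀ s t : K, pgAdj s t ↔ pgAdj (s : G) (t : G) := by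
    intro s t
    constructor
    · rintro ⟨hne, hor⟩
      refine ⟨fun he => hne (Subtype.ext he), ?_⟩
      rcases hor with ⟨k, rfl⟩ | ⟨k, rfl⟩
      · exact Or.inl ⟨k, by push_cast; rfl⟩
      · exact Or.inr ⟨k, by push_cast; rfl⟩
    · rintro ⟨hne, hor⟩
      refine ⟨fun he => hne (congrArg _ he), ?_⟩
      rcases hor with ⟨k, hk⟩ | ⟨k, hk⟩
      · exact Or.inl ⟨k, Subtype.ext (by push_cast; exact hk)⟩
      · exact Or.inr ⟨k, Subtype.ext (by push_cast; exact hk)⟩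
  rintro ⟨x, u, y, v, hxu, hxy, hxv, huy, huv, hyv, a1, a2, a3, a4, n1, n2⟩
  exact h ⟨x, u, y, v,
    fun he => hxu (Subtype.ext he), fun he => hxy (Subtype.ext he),
    fun he => hxv (Subtype.ext he), fun he => huy (Subtype.ext he),
    fun he => huv (Subtype.ext he), fun he => hyv (Subtype.ext he),
    (adj_iff _ _).mp a1, (adj_iff _ _).mp a2, (adj_iff _ _).mp a3, (adj_iff _ _).mp a4,
    fun hc => n1 ((adj_iff _ _).mpr hc), fun hc => n2 ((adj_iff _ _).mpr hc)⟩

lemma pg_expo_side {r : ℕ} (hr : r.Prime) {zr : H} (hzr : orderOf zr = r)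
    (hno : ¬ ∃ a : H, orderOf a = r ^ 2) (R : Sylow r H) :
    Monoid.exponent ↥(R : Subgroup H) = r := by
  haveI : Fact r.Prime := ⟨hr⟩
  have hdvd : ∀ g : ↥(R : Subgroup H), orderOf g ∣ r := by
    intro g
    obtain ⟨n, hn⟩ := R.isPGroup' g
    have hordvd : orderOf g ∣ r ^ n := orderOf_dvd_iff_pow_eq_one.mpr hn
    obtain ⟨k, hkn, hko⟩ := (Nat.dvd_prime_pow hr).mp hordvd
    rcases Nat.lt_or_ge k 2 with hk2 | hk2
    · rw [hko]
      calc r ^ k ∣ r ^ 1 := pow_dvd_pow r (by omega)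
        _ = r := pow_one r
    · exfalso
      refine hno ⟨((g ^ r ^ (k - 2) : ↥(R : Subgroup H)) : H), ?_⟩
      have h2 : orderOf (g ^ r ^ (k - 2)) = r ^ 2 := by
        rw [orderOf_pow, hko, Nat.gcd_eq_right (pow_dvd_pow r (by omega)),
          Nat.pow_div (by omega) hr.pos, show k - (k - 2) = 2 by omega]
      exact (orderOf_injective (R : Subgroup H).subtype
        (Subgroup.subtype_injective _) (g ^ r ^ (k - 2))).trans h2
  have h1 : Monoid.exponent ↥(R : Subgroup H) ∣ r := Monoid.exponent_dvd.mpr hdvd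
  have hrcard : r ∣ Nat.card ↥(R : Subgroup H) := by
    rw [R.card_eq_multiplicity]
    refine dvd_pow_self r ?_
    have hcpos : Nat.card H ≠ 0 := Nat.card_pos.ne'
    have hdvdH : r ∣ Nat.card H := by rw [← hzr]; exact orderOf_dvd_natCard zr
    exact (hr.factorization_pos_of_dvd hcpos hdvdH).ne'
  obtain ⟨g, hg⟩ := exists_prime_orderOf_dvd_card' r hrcard
  refine Nat.dvd_antisymm h1 ?_
  have := Monoid.order_dvd_exponent g
  rwa [hg] at this

lemma pg_hughes_side (h4 : pgC4Free H)
    {p s : ℕ} (hp : p.Prime) (hs : s.Prime) (hps : p ≠ s)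
    {zp zs : H} (hzp : orderOf zp = p) (hzs : orderOf zs = s)
    (hzpc : ∀ h : H, Commute zp h) (hzsc : ∀ h : H, Commute zs h)
    (S : Sylow s H) :
    IsCyclic ((hughesSubgroup s ↥(S : Subgroup H)).map (S : Subgroup H).subtype) ∧
    ((hughesSubgroup s ↥(S : Subgroup H)).map (S : Subgroup H).subtype).Normal := by
  haveI : Fact s.Prime := ⟨hs⟩
  set T : Set H := {y : H | ∃ k, 2 ≤ k ∧ orderOf y = s ^ k} with hTdef
  have hzsin : ∀ y ∈ T, zs ∈ Subgroup.zpowers y := by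
    rintro y ⟨k, hk2, hyk⟩
    by_contra hmem
    exact pg_lemA h4 hs hp hps.symm ((hzsc y).symm) ((hzpc y).symm) ((hzpc zs).symm)
      hk2 hyk hzs hzp hmem
  have hcomp : ∀ y ∈ T, ∀ b ∈ T, y ∈ Subgroup.zpowers b ∨ b ∈ Subgroup.zpowers y := by
    rintro y ⟨k, hk2, hyk⟩ b ⟨j, hj2, hbj⟩
    by_contra hnot
    push_neg at hnot
    exact pg_lemC h4 hp hs hps ((hzpc b).symm) ((hzpc y).symm) hj2 hk2 hbj hyk hzp hzs
      (hzsin b ⟨j, hj2, hbj⟩) (hzsin y ⟨k, hk2, hyk⟩) hnot.2 hnot.1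
  by_cases hTne : T.Nonempty
  · -- nonempty case
    obtain ⟨y₀, hy₀⟩ := hTne
    obtain ⟨b₀, hb₀T, hb₀max⟩ :=
      Set.Finite.exists_maximalFor orderOf T (Set.toFinite T) ⟨y₀, hy₀⟩
    obtain ⟨m, hm2, hb₀o⟩ := id hb₀T
    have habs : ∀ y ∈ T, y ∈ Subgroup.zpowers b₀ := by
      intro y hyT
      rcases hcomp y hyT b₀ hb₀T with h | h
      · exact h
      · have hd : orderOf b₀ ∣ orderOf y := orderOf_dvd_of_mem_zpowers h
        have hle : orderOf b₀ ≤ orderOf y := Nat.le_of_dvd (orderOf_pos y) hd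
        have heq : orderOf b₀ = orderOf y := le_antisymm hle (hb₀max hyT hle)
        have hzz := pg_zpowers_eq_of_mem_of_orderOf_eq h heq
        rw [hzz]; exact Subgroup.mem_zpowers y
    have hconj : ∀ (g : H), ∀ y ∈ T, g * y * g⁻¹ ∈ T := by
      rintro g y ⟨k, hk2, hyk⟩
      exact ⟨k, hk2, by rw [pg_orderOf_conj g y, hyk]⟩
    have hb₀S : b₀ ∈ (S : Subgroup H) := by
      have hpg : IsPGroup s (Subgroup.zpowers b₀) :=
        IsPGroup.of_card (by rw [Nat.card_zpowers, hb₀o])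
      obtain ⟨Q, hQ⟩ := hpg.exists_le_sylow
      obtain ⟨g, hg⟩ := MulAction.exists_smul_eq H Q S
      have hbQ : b₀ ∈ (Q : Subgroup H) := hQ (Subgroup.mem_zpowers b₀)
      have hc₀S : g * b₀ * g⁻¹ ∈ (S : Subgroup H) := by
        rw [← hg, Sylow.coe_subgroup_smul]
        have h1 : (MulAut.conj g) • b₀ ∈ (MulAut.conj g) • (Q : Subgroup H) :=
          Subgroup.smul_mem_pointwise_smul b₀ (MulAut.conj g) (Q : Subgroup H) hbQ
        simpa using h1
      have hc₀T : g * b₀ * g⁻¹ ∈ T := hconj g b₀ hb₀T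
      have hc₀z : g * b₀ * g⁻¹ ∈ Subgroup.zpowers b₀ := habs _ hc₀T
      have hzz := pg_zpowers_eq_of_mem_of_orderOf_eq hc₀z (pg_orderOf_conj g b₀)
      have hb₀mem : b₀ ∈ Subgroup.zpowers (g * b₀ * g⁻¹) := by
        rw [hzz]; exact Subgroup.mem_zpowers b₀
      exact Subgroup.zpowers_le.mpr hc₀S hb₀mem
    have hmain : (hughesSubgroup s ↥(S : Subgroup H)).map (S : Subgroup H).subtype
        = Subgroup.zpowers b₀ := by
      apply le_antisymm
      · rw [hughesSubgroup, MonoidHom.map_closure]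
        refine (Subgroup.closure_le _).mpr ?_
        rintro w ⟨h, hh, rfl⟩
        obtain ⟨n, hn⟩ := S.isPGroup' h
        have hordvd : orderOf h ∣ s ^ n := orderOf_dvd_iff_pow_eq_one.mpr hn
        obtain ⟨k, hkn, hko⟩ := (Nat.dvd_prime_pow hs).mp hordvd
        have hcoe : orderOf ((S : Subgroup H).subtype h) = orderOf h :=
          orderOf_injective _ (Subgroup.subtype_injective _) h
        rcases Nat.lt_or_ge k 2 with hk2 | hk2
        · interval_cases k
          · have h1 : h = 1 := orderOf_eq_one_iff.mp (by rw [hko, pow_zero])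
            rw [h1]
            simpa using (Subgroup.zpowers b₀).one_mem
          · exact absurd (by rw [hko, pow_one]) hh
        · exact habs _ ⟨k, hk2, by rw [hcoe, hko]⟩
      · refine Subgroup.zpowers_le.mpr ?_
        refine ⟨⟨b₀, hb₀S⟩, ?_, rfl⟩
        refine Subgroup.subset_closure ?_
        have hob : orderOf (⟨b₀, hb₀S⟩ : ↥(S : Subgroup H)) = s ^ m := by
          rw [← hb₀o]
          exact (orderOf_injective (S : Subgroup H).subtype
            (Subgroup.subtype_injective _) ⟨b₀, hb₀S⟩).symm
        rw [Set.mem_setOf_eq, hob]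
        intro he
        have := Nat.pow_right_injective hs.two_le (he.trans (pow_one s).symm)
        omega
    rw [hmain]
    refine ⟨pg_isCyclic_zpowers b₀, ?_⟩
    constructor
    intro n hn g
    obtain ⟨t, rfl⟩ := hn
    have h1 : g * b₀ * g⁻¹ ∈ Subgroup.zpowers b₀ := habs _ (hconj g b₀ hb₀T)
    have h2 : g * b₀ ^ t * g⁻¹ = (g * b₀ * g⁻¹) ^ t := conj_zpow.symm
    rw [h2]
    exact Subgroup.zpow_mem _ h1 t
  · -- T empty
    have hbot : hughesSubgroup s ↥(S : Subgroup H) = ⊥ := by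
      rw [hughesSubgroup, Subgroup.closure_eq_bot_iff]
      intro h hh
      obtain ⟨n, hn⟩ := S.isPGroup' h
      have hordvd : orderOf h ∣ s ^ n := orderOf_dvd_iff_pow_eq_one.mpr hn
      obtain ⟨k, hkn, hko⟩ := (Nat.dvd_prime_pow hs).mp hordvd
      have hcoe : orderOf ((h : H)) = orderOf h :=
        orderOf_injective (S : Subgroup H).subtype (Subgroup.subtype_injective _) h
      rcases Nat.lt_or_ge k 2 with hk2 | hk2
      · interval_cases k
        · have h1 : h = 1 := orderOf_eq_one_iff.mp (by rw [hko, pow_zero])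
          simpa using h1
        · exact absurd (by rw [hko, pow_one]) hh
      · have hmemT : (h : H) ∈ T := ⟨k, hk2, by rw [hcoe, hko]⟩
        exact absurd ⟨_, hmemT⟩ hTne
    rw [hbot, Subgroup.map_bot]
    exact ⟨inferInstance, inferInstance⟩

lemma pg_not_both_bad (h4 : pgC4Free H) {p q : ℕ} (hp : p.Prime) (hq : q.Prime) (hpq : p ≠ q)
    {zp zq : H} (hzp : orderOf zp = p) (hzq : orderOf zq = q)
    (hzpc : ∀ h : H, Commute zp h) (hzqc : ∀ h : H, Commute zq h)
    (hbadp : ∃ a : H, orderOf a = p ^ 2) (hbadq : ∃ b : H, orderOf b = q ^ 2) : False := by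
  obtain ⟨a, ha⟩ := hbadp
  obtain ⟨b, hb⟩ := hbadq
  have hzpa : zp ∈ Subgroup.zpowers a := by
    by_contra hmem
    exact pg_lemA h4 hp hq hpq ((hzpc a).symm) ((hzqc a).symm) ((hzqc zp).symm)
      le_rfl ha hzp hzq hmem
  have hzqb : zq ∈ Subgroup.zpowers b := by
    by_contra hmem
    exact pg_lemA h4 hq hp hpq.symm ((hzqc b).symm) ((hzpc b).symm) ((hzpc zq).symm)
      le_rfl hb hzq hzp hmem
  exact pg_lemB h4 hp hq hpq ((hzpc a).symm) ((hzqc a).symm) ((hzpc b).symm) ((hzqc b).symm)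
    le_rfl le_rfl ha hb hzp hzq hzpa hzqb
end Sides

theorem centralizer_structure_of_order_pq_two_primes {G : Type*} [Group G] [Finite G]
    (h : pgC4Free G) (p q : ℕ) (hp : p.Prime) (hq : q.Prime) (hpq : p ≠ q)
    (x : G) (hx : orderOf x = p * q)
    (u v : ℕ) (hcard : Nat.card (Subgroup.centralizer ({x} : Set G)) = p ^ u * q ^ v) :
    ∃ r s : ℕ, ((r = p ∧ s = q) ∨ (r = q ∧ s = p)) ∧
      (∀ R : Sylow r (Subgroup.centralizer ({x} : Set G)),
          Monoid.exponent (R : Subgroup (Subgroup.centralizer ({x} : Set G))) = r) ∧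
      (∀ S : Sylow s (Subgroup.centralizer ({x} : Set G)),
          IsCyclic ((hughesSubgroup s (S : Subgroup (Subgroup.centralizer ({x} : Set G)))).map
              (S : Subgroup (Subgroup.centralizer ({x} : Set G))).subtype) ∧
          ((hughesSubgroup s (S : Subgroup (Subgroup.centralizer ({x} : Set G)))).map
              (S : Subgroup (Subgroup.centralizer ({x} : Set G))).subtype).Normal) := by
  classical
  have hxC : x ∈ Subgroup.centralizer ({x} : Set G) := by
    refine Subgroup.mem_centralizer_iff.mpr ?_
    intro g hg
    rw [Set.mem_singleton_iff] at hg
    subst hg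
    rfl
  set C := Subgroup.centralizer ({x} : Set G) with hC
  have h4C : pgC4Free ↥C := pg_c4free_subgroup C h
  set X : ↥C := ⟨x, hxC⟩ with hX
  have hXord : orderOf X = p * q := by
    rw [← hx]
    exact (orderOf_injective C.subtype (Subgroup.subtype_injective _) X).symm
  have hcommX : ∀ hh : ↥C, Commute X hh := by
    intro hh
    have hcomm : x * (hh : G) = (hh : G) * x :=
      Subgroup.mem_centralizer_iff.mp hh.2 x (Set.mem_singleton x)
    exact Subtype.ext (by push_cast; exact hcomm)
  set zp : ↥C := X ^ q with hzp
  set zq : ↥C := X ^ p with hzq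
  have hzpord : orderOf zp = p := by
    rw [hzp, orderOf_pow X, hXord, Nat.gcd_eq_right (dvd_mul_left q p),
      Nat.mul_div_cancel _ hq.pos]
  have hzqord : orderOf zq = q := by
    rw [hzq, orderOf_pow X, hXord, Nat.gcd_eq_right (dvd_mul_right p q),
      Nat.mul_div_cancel_left _ hp.pos]
  have hzpc : ∀ hh : ↥C, Commute zp hh := fun hh => (hcommX hh).pow_left q
  have hzqc : ∀ hh : ↥C, Commute zq hh := fun hh => (hcommX hh).pow_left p
  by_cases hbadp : ∃ a : ↥C, orderOf a = p ^ 2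
  · have hbadq : ¬ ∃ b : ↥C, orderOf b = q ^ 2 := fun hbq =>
      pg_not_both_bad h4C hp hq hpq hzpord hzqord hzpc hzqc hbadp hbq
    refine ⟨q, p, Or.inr ⟨rfl, rfl⟩, ?_, ?_⟩
    · intro R
      exact pg_expo_side hq hzqord hbadq R
    · intro S
      exact pg_hughes_side h4C hq hp hpq.symm hzqord hzpord hzqc hzpc S
  · refine ⟨p, q, Or.inl ⟨rfl, rfl⟩, ?_, ?_⟩
    · intro R
      exact pg_expo_side hp hzpord hbadp R
    · intro S
      exact pg_hughes_side h4C hp hq hpq hzpord hzqord hzpc hzqc S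
end

section
/- Let G be a finite group whose power graph P(G) is C_4-free. If the order of the center Z(G) is divisible by at least three distinct primes, then G is cyclic of order pqr for three distinct primes p, q, r. -/
section Aux

variable {G : Type*} [Group G]

/-- If `x` and `y` commute and have coprime orders, then `x ∈ ⟨x*y⟩`. -/
lemma pg_mem_mul_left {x y : G} (h : Commute x y)
    (hco : Nat.Coprime (orderOf x) (orderOf y)) :
    x ∈ Subgroup.zpowers (x * y) := by
  obtain ⟨u, v, huv⟩ := Nat.isCoprime_iff_coprime.mpr hco
  rw [Subgroup.mem_zpowers_iff]
  refine ⟨v * (orderOf y : ℤ), ?_⟩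
  have h2 : y ^ (v * (orderOf y : ℤ)) = 1 := by
    rw [mul_comm, zpow_mul, zpow_natCast, pow_orderOf_eq_one, one_zpow]
  have hv : v * (orderOf y : ℤ) = 1 + (-u) * (orderOf x : ℤ) := by linarith
  rw [h.mul_zpow, h2, mul_one, hv, zpow_add, zpow_one, mul_comm (-u), zpow_mul,
    zpow_natCast, pow_orderOf_eq_one, one_zpow, mul_one]

/-- If `x` and `y` commute and have coprime orders, then `y ∈ ⟨x*y⟩`. -/
lemma pg_mem_mul_right {x y : G} (h : Commute x y)
    (hco : Nat.Coprime (orderOf x) (orderOf y)) :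
    y ∈ Subgroup.zpowers (x * y) := by
  have := pg_mem_mul_left h.symm hco.symm
  rwa [← h.eq] at this

/-- If `x ∈ ⟨w⟩` and `n` is coprime to the order of `x`, then `x ∈ ⟨w^n⟩`. -/
lemma pg_mem_zpowers_pow {x w : G} (n : ℕ) (hx : x ∈ Subgroup.zpowers w)
    (hco : Nat.Coprime n (orderOf x)) : x ∈ Subgroup.zpowers (w ^ n) := by
  obtain ⟨k, hk⟩ := Subgroup.mem_zpowers_iff.mp hx
  obtain ⟨u, v, huv⟩ := Nat.isCoprime_iff_coprime.mpr hco
  rw [Subgroup.mem_zpowers_iff]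
  refine ⟨k * u, ?_⟩
  have h1 : ((w ^ n : G)) ^ (k * u) = x ^ (u * (n : ℤ)) := by
    rw [← hk, ← zpow_natCast w n, ← zpow_mul, ← zpow_mul]
    congr 1; ring
  have h2 : u * (n : ℤ) = 1 + (-v) * (orderOf x : ℤ) := by linarith
  rw [h1, h2, zpow_add, zpow_one, mul_comm (-v), zpow_mul, zpow_natCast,
    pow_orderOf_eq_one, one_zpow, mul_one]

lemma pg_arith1 {p q r : ℕ} (hp2 : 2 ≤ p) (hq1 : 1 ≤ q) (hr1 : 1 ≤ r)
    (h : p * (q * r) = q) : False := by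
  have h1 : q * r ≥ q * 1 := Nat.mul_le_mul_left q hr1
  have h2 : p * (q * r) ≥ 2 * (q * r) := Nat.mul_le_mul_right _ hp2
  nlinarith

lemma pg_arith2 {p q r : ℕ} (hq2 : 2 ≤ q) (hr1 : 1 ≤ r) (hp1 : 1 ≤ p)
    (h : p * (q * r) = p) : False := by
  have h1 : q * r ≥ 2 * 1 := Nat.mul_le_mul hq2 hr1
  have h2 : p * (q * r) ≥ p * 2 := Nat.mul_le_mul_left _ (by omega)
  nlinarith

lemma pg_arith3 {p q r : ℕ} (hp2 : 2 ≤ p) (hq1 : 1 ≤ q) (hr1 : 1 ≤ r)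
    (h : p * (q * r) = r) : False := by
  have h1 : q * r ≥ 1 * r := Nat.mul_le_mul_right r hq1
  have h2 : p * (q * r) ≥ 2 * (q * r) := Nat.mul_le_mul_right _ hp2
  nlinarith

lemma pg_arith4 {q r m : ℕ} (hr2 : 2 ≤ r) (hm1 : 1 ≤ m) (hq1 : 1 ≤ q)
    (h : q = q * r * m) : False := by
  have h1 : r * m ≥ 2 * 1 := Nat.mul_le_mul hr2 hm1
  have h2 : q * (r * m) ≥ q * 2 := Nat.mul_le_mul_left _ (by omega)
  have h3 : q * r * m = q * (r * m) := by ring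
  nlinarith

lemma pg_arith5 {q r m : ℕ} (hq2 : 2 ≤ q) (hm1 : 1 ≤ m) (hr1 : 1 ≤ r)
    (h : r = q * r * m) : False := by
  have h1 : q * m ≥ 2 * 1 := Nat.mul_le_mul hq2 hm1
  have h2 : r * (q * m) ≥ r * 2 := Nat.mul_le_mul_left _ (by omega)
  have h3 : q * r * m = r * (q * m) := by ring
  nlinarith

lemma pg_not_adj_of_prime_orders {x y : G} {s t : ℕ} (hs : s.Prime) (ht : t.Prime)
    (hst : s ≠ t) (hx : orderOf x = s) (hy : orderOf y = t) : ¬ pgAdj x y := by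
  rintro ⟨-, hor | hor⟩
  · have := orderOf_dvd_of_mem_zpowers hor
    rw [hx, hy] at this
    exact hst ((Nat.prime_dvd_prime_iff_eq hs ht).mp this)
  · have := orderOf_dvd_of_mem_zpowers hor
    rw [hx, hy] at this
    exact hst ((Nat.prime_dvd_prime_iff_eq ht hs).mp this).symm

/-- Key lemma: if `a, b, c` are commuting elements of distinct prime orders
`p, q, r`, all commuting with `g`, the order of `g` is coprime to `q*r`, and
`g ∉ ⟨a*b*c⟩`, then the power graph has an induced 4-cycle. -/
lemma pg_key [Finite G] (p q r : ℕ)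
    (hp : p.Prime) (hq : q.Prime) (hr : r.Prime)
    (hpq : p ≠ q) (hpr : p ≠ r) (hqr : q ≠ r)
    (a b c g : G) (hoa : orderOf a = p) (hob : orderOf b = q) (hoc : orderOf c = r)
    (hab : Commute a b) (hac : Commute a c) (hbc : Commute b c)
    (hbg : Commute b g) (hcg : Commute c g)
    (hco : Nat.Coprime (orderOf g) (q * r))
    (hgz : g ∉ Subgroup.zpowers (a * b * c)) : pgHasInducedC4 G := by
  set z := a * b * c with hzdef
  set m := orderOf g with hmdef
  have hm : 0 < m := orderOf_pos g
  have hp2 := hp.two_le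
  have hq2 := hq.two_le
  have hr2 := hr.two_le
  have hqr' : Nat.Coprime q r := (Nat.coprime_primes hq hr).mpr hqr
  have hpq' : Nat.Coprime p q := (Nat.coprime_primes hp hq).mpr hpq
  have hpr' : Nat.Coprime p r := (Nat.coprime_primes hp hr).mpr hpr
  have hpqr : Nat.Coprime p (q * r) := Nat.Coprime.mul_right hpq' hpr'
  have hmq : Nat.Coprime m q := Nat.Coprime.coprime_dvd_right (dvd_mul_right q r) hco
  have hmr : Nat.Coprime m r := Nat.Coprime.coprime_dvd_right (dvd_mul_left r q) hco
  have hobc : orderOf (b * c) = q * r := by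
    rw [hbc.orderOf_mul_eq_mul_orderOf_of_coprime (by rw [hob, hoc]; exact hqr'), hob, hoc]
  have habc : Commute a (b * c) := hab.mul_right hac
  have hza : z = a * (b * c) := by rw [hzdef, mul_assoc]
  have hoz : orderOf z = p * (q * r) := by
    rw [hza, habc.orderOf_mul_eq_mul_orderOf_of_coprime (by rw [hoa, hobc]; exact hpqr),
      hoa, hobc]
  have ha_z : a ∈ Subgroup.zpowers z := by
    rw [hza]; exact pg_mem_mul_left habc (by rw [hoa, hobc]; exact hpqr)
  have hbc_z : b * c ∈ Subgroup.zpowers z := by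
    rw [hza]; exact pg_mem_mul_right habc (by rw [hoa, hobc]; exact hpqr)
  have hbc_le : Subgroup.zpowers (b * c) ≤ Subgroup.zpowers z :=
    Subgroup.zpowers_le.mpr hbc_z
  have hb_z : b ∈ Subgroup.zpowers z :=
    hbc_le (pg_mem_mul_left hbc (by rw [hob, hoc]; exact hqr'))
  have hc_z : c ∈ Subgroup.zpowers z :=
    hbc_le (pg_mem_mul_right hbc (by rw [hob, hoc]; exact hqr'))
  by_cases hag' : a ∈ Subgroup.zpowers g
  · -- quadruple (z, b, g*b, a)
    have hg1 : g ≠ 1 := by rintro rfl; exact hgz (Subgroup.one_mem _)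
    have hgbcomm : Commute g b := hbg.symm
    have hogb : orderOf (g * b) = m * q := by
      rw [hgbcomm.orderOf_mul_eq_mul_orderOf_of_coprime (by rw [hob, ← hmdef]; exact hmq),
        hob, ← hmdef]
    have hg_gb : g ∈ Subgroup.zpowers (g * b) :=
      pg_mem_mul_left hgbcomm (by rw [hob, ← hmdef]; exact hmq)
    have hb_gb : b ∈ Subgroup.zpowers (g * b) :=
      pg_mem_mul_right hgbcomm (by rw [hob, ← hmdef]; exact hmq)
    have ha_gb : a ∈ Subgroup.zpowers (g * b) :=
      Subgroup.zpowers_le.mpr hg_gb hag'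
    refine ⟨z, b, g * b, a, ?_, ?_, ?_, ?_, ?_, ?_, ?_, ?_, ?_, ?_, ?_, ?_⟩
    · -- z ≠ b
      intro hzb
      have := congrArg orderOf hzb
      rw [hoz, hob] at this
      exact pg_arith1 hp2 (by omega) (by omega) this
    · -- z ≠ g*b
      intro hzgb
      apply hgz
      have hgeq : g = z * b⁻¹ := by rw [hzgb]; group
      rw [hgeq]
      exact mul_mem (Subgroup.mem_zpowers z) (inv_mem hb_z)
    · -- z ≠ a
      intro hza'
      have := congrArg orderOf hza'
      rw [hoz, hoa] at this
      exact pg_arith2 hq2 (by omega) (by omega) this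
    · -- b ≠ g*b
      intro hbgb
      exact hg1 (right_eq_mul.mp hbgb)
    · -- b ≠ a
      intro hba
      have := congrArg orderOf hba
      rw [hob, hoa] at this
      exact hpq this.symm
    · -- g*b ≠ a
      intro hgba
      apply hgz
      have hgeq : g = a * b⁻¹ := by rw [← hgba]; group
      rw [hgeq]
      exact mul_mem ha_z (inv_mem hb_z)
    · -- pgAdj z b
      refine ⟨?_, Or.inr hb_z⟩
      intro hzb
      have := congrArg orderOf hzb
      rw [hoz, hob] at this
      exact pg_arith1 hp2 (by omega) (by omega) this
    · -- pgAdj b (g*b)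
      exact ⟨fun hbgb => hg1 (right_eq_mul.mp hbgb), Or.inl hb_gb⟩
    · -- pgAdj (g*b) a
      refine ⟨?_, Or.inr ha_gb⟩
      intro hgba
      apply hgz
      have hgeq : g = a * b⁻¹ := by rw [← hgba]; group
      rw [hgeq]
      exact mul_mem ha_z (inv_mem hb_z)
    · -- pgAdj a z
      refine ⟨?_, Or.inl ha_z⟩
      intro haz
      have := congrArg orderOf haz
      rw [hoz, hoa] at this
      exact pg_arith2 hq2 (by omega) (by omega) this.symm
    · -- ¬ pgAdj z (g*b)
      rintro ⟨-, hor | hor⟩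
      · -- z ∈ ⟨g*b⟩
        have hc_gb : c ∈ Subgroup.zpowers (g * b) := Subgroup.zpowers_le.mpr hor hc_z
        have hdvd := orderOf_dvd_of_mem_zpowers hc_gb
        rw [hoc, hogb] at hdvd
        rcases (Nat.Prime.dvd_mul hr).mp hdvd with hd | hd
        · have : r = 1 := Nat.Coprime.eq_one_of_dvd hmr.symm hd
          omega
        · exact hqr ((Nat.prime_dvd_prime_iff_eq hr hq).mp hd).symm
      · -- g*b ∈ ⟨z⟩
        apply hgz
        have hgeq : g = (g * b) * b⁻¹ := by group
        rw [hgeq]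
        exact mul_mem hor (inv_mem hb_z)
    · -- ¬ pgAdj b a
      exact pg_not_adj_of_prime_orders hq hp (Ne.symm hpq) hob hoa
  · -- quadruple (b, z, c, b*c*g)
    set w := b * c * g with hwdef
    have hbcg : Commute (b * c) g := hbg.mul_left hcg
    have hw : w = (b * c) * g := rfl
    have hcoqr_m : Nat.Coprime (q * r) m := hco.symm
    have how : orderOf w = q * r * m := by
      rw [hw, hbcg.orderOf_mul_eq_mul_orderOf_of_coprime (by rw [hobc, ← hmdef]; exact hcoqr_m),
        hobc, ← hmdef]
    have hbc_w : b * c ∈ Subgroup.zpowers w :=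
      pg_mem_mul_left hbcg (by rw [hobc, ← hmdef]; exact hcoqr_m)
    have hbc_le_w : Subgroup.zpowers (b * c) ≤ Subgroup.zpowers w :=
      Subgroup.zpowers_le.mpr hbc_w
    have hb_w : b ∈ Subgroup.zpowers w :=
      hbc_le_w (pg_mem_mul_left hbc (by rw [hob, hoc]; exact hqr'))
    have hc_w : c ∈ Subgroup.zpowers w :=
      hbc_le_w (pg_mem_mul_right hbc (by rw [hob, hoc]; exact hqr'))
    have hwz : w ∉ Subgroup.zpowers z := by
      intro hmemw
      apply hgz
      have hgeq : g = (b * c)⁻¹ * w := by rw [hw]; group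
      rw [hgeq]
      exact mul_mem (inv_mem hbc_z) hmemw
    have hneqzw : z ≠ w := fun hzw => hwz (hzw ▸ Subgroup.mem_zpowers z)
    refine ⟨b, z, c, w, ?_, ?_, ?_, ?_, ?_, ?_, ?_, ?_, ?_, ?_, ?_, ?_⟩
    · -- b ≠ z
      intro hbz
      have := congrArg orderOf hbz
      rw [hoz, hob] at this
      exact pg_arith1 hp2 (by omega) (by omega) this.symm
    · -- b ≠ c
      intro hbcne
      have := congrArg orderOf hbcne
      rw [hob, hoc] at this
      exact hqr this
    · -- b ≠ w
      intro hbw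
      have := congrArg orderOf hbw
      rw [hob, how] at this
      exact pg_arith4 hr2 hm (by omega) this
    · -- z ≠ c
      intro hzc
      have := congrArg orderOf hzc
      rw [hoz, hoc] at this
      exact pg_arith3 hp2 (by omega) (by omega) this
    · -- z ≠ w
      exact hneqzw
    · -- c ≠ w
      intro hcw
      have := congrArg orderOf hcw
      rw [hoc, how] at this
      exact pg_arith5 hq2 hm (by omega) this
    · -- pgAdj b z
      refine ⟨?_, Or.inl hb_z⟩
      intro hbz
      have := congrArg orderOf hbz
      rw [hoz, hob] at this
      exact pg_arith1 hp2 (by omega) (by omega) this.symm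
    · -- pgAdj z c
      refine ⟨?_, Or.inr hc_z⟩
      intro hzc
      have := congrArg orderOf hzc
      rw [hoz, hoc] at this
      exact pg_arith3 hp2 (by omega) (by omega) this
    · -- pgAdj c w
      refine ⟨?_, Or.inl hc_w⟩
      intro hcw
      have := congrArg orderOf hcw
      rw [hoc, how] at this
      exact pg_arith5 hq2 hm (by omega) this
    · -- pgAdj w b
      refine ⟨?_, Or.inr hb_w⟩
      intro hwb
      have := congrArg orderOf hwb.symm
      rw [hob, how] at this
      exact pg_arith4 hr2 hm (by omega) this
    · -- ¬ pgAdj b c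
      exact pg_not_adj_of_prime_orders hq hr hqr hob hoc
    · -- ¬ pgAdj z w
      rintro ⟨-, hor | hor⟩
      · -- z ∈ ⟨w⟩
        have ha_w : a ∈ Subgroup.zpowers w := Subgroup.zpowers_le.mpr hor ha_z
        have ha_wqr : a ∈ Subgroup.zpowers (w ^ (q * r)) :=
          pg_mem_zpowers_pow (q * r) ha_w (by rw [hoa]; exact hpqr.symm)
        have hwqr : w ^ (q * r) = g ^ (q * r) := by
          rw [hw, hbcg.mul_pow, ← hobc, pow_orderOf_eq_one, one_mul]
        rw [hwqr] at ha_wqr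
        have : Subgroup.zpowers (g ^ (q * r)) ≤ Subgroup.zpowers g :=
          Subgroup.zpowers_le.mpr ⟨((q * r : ℕ) : ℤ), by exact zpow_natCast g (q * r)⟩
        exact hag' (this ha_wqr)
      · -- w ∈ ⟨z⟩
        exact hwz hor

end Aux

theorem cyclic_pqr_of_three_primes_dvd_center {G : Type*} [Group G] [Finite G]
    (h : pgC4Free G) (p q r : ℕ) (hp : p.Prime) (hq : q.Prime) (hr : r.Prime)
    (hpq : p ≠ q) (hpr : p ≠ r) (hqr : q ≠ r)
    (hpZ : p ∣ Nat.card (Subgroup.center G))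
    (hqZ : q ∣ Nat.card (Subgroup.center G))
    (hrZ : r ∣ Nat.card (Subgroup.center G)) :
    IsCyclic G ∧ Nat.card G = p * q * r := by
  have hfp : Fact p.Prime := ⟨hp⟩
  have hfq : Fact q.Prime := ⟨hq⟩
  have hfr : Fact r.Prime := ⟨hr⟩
  obtain ⟨a₀, hoa₀⟩ := exists_prime_orderOf_dvd_card' (G := Subgroup.center G) p hpZ
  obtain ⟨b₀, hob₀⟩ := exists_prime_orderOf_dvd_card' (G := Subgroup.center G) q hqZ
  obtain ⟨c₀, hoc₀⟩ := exists_prime_orderOf_dvd_card' (G := Subgroup.center G) r hrZ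
  set a : G := (a₀ : G) with hadef
  set b : G := (b₀ : G) with hbdef
  set c : G := (c₀ : G) with hcdef
  have hoa : orderOf a = p := by rw [hadef, Subgroup.orderOf_coe, hoa₀]
  have hob : orderOf b = q := by rw [hbdef, Subgroup.orderOf_coe, hob₀]
  have hoc : orderOf c = r := by rw [hcdef, Subgroup.orderOf_coe, hoc₀]
  have hcomm_a : ∀ x : G, Commute a x := fun x =>
    ((Subgroup.mem_center_iff.mp a₀.2 x).symm : a * x = x * a)
  have hcomm_b : ∀ x : G, Commute b x := fun x =>
    ((Subgroup.mem_center_iff.mp b₀.2 x).symm : b * x = x * b)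
  have hcomm_c : ∀ x : G, Commute c x := fun x =>
    ((Subgroup.mem_center_iff.mp c₀.2 x).symm : c * x = x * c)
  have hab : Commute a b := hcomm_a b
  have hac : Commute a c := hcomm_a c
  have hbc : Commute b c := hcomm_b c
  set z : G := a * b * c with hzdef
  have hqr' : Nat.Coprime q r := (Nat.coprime_primes hq hr).mpr hqr
  have hpq' : Nat.Coprime p q := (Nat.coprime_primes hp hq).mpr hpq
  have hpr' : Nat.Coprime p r := (Nat.coprime_primes hp hr).mpr hpr
  have hobc : orderOf (b * c) = q * r := by
    rw [hbc.orderOf_mul_eq_mul_orderOf_of_coprime (by rw [hob, hoc]; exact hqr'), hob, hoc]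
  have hoz : orderOf z = p * (q * r) := by
    rw [hzdef, mul_assoc,
      (hab.mul_right hac).orderOf_mul_eq_mul_orderOf_of_coprime
        (by rw [hoa, hobc]; exact Nat.Coprime.mul_right hpq' hpr'),
      hoa, hobc]
  -- main claim: every element lies in ⟨z⟩
  have main : ∀ n : ℕ, ∀ g : G, orderOf g = n → g ∈ Subgroup.zpowers z := by
    intro n
    induction n using Nat.strong_induction_on with
    | _ n ih =>
      intro g hg
      by_contra hgmem
      have hn0 : n ≠ 0 := by
        rw [← hg]; exact (orderOf_pos g).ne'
      by_cases hn1 : n = 1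
      · exact hgmem (by rw [orderOf_eq_one_iff.mp (hg.trans hn1)]; exact Subgroup.one_mem _)
      set s := n.minFac with hsdef
      have hs : s.Prime := Nat.minFac_prime hn1
      set e := n.factorization s with hedef
      set m' := n / s ^ e with hm'def
      have hfact : s ^ e * m' = n := Nat.ordProj_mul_ordCompl_eq_self n s
      have he1 : 0 < e := hs.factorization_pos_of_dvd hn0 (Nat.minFac_dvd n)
      have hse1 : 1 < s ^ e := Nat.one_lt_pow he1.ne' hs.one_lt
      by_cases hm1 : m' = 1
      · -- n is a prime power s^e; apply the key lemma
        have hncop : ∀ t : ℕ, t.Prime → s ≠ t → Nat.Coprime n t := by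
          intro t ht hst
          rw [← hfact, hm1, mul_one]
          exact Nat.Coprime.pow_left _ ((Nat.coprime_primes hs ht).mpr hst)
        by_cases hsq : s = q
        · -- s ≠ p, s ≠ r : coprime to p * r
          have hsp : s ≠ p := fun hh => hpq (hh.symm.trans hsq)
          have hsr : s ≠ r := fun hh => hqr (hsq.symm.trans hh)
          have hco : Nat.Coprime (orderOf g) (p * r) := by
            rw [hg]; exact Nat.Coprime.mul_right (hncop p hp hsp) (hncop r hr hsr)
          have hz2 : b * a * c = a * b * c := by rw [hab.eq]
          exact h (pg_key q p r hq hp hr (Ne.symm hpq) hqr hpr b a c g hob hoa hoc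
            hab.symm hbc hac (hcomm_a g) (hcomm_c g) hco (by rw [hz2]; exact hgmem))
        · by_cases hsr : s = r
          · have hsp : s ≠ p := fun hh => hpr (hh.symm.trans hsr)
            have hsq' : s ≠ q := hsq
            have hco : Nat.Coprime (orderOf g) (p * q) := by
              rw [hg]; exact Nat.Coprime.mul_right (hncop p hp hsp) (hncop q hq hsq')
            have hz2 : c * a * b = a * b * c := by
              rw [← hac.eq, mul_assoc, ← hbc.eq, ← mul_assoc]
            exact h (pg_key r p q hr hp hq (Ne.symm hpr) (Ne.symm hqr) hpq c a b g hoc hoa hob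
              hac.symm hbc.symm hab (hcomm_a g) (hcomm_b g) hco (by rw [hz2]; exact hgmem))
          · have hco : Nat.Coprime (orderOf g) (q * r) := by
              rw [hg]; exact Nat.Coprime.mul_right (hncop q hq hsq) (hncop r hr hsr)
            exact h (pg_key p q r hp hq hr hpq hpr hqr a b c g hoa hob hoc
              hab hac hbc (hcomm_b g) (hcomm_c g) hco hgmem)
      · -- n splits as s^e * m' with both factors > 1; use induction
        have hm'0 : m' ≠ 0 := by
          intro hh; rw [hh, mul_zero] at hfact; exact hn0 hfact.symm
        have hm'2 : 2 ≤ m' := (Nat.two_le_iff m').mpr ⟨hm'0, hm1⟩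
        have hm'pos : 0 < m' := Nat.pos_of_ne_zero hm'0
        have hnpos : 0 < n := Nat.pos_of_ne_zero hn0
        have hse_dvd : s ^ e ∣ n := Nat.ordProj_dvd n s
        have hm'_dvd : m' ∣ n := Nat.ordCompl_dvd n s
        have hm'lt : m' < n := Nat.div_lt_self hnpos hse1
        have hsepos : 0 < s ^ e := pow_pos hs.pos e
        have hselt : s ^ e < n := by
          calc s ^ e < s ^ e * m' :=
                (lt_mul_iff_one_lt_right hsepos).mpr (Nat.lt_of_lt_of_le one_lt_two hm'2)
            _ = n := hfact
        have h1 : orderOf (g ^ (s ^ e)) = m' := by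
          rw [orderOf_pow, hg, Nat.gcd_eq_right hse_dvd]
        have h2 : orderOf (g ^ m') = s ^ e := by
          rw [orderOf_pow, hg, Nat.gcd_eq_right hm'_dvd]
          exact Nat.div_eq_of_eq_mul_left hm'pos hfact.symm
        have hgm1 : g ^ (s ^ e) ∈ Subgroup.zpowers z := ih m' hm'lt _ h1
        have hgm2 : g ^ m' ∈ Subgroup.zpowers z := ih (s ^ e) hselt _ h2
        have hcop : Nat.Coprime (s ^ e) m' :=
          Nat.Coprime.pow_left e (Nat.coprime_ordCompl hs hn0)
        obtain ⟨u, v, huv⟩ := Nat.isCoprime_iff_coprime.mpr hcop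
        apply hgmem
        have hdec : g = (g ^ (s ^ e)) ^ u * (g ^ m') ^ v := by
          rw [← zpow_natCast g (s ^ e), ← zpow_natCast g m', ← zpow_mul, ← zpow_mul,
            ← zpow_add, show ((s ^ e : ℕ) : ℤ) * u + (m' : ℤ) * v = 1 by linarith,
            zpow_one]
        rw [hdec]
        exact mul_mem (Subgroup.zpow_mem _ hgm1 u) (Subgroup.zpow_mem _ hgm2 v)
  have htop : Subgroup.zpowers z = ⊤ := by
    rw [eq_top_iff]
    intro g _
    exact main (orderOf g) g rfl
  constructor
  · exact ⟨⟨z, fun x => main (orderOf x) x rfl⟩⟩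
  · calc Nat.card G = Nat.card (⊤ : Subgroup G) := Subgroup.card_top.symm
      _ = Nat.card (Subgroup.zpowers z) := by rw [htop]
      _ = orderOf z := Nat.card_zpowers z
      _ = p * q * r := by rw [hoz, mul_assoc]
end

section
/- Let G be a finite group whose power graph P(G) is C_4-free, and suppose the center Z(G) contains an element of order p^2 and an element of order q, where p and q are distinct primes. Then the only primes dividing |G| are p and q, the Sylow p-subgroup P of G is cyclic and normal in G, every Sylow q-subgroup of G has exponent q, and the index [G : C_G(P)] is either 1 or q. -/
open Subgroup

namespace PGAux

variable {G : Type*} [Group G] [Finite G]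

lemma ne_one_of_orderOf_ne_one {a : G} {n : ℕ} (h : orderOf a = n) (hn : n ≠ 1) : a ≠ 1 := by
  rintro rfl; rw [orderOf_one] at h; exact hn h.symm

lemma exists_natpow_of_mem_zpowers {g x : G} (h : x ∈ zpowers g) : ∃ n : ℕ, g ^ n = x := by
  have := mem_powers_iff_mem_zpowers.mpr h
  exact Submonoid.mem_powers_iff x g |>.mp this

lemma mem_zpowers_of_natpow {g x : G} {n : ℕ} (h : g ^ n = x) : x ∈ zpowers g :=
  ⟨(n : ℤ), by simpa using h⟩

/-- CRT-based membership: a power-product of two commuting elements of coprime order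
is a power of their product. -/
lemma crt_mem {a b : G} (hab : Commute a b) (hco : Nat.Coprime (orderOf a) (orderOf b))
    (i j : ℕ) : a ^ i * b ^ j ∈ zpowers (a * b) := by
  obtain ⟨k, hk1, hk2⟩ := Nat.chineseRemainder hco i j
  refine mem_zpowers_of_natpow (n := k) ?_
  rw [hab.mul_pow, pow_eq_pow_iff_modEq.mpr hk1, pow_eq_pow_iff_modEq.mpr hk2]

lemma mem_zpowers_mul_left {a b : G} (hab : Commute a b)
    (hco : Nat.Coprime (orderOf a) (orderOf b)) : a ∈ zpowers (a * b) := by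
  simpa using crt_mem hab hco 1 0

lemma mem_zpowers_mul_right {a b : G} (hab : Commute a b)
    (hco : Nat.Coprime (orderOf a) (orderOf b)) : b ∈ zpowers (a * b) := by
  simpa using crt_mem hab hco 0 1

lemma pow_mul3 {a b c : G} (hab : Commute a b) (hac : Commute a c) (hbc : Commute b c) (k : ℕ) :
    (a * b * c) ^ k = a ^ k * b ^ k * c ^ k := by
  rw [(hac.mul_left hbc).mul_pow, hab.mul_pow]

/-- projection of an equation between commuting products to one factor -/
lemma pow_proj {x w w' : G} {i k M : ℕ} (hxw : Commute x w) (hxw' : Commute x w')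
    (h : x ^ i * w = x ^ k * w') (hw : w ^ M = 1) (hw' : w' ^ M = 1) :
    x ^ (i * M) = x ^ (k * M) := by
  have h2 := congrArg (· ^ M) h
  simp only [(hxw.pow_left i).mul_pow, (hxw'.pow_left k).mul_pow, hw, hw', mul_one] at h2
  rwa [← pow_mul, ← pow_mul] at h2

/-- L5: inside a cyclic group, an element killed by `m` is a power of an element of order `m`. -/
lemma mem_zpowers_of_orderOf_eq {g x y : G} (hx : x ∈ zpowers g) (hy : y ∈ zpowers g)
    {m : ℕ} (hym : orderOf y = m) (hxm : x ^ m = 1) : x ∈ zpowers y := by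
  obtain ⟨k, hk⟩ := exists_natpow_of_mem_zpowers hx
  obtain ⟨l, hl⟩ := exists_natpow_of_mem_zpowers hy
  have hn0 : orderOf g ≠ 0 := (orderOf_pos g).ne'
  have hm0 : m ≠ 0 := hym ▸ (orderOf_pos y).ne'
  set n := orderOf g with hn
  have hmn : m ∣ n := hym ▸ orderOf_dvd_of_mem_zpowers hy
  have hnkm : n ∣ k * m := orderOf_dvd_iff_pow_eq_one.mpr (by rw [pow_mul, hk, hxm])
  set d := n / m with hd
  have hdm : d * m = n := Nat.div_mul_cancel hmn
  have hdk : d ∣ k := by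
    have : d * m ∣ k * m := hdm ▸ hnkm
    exact (Nat.mul_dvd_mul_iff_right (Nat.pos_of_ne_zero hm0)).mp this
  -- gcd n l = d
  have hgl : orderOf (g ^ l) = n / Nat.gcd n l := orderOf_pow g
  rw [hl, hym] at hgl
  have hgcd : Nat.gcd n l = d := by
    have h1 : Nat.gcd n l ∣ n := Nat.gcd_dvd_left n l
    have h2 : Nat.gcd n l * m = n := by
      rw [hgl]; exact Nat.mul_div_cancel' h1
    have h3 := h2.trans hdm.symm
    exact Nat.eq_of_mul_eq_mul_right (Nat.pos_of_ne_zero hm0) h3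
  -- bezout: g ^ d ∈ zpowers y
  have hgd : g ^ (d : ℤ) ∈ zpowers y := by
    have hb := Int.gcd_eq_gcd_ab (n : ℤ) (l : ℤ)
    have hgint : Int.gcd (n : ℤ) (l : ℤ) = d := by
      rw [Int.gcd_natCast_natCast, hgcd]
    rw [hgint] at hb
    rw [hb, zpow_add, zpow_mul, zpow_mul, zpow_natCast, zpow_natCast, pow_orderOf_eq_one,
      one_zpow, one_mul, hl]
    exact zpow_mem (mem_zpowers y) _
  obtain ⟨k', rfl⟩ := hdk
  rw [← hk, pow_mul]
  have : g ^ d ∈ zpowers y := by simpa using hgd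
  exact pow_mem this k'

/-- L6': coprime power membership in a subgroup -/
lemma mem_of_pow_mem_coprime {t : G} {n : ℕ} (hco : Nat.Coprime (orderOf t) n)
    {H : Subgroup G} (h : t ^ n ∈ H) : t ∈ H := by
  set r := orderOf t with hr
  have hb := Int.gcd_eq_gcd_ab (r : ℤ) (n : ℤ)
  have hgint : (Int.gcd (r : ℤ) (n : ℤ) : ℤ) = 1 := by
    rw [Int.gcd_natCast_natCast, hco]; norm_num
  rw [hgint] at hb
  have : t = (t ^ (n : ℤ)) ^ ((r : ℤ).gcdB (n : ℤ)) := by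
    conv_lhs => rw [← zpow_one t,
      show (1:ℤ) = (r : ℤ) * (r:ℤ).gcdA (n:ℤ) + (n:ℤ) * (r:ℤ).gcdB (n:ℤ) from hb]
    rw [zpow_add, zpow_mul, zpow_mul, zpow_natCast, pow_orderOf_eq_one, one_zpow, one_mul]
  rw [this]
  exact zpow_mem (by rwa [zpow_natCast]) _

lemma mem_of_pow_mem_prime {t : G} {r n : ℕ} (hr : r.Prime) (ht : orderOf t = r)
    (hn : ¬ r ∣ n) {H : Subgroup G} (h : t ^ n ∈ H) : t ∈ H :=
  mem_of_pow_mem_coprime (by rw [ht]; exact (Nat.Prime.coprime_iff_not_dvd hr).mpr hn) h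

lemma orderOf_pow_prime {a : G} {r : ℕ} (hr : r.Prime) (ha : orderOf a = r ^ 2) :
    orderOf (a ^ r) = r := by
  have h1 : (a ^ r) ^ r = 1 := by
    rw [← pow_mul, ← sq, ← ha, pow_orderOf_eq_one]
  have h2 : a ^ r ≠ 1 := by
    intro he
    have : orderOf a ∣ r := orderOf_dvd_iff_pow_eq_one.mpr he
    rw [ha] at this
    have hle := Nat.le_of_dvd hr.pos this
    nlinarith [hr.two_le]
  have := orderOf_dvd_iff_pow_eq_one.mpr h1
  rcases (Nat.Prime.eq_one_or_self_of_dvd hr _ this) with h' | h'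
  · exact absurd (orderOf_eq_one_iff.mp h') h2
  · exact h'

lemma ne_of_orderOf_ne {x y : G} (h : orderOf x ≠ orderOf y) : x ≠ y := fun he => h (he ▸ rfl)

lemma orderOf_conj' (g n : G) : orderOf (g * n * g⁻¹) = orderOf n := by
  have := orderOf_injective (MulAut.conj g).toMonoidHom (MulEquiv.injective _) n
  simpa using this


lemma pow_eq_pow_of_modEq {x : G} {k i n : ℕ} (hn : orderOf x = n) (h : k ≡ i [MOD n]) :
    x ^ k = x ^ i := pow_eq_pow_iff_modEq.mpr (hn ▸ h)

lemma pow_eq_one_of_modEq_zero {x : G} {k n : ℕ} (hn : orderOf x = n) (h : k ≡ 0 [MOD n]) :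
    x ^ k = 1 := by simpa using pow_eq_pow_of_modEq hn h

lemma modEq_of_pow_eq_pow {x : G} {k i n : ℕ} (hn : orderOf x = n) (h : x ^ k = x ^ i) :
    k ≡ i [MOD n] := hn ▸ pow_eq_pow_iff_modEq.mp h

lemma prime_ne_dvd {r s : ℕ} (hr : r.Prime) (hs : s.Prime) (hrs : r ≠ s) : ¬ s ∣ r :=
  fun hd => hrs ((Nat.prime_dvd_prime_iff_eq hs hr).mp hd).symm

lemma prime_ne_dvd_sq {r s : ℕ} (hr : r.Prime) (hs : s.Prime) (hrs : r ≠ s) : ¬ s ∣ r ^ 2 :=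
  fun hd => hrs ((Nat.prime_dvd_prime_iff_eq hs hr).mp (hs.dvd_of_dvd_pow hd)).symm

/-- Configuration KA : an element of prime order `r` outside a cyclic group of order `r²`,
together with a commuting element of prime order `s ≠ r`, yields an induced C4. -/
lemma KA {r s : ℕ} (hr : r.Prime) (hs : s.Prime) (hrs : r ≠ s)
    {t a c : G} (hta : Commute t a) (htc : Commute t c) (hac : Commute a c)
    (hot : orderOf t = r) (hoa : orderOf a = r ^ 2) (hoc : orderOf c = s)
    (htza : t ∉ zpowers a) : pgHasInducedC4 G := by
  have hr1 := hr.one_lt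
  have hs1 := hs.one_lt
  have hco : Nat.Coprime (orderOf a) (orderOf c) := by
    rw [hoa, hoc]; exact ((Nat.coprime_primes hr hs).mpr hrs).pow_left 2
  have hcoar : Nat.Coprime (r ^ 2) s := by rw [← hoa, ← hoc]; exact hco
  have ha1 : a ≠ 1 := ne_one_of_orderOf_ne_one hoa (by nlinarith)
  have ht1 : t ≠ 1 := ne_one_of_orderOf_ne_one hot (by omega)
  have hoar : orderOf (a ^ r) = r := orderOf_pow_prime hr hoa
  have hmemc : c ∈ zpowers (a * c) := mem_zpowers_mul_right hac hco
  have hmema : a ∈ zpowers (a * c) := mem_zpowers_mul_left hac hco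
  have htr2 : t ^ (r ^ 2) = 1 := by
    rw [sq, pow_mul, ← hot, pow_orderOf_eq_one, one_pow]
  have har3 : a ^ (r ^ 3) = 1 := by
    rw [show r ^ 3 = r ^ 2 * r by ring, pow_mul, ← hoa, pow_orderOf_eq_one, one_pow]
  have htr3 : t ^ (r ^ 3) = 1 := by
    rw [show r ^ 3 = r * r ^ 2 by ring, pow_mul, ← hot, pow_orderOf_eq_one, one_pow]
  have harz : (a ^ r) ^ (r ^ 2) = 1 := by
    rw [← pow_mul, show r * r ^ 2 = r ^ 2 * r by ring, pow_mul, ← hoa, pow_orderOf_eq_one,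
      one_pow]
  -- the two "hard" inequalities / nonedges, proven once
  have hne_ct : c ≠ t * a * c := by
    intro he
    have h1 : t * a = 1 := by rw [eq_comm, mul_eq_right] at he; exact he
    have h2 : t = a⁻¹ := by rw [eq_inv_iff_mul_eq_one]; exact h1
    exact htza (h2 ▸ inv_mem (mem_zpowers a))
  have hne_ac_ar : a * c ≠ a ^ r := by
    intro he
    have hcz : c ∈ zpowers a := by
      have h1 : c = a⁻¹ * a ^ r := by rw [← he]; group
      rw [h1]
      exact mul_mem (inv_mem (mem_zpowers a)) (pow_mem (mem_zpowers a) r)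
    have := orderOf_dvd_of_mem_zpowers hcz
    rw [hoc, hoa] at this
    exact prime_ne_dvd_sq hr hs hrs this
  have hne_ar_tac : a ^ r ≠ t * a * c := by
    intro he
    have h2 : (a ^ r) ^ (r ^ 2) = c ^ (r ^ 2) := by
      rw [he, pow_mul3 hta htc hac, htr2, one_mul, ← hoa, pow_orderOf_eq_one, one_mul]
    rw [harz] at h2
    have := orderOf_dvd_iff_pow_eq_one.mpr h2.symm
    rw [hoc] at this
    exact prime_ne_dvd_sq hr hs hrs this
  refine ⟨c, a * c, a ^ r, t * a * c, ?_, ?_, ?_, ?_, ?_, ?_, ?_, ?_, ?_, ?_, ?_, ?_⟩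
  · intro he; exact ha1 (by rwa [eq_comm, mul_eq_right] at he)
  · exact ne_of_orderOf_ne (by rw [hoc, hoar]; omega)
  · exact hne_ct
  · exact hne_ac_ar
  · intro he
    have h2 : t * (a * c) = 1 * (a * c) := by rw [one_mul, ← mul_assoc, ← he]
    exact ht1 (mul_right_cancel h2)
  · exact hne_ar_tac
  · exact ⟨fun he => ha1 (by rwa [eq_comm, mul_eq_right] at he), Or.inl hmemc⟩
  · exact ⟨hne_ac_ar, Or.inr (pow_mem hmema r)⟩
  · refine ⟨hne_ar_tac, Or.inl ?_⟩
    obtain ⟨k, hk1, hk2⟩ := Nat.chineseRemainder hcoar r 0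
    refine mem_zpowers_of_natpow (n := k) ?_
    rw [pow_mul3 hta htc hac]
    have hkr : k ≡ 0 [MOD r] :=
      (Nat.ModEq.of_dvd (dvd_pow_self r two_ne_zero) hk1).trans
        ((Nat.modEq_zero_iff_dvd).mpr dvd_rfl)
    rw [pow_eq_one_of_modEq_zero hot hkr, pow_eq_pow_of_modEq hoa hk1,
      pow_eq_one_of_modEq_zero hoc hk2, one_mul, mul_one]
  · refine ⟨fun he => hne_ct he.symm, Or.inr ?_⟩
    obtain ⟨k, hk1, hk2⟩ := Nat.chineseRemainder hcoar 0 1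
    refine mem_zpowers_of_natpow (n := k) ?_
    rw [pow_mul3 hta htc hac]
    have hkr : k ≡ 0 [MOD r] := Nat.ModEq.of_dvd (dvd_pow_self r two_ne_zero) hk1
    rw [pow_eq_one_of_modEq_zero hot hkr, pow_eq_one_of_modEq_zero hoa hk1,
      show c ^ k = c ^ 1 from pow_eq_pow_of_modEq hoc hk2, pow_one, one_mul, one_mul]
  · rintro ⟨hne, hmem | hmem⟩
    · have := orderOf_dvd_of_mem_zpowers hmem
      rw [hoc, hoar] at this
      exact prime_ne_dvd hr hs hrs this
    · have := orderOf_dvd_of_mem_zpowers hmem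
      rw [hoar, hoc] at this
      exact prime_ne_dvd hs hr hrs.symm this
  · rintro ⟨hne, hmem | hmem⟩
    · -- a*c ∈ zpowers (t*a*c)
      obtain ⟨n, hn⟩ := exists_natpow_of_mem_zpowers hmem
      rw [pow_mul3 hta htc hac] at hn
      have hxw : Commute c (t ^ n * a ^ n) :=
        (htc.symm.pow_right n).mul_right (hac.symm.pow_right n)
      have e : c ^ n * (t ^ n * a ^ n) = c ^ 1 * a := by
        rw [(hxw.pow_left n).eq, hn, hac.eq, pow_one]
      have hw : (t ^ n * a ^ n) ^ (r ^ 3) = 1 := by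
        rw [(hta.pow_pow n n).mul_pow, ← pow_mul, ← pow_mul, mul_comm n (r ^ 3), pow_mul,
          pow_mul, htr3, har3, one_pow, one_mul]
      have hproj : c ^ (n * r ^ 3) = c ^ (1 * r ^ 3) := pow_proj hxw hac.symm e hw har3
      have hmod : n * r ^ 3 ≡ 1 * r ^ 3 [MOD s] := modEq_of_pow_eq_pow hoc hproj
      have hgcds : Nat.gcd s (r ^ 3) = 1 :=
        ((Nat.coprime_primes hs hr).mpr hrs.symm).pow_right 3
      have hn1 : n ≡ 1 [MOD s] := Nat.ModEq.cancel_right_of_coprime hgcds hmod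
      have hcn : c ^ n = c := by
        rw [show c ^ n = c ^ 1 from pow_eq_pow_of_modEq hoc hn1, pow_one]
      rw [hcn] at hn
      have h2 : t ^ n * a ^ n = a := mul_right_cancel hn
      have h3 : t ^ n = a * (a ^ n)⁻¹ := eq_mul_inv_of_mul_eq h2
      have h4 : t ^ n ∈ zpowers a :=
        h3 ▸ mul_mem (mem_zpowers a) (inv_mem (pow_mem (mem_zpowers a) n))
      by_cases hdn : r ∣ n
      · have ht0 : t ^ n = 1 := orderOf_dvd_iff_pow_eq_one.mp (hot ▸ hdn)
        rw [ht0, eq_comm, mul_inv_eq_one] at h3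
        have hmod2 : n ≡ 1 [MOD r ^ 2] :=
          modEq_of_pow_eq_pow hoa (by rw [pow_one]; exact h3.symm)
        have hmr : n ≡ 1 [MOD r] := Nat.ModEq.of_dvd (dvd_pow_self r two_ne_zero) hmod2
        have hzr : n ≡ 0 [MOD r] := (Nat.modEq_zero_iff_dvd).mpr hdn
        have h5 : (1 : ℕ) ≡ 0 [MOD r] := hmr.symm.trans hzr
        have := Nat.dvd_one.mp ((Nat.modEq_zero_iff_dvd).mp h5)
        omega
      · exact htza (mem_of_pow_mem_prime hr hot hdn h4)
    · -- t*a*c ∈ zpowers (a*c)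
      have ht2 : t ∈ zpowers (a * c) := by
        have he : t = (t * a * c) * (a * c)⁻¹ := by group
        rw [he]
        exact mul_mem hmem (inv_mem (mem_zpowers _))
      exact htza (mem_zpowers_of_orderOf_eq ht2 hmema hoa htr2)

/-- Configuration KB : an element of a third prime order `u`, commuting with elements of
order `r²` and `s` (r, s primes), yields an induced C4. -/
lemma KB {r s u : ℕ} (hr : r.Prime) (hs : s.Prime) (hu : u.Prime)
    (hrs : r ≠ s) (hur : u ≠ r) (hus : u ≠ s)
    {t a c : G} (hta : Commute t a) (htc : Commute t c) (hac : Commute a c)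
    (hot : orderOf t = u) (hoa : orderOf a = r ^ 2) (hoc : orderOf c = s) :
    pgHasInducedC4 G := by
  have hr1 := hr.one_lt
  have hs1 := hs.one_lt
  have hu1 := hu.one_lt
  have hco : Nat.Coprime (orderOf a) (orderOf c) := by
    rw [hoa, hoc]; exact ((Nat.coprime_primes hr hs).mpr hrs).pow_left 2
  have ha1 : a ≠ 1 := ne_one_of_orderOf_ne_one hoa (by nlinarith)
  have hoar : orderOf (a ^ r) = r := orderOf_pow_prime hr hoa
  have hmemc : c ∈ zpowers (a * c) := mem_zpowers_mul_right hac hco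
  have hmema : a ∈ zpowers (a * c) := mem_zpowers_mul_left hac hco
  have htar : Commute t (a ^ r) := hta.pow_right r
  have harc : Commute (a ^ r) c := hac.pow_left r
  have hcus : c ^ (u * s) = 1 := by
    rw [mul_comm, pow_mul, ← hoc, pow_orderOf_eq_one, one_pow]
  have htus : t ^ (u * s) = 1 := by
    rw [pow_mul, ← hot, pow_orderOf_eq_one, one_pow]
  have hnt_dvd : ¬ u ∣ r ^ 2 := prime_ne_dvd_sq hr hu hur.symm
  have hne_ct : c ≠ t * a ^ r * c := by
    intro he
    have h1 : t * a ^ r = 1 := by rw [eq_comm, mul_eq_right] at he; exact he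
    have h2 : t = (a ^ r)⁻¹ := by rw [eq_inv_iff_mul_eq_one]; exact h1
    have h3 : t ∈ zpowers a := h2 ▸ inv_mem (pow_mem (mem_zpowers a) r)
    exact hnt_dvd (hot ▸ hoa ▸ orderOf_dvd_of_mem_zpowers h3)
  have hne_ac_ar : a * c ≠ a ^ r := by
    intro he
    have hcz : c ∈ zpowers a := by
      have h1 : c = a⁻¹ * a ^ r := by rw [← he]; group
      rw [h1]; exact mul_mem (inv_mem (mem_zpowers a)) (pow_mem (mem_zpowers a) r)
    have := orderOf_dvd_of_mem_zpowers hcz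
    rw [hoc, hoa] at this
    exact prime_ne_dvd_sq hr hs hrs this
  have hne_ar_tarc : a ^ r ≠ t * a ^ r * c := by
    intro he
    have h1 : t * (a ^ r) * c = t * c * (a ^ r) := by
      rw [mul_assoc, harc.eq, ← mul_assoc]
    rw [h1] at he
    have h2 : (1 : G) * a ^ r = t * c * a ^ r := by rw [one_mul]; exact he
    have h3 : t * c = 1 := (mul_right_cancel h2).symm
    have h4 : t = c⁻¹ := by rw [eq_inv_iff_mul_eq_one]; exact h3
    have h5 : orderOf t = orderOf c := by rw [h4, orderOf_inv]
    rw [hot, hoc] at h5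
    exact hus h5
  refine ⟨c, a * c, a ^ r, t * a ^ r * c, ?_, ?_, ?_, ?_, ?_, ?_, ?_, ?_, ?_, ?_, ?_, ?_⟩
  · intro he; exact ha1 (by rwa [eq_comm, mul_eq_right] at he)
  · exact ne_of_orderOf_ne (by rw [hoc, hoar]; omega)
  · exact hne_ct
  · exact hne_ac_ar
  · intro he
    have h1 : a = t * a ^ r := mul_right_cancel he
    have h2 : t = a * (a ^ r)⁻¹ := eq_mul_inv_of_mul_eq h1.symm
    have h3 : t ∈ zpowers a :=
      h2 ▸ mul_mem (mem_zpowers a) (inv_mem (pow_mem (mem_zpowers a) r))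
    exact hnt_dvd (hot ▸ hoa ▸ orderOf_dvd_of_mem_zpowers h3)
  · exact hne_ar_tarc
  · exact ⟨fun he => ha1 (by rwa [eq_comm, mul_eq_right] at he), Or.inl hmemc⟩
  · exact ⟨hne_ac_ar, Or.inr (pow_mem hmema r)⟩
  · refine ⟨hne_ar_tarc, Or.inl ?_⟩
    have hcop : Nat.Coprime r (u * s) :=
      Nat.Coprime.mul_right ((Nat.coprime_primes hr hu).mpr hur.symm)
        ((Nat.coprime_primes hr hs).mpr hrs)
    obtain ⟨k, hk1, hk2⟩ := Nat.chineseRemainder hcop 1 0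
    refine mem_zpowers_of_natpow (n := k) ?_
    rw [pow_mul3 htar htc harc]
    have hku : k ≡ 0 [MOD u] := Nat.ModEq.of_dvd (dvd_mul_right u s) hk2
    have hks : k ≡ 0 [MOD s] := Nat.ModEq.of_dvd (dvd_mul_left s u) hk2
    rw [pow_eq_one_of_modEq_zero hot hku, pow_eq_one_of_modEq_zero hoc hks,
      show (a ^ r) ^ k = (a ^ r) ^ 1 from pow_eq_pow_of_modEq hoar hk1, pow_one, one_mul,
      mul_one]
  · refine ⟨fun he => hne_ct he.symm, Or.inr ?_⟩
    have hcop : Nat.Coprime (u * r) s :=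
      Nat.Coprime.mul ((Nat.coprime_primes hu hs).mpr hus)
        ((Nat.coprime_primes hr hs).mpr hrs)
    obtain ⟨k, hk1, hk2⟩ := Nat.chineseRemainder hcop 0 1
    refine mem_zpowers_of_natpow (n := k) ?_
    rw [pow_mul3 htar htc harc]
    have hku : k ≡ 0 [MOD u] := Nat.ModEq.of_dvd (dvd_mul_right u r) hk1
    have hkr : k ≡ 0 [MOD r] := Nat.ModEq.of_dvd (dvd_mul_left r u) hk1
    rw [pow_eq_one_of_modEq_zero hot hku, pow_eq_one_of_modEq_zero hoar hkr,
      show c ^ k = c ^ 1 from pow_eq_pow_of_modEq hoc hk2, pow_one, one_mul, one_mul]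
  · rintro ⟨hne, hmem | hmem⟩
    · have := orderOf_dvd_of_mem_zpowers hmem
      rw [hoc, hoar] at this
      exact prime_ne_dvd hr hs hrs this
    · have := orderOf_dvd_of_mem_zpowers hmem
      rw [hoar, hoc] at this
      exact prime_ne_dvd hs hr hrs.symm this
  · rintro ⟨hne, hmem | hmem⟩
    · -- a * c ∈ zpowers (t * a^r * c)
      obtain ⟨n, hn⟩ := exists_natpow_of_mem_zpowers hmem
      rw [pow_mul3 htar htc harc] at hn
      have h1 : t ^ n * (a ^ r) ^ n * c ^ n = a ^ (r * n) * (t ^ n * c ^ n) := by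
        rw [(htar.pow_pow n n).eq, mul_assoc, ← pow_mul]
      have e : a ^ (r * n) * (t ^ n * c ^ n) = a ^ 1 * c := by
        rw [← h1, hn, pow_one]
      have hw : (t ^ n * c ^ n) ^ (u * s) = 1 := by
        have hh1 : t ^ (n * (u * s)) = 1 :=
          orderOf_dvd_iff_pow_eq_one.mp (by rw [hot]; exact ⟨n * s, by ring⟩)
        have hh2 : c ^ (n * (u * s)) = 1 :=
          orderOf_dvd_iff_pow_eq_one.mp (by rw [hoc]; exact ⟨n * u, by ring⟩)
        rw [(htc.pow_pow n n).mul_pow, ← pow_mul, ← pow_mul, hh1, hh2, one_mul]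
      have hcom1 : Commute a (t ^ n * c ^ n) :=
        (hta.symm.pow_right n).mul_right (hac.pow_right n)
      have hproj : a ^ (r * n * (u * s)) = a ^ (1 * (u * s)) :=
        pow_proj hcom1 hac e hw hcus
      have hmod : r * n * (u * s) ≡ 1 * (u * s) [MOD r ^ 2] := modEq_of_pow_eq_pow hoa hproj
      have hgcd : Nat.gcd (r ^ 2) (u * s) = 1 :=
        Nat.Coprime.mul_right (((Nat.coprime_primes hr hu).mpr hur.symm).pow_left 2)
          (((Nat.coprime_primes hr hs).mpr hrs).pow_left 2)
      have hrn : r * n ≡ 1 [MOD r ^ 2] := Nat.ModEq.cancel_right_of_coprime hgcd hmod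
      have hmr : r * n ≡ 1 [MOD r] := Nat.ModEq.of_dvd (dvd_pow_self r two_ne_zero) hrn
      have hzr : r * n ≡ 0 [MOD r] := (Nat.modEq_zero_iff_dvd).mpr (dvd_mul_right r n)
      have h5 : (1 : ℕ) ≡ 0 [MOD r] := hmr.symm.trans hzr
      have := Nat.dvd_one.mp ((Nat.modEq_zero_iff_dvd).mp h5)
      omega
    · -- t * a^r * c ∈ zpowers (a * c)
      obtain ⟨n, hn⟩ := exists_natpow_of_mem_zpowers hmem
      rw [hac.mul_pow] at hn
      have h2 : (a ^ n * c ^ n) ^ (r ^ 2 * s) = (t * a ^ r * c) ^ (r ^ 2 * s) := by rw [hn]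
      have ha0 : (a ^ n) ^ (r ^ 2 * s) = 1 := by
        rw [← pow_mul]
        exact orderOf_dvd_iff_pow_eq_one.mp (hoa ▸ ⟨n * s, by ring⟩)
      have hc0 : c ^ (r ^ 2 * s) = 1 := by
        exact orderOf_dvd_iff_pow_eq_one.mp (hoc ▸ ⟨r ^ 2, by ring⟩)
      have hc0' : (c ^ n) ^ (r ^ 2 * s) = 1 := by
        rw [← pow_mul]
        exact orderOf_dvd_iff_pow_eq_one.mp (hoc ▸ ⟨n * r ^ 2, by ring⟩)
      have har0 : (a ^ r) ^ (r ^ 2 * s) = 1 := by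
        rw [← pow_mul]
        exact orderOf_dvd_iff_pow_eq_one.mp (hoa ▸ ⟨r * s, by ring⟩)
      rw [(hac.pow_pow n n).mul_pow, ha0, hc0', one_mul, pow_mul3 htar htc harc, har0, hc0,
        mul_one, mul_one] at h2
      have h3 : u ∣ r ^ 2 * s := hot ▸ orderOf_dvd_iff_pow_eq_one.mpr h2.symm
      rcases (Nat.Prime.dvd_mul hu).mp h3 with h4 | h4
      · exact hnt_dvd h4
      · exact prime_ne_dvd hs hu hus.symm h4

/-- Configuration KD : two commuting elements of orders `r²` and `s²` (distinct primes)
yield an induced C4. -/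
lemma KD {r s : ℕ} (hr : r.Prime) (hs : s.Prime) (hrs : r ≠ s)
    {a b : G} (hab : Commute a b) (hoa : orderOf a = r ^ 2) (hob : orderOf b = s ^ 2) :
    pgHasInducedC4 G := by
  have hr1 := hr.one_lt
  have hs1 := hs.one_lt
  have ha1 : a ≠ 1 := ne_one_of_orderOf_ne_one hoa (by nlinarith)
  have hb1 : b ≠ 1 := ne_one_of_orderOf_ne_one hob (by nlinarith)
  have hoar : orderOf (a ^ r) = r := orderOf_pow_prime hr hoa
  have hobs : orderOf (b ^ s) = s := orderOf_pow_prime hs hob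
  have hcp : Nat.Coprime r s := (Nat.coprime_primes hr hs).mpr hrs
  have ka : a ^ (r ^ 2) = 1 := hoa ▸ pow_orderOf_eq_one a
  have kb' : b ^ (s ^ 2) = 1 := hob ▸ pow_orderOf_eq_one b
  have kar : (a ^ r) ^ (r ^ 2) = 1 := by
    rw [← pow_mul]; exact orderOf_dvd_iff_pow_eq_one.mp (by rw [hoa]; exact ⟨r, by ring⟩)
  have kbs : (b ^ s) ^ (s ^ 2) = 1 := by
    rw [← pow_mul]; exact orderOf_dvd_iff_pow_eq_one.mp (by rw [hob]; exact ⟨s, by ring⟩)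
  -- memberships
  have hm1 : b ^ s ∈ zpowers (a * b ^ s) :=
    mem_zpowers_mul_right (hab.pow_right s) (by rw [hoa, hobs]; exact hcp.pow_left 2)
  have hm2 : a ∈ zpowers (a * b ^ s) :=
    mem_zpowers_mul_left (hab.pow_right s) (by rw [hoa, hobs]; exact hcp.pow_left 2)
  have hm3 : a ^ r ∈ zpowers (a ^ r * b) :=
    mem_zpowers_mul_left (hab.pow_left r) (by rw [hoar, hob]; exact hcp.pow_right 2)
  have hm4 : b ∈ zpowers (a ^ r * b) :=
    mem_zpowers_mul_right (hab.pow_left r) (by rw [hoar, hob]; exact hcp.pow_right 2)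
  -- distinctness facts
  have d1 : b ^ s ≠ a * b ^ s := by
    intro he; exact ha1 (by rwa [eq_comm, mul_eq_right] at he)
  have d3 : b ^ s ≠ a ^ r * b := by
    intro he
    have h2 : a ^ r = b ^ s * b⁻¹ := eq_mul_inv_of_mul_eq he.symm
    have h3 : a ^ r ∈ zpowers b :=
      h2 ▸ mul_mem (pow_mem (mem_zpowers b) s) (inv_mem (mem_zpowers b))
    have := orderOf_dvd_of_mem_zpowers h3
    rw [hoar, hob] at this
    exact prime_ne_dvd_sq hs hr hrs.symm this
  have d4 : a * b ^ s ≠ a ^ r := by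
    intro he
    have h2 : b ^ s = a⁻¹ * a ^ r := by rw [← he]; group
    have h3 : b ^ s ∈ zpowers a :=
      h2 ▸ mul_mem (inv_mem (mem_zpowers a)) (pow_mem (mem_zpowers a) r)
    have := orderOf_dvd_of_mem_zpowers h3
    rw [hobs, hoa] at this
    exact prime_ne_dvd_sq hr hs hrs this
  have d5 : a * b ^ s ≠ a ^ r * b := by
    intro he
    have hq1 : (a ^ r)⁻¹ * a = b * (b ^ s)⁻¹ :=
      calc (a ^ r)⁻¹ * a = (a ^ r)⁻¹ * (a * b ^ s) * (b ^ s)⁻¹ := by group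
        _ = (a ^ r)⁻¹ * (a ^ r * b) * (b ^ s)⁻¹ := by rw [he]
        _ = b * (b ^ s)⁻¹ := by group
    have hcaa : Commute ((a ^ r)⁻¹) a := (((Commute.refl a).pow_left r).inv_left)
    have hq2 : ((a ^ r)⁻¹ * a) ^ (r ^ 2) = 1 := by
      rw [hcaa.mul_pow, inv_pow, kar, ka, inv_one, one_mul]
    rw [hq1] at hq2
    have hcbb : Commute b ((b ^ s)⁻¹) := (((Commute.refl b).pow_right s).inv_right)
    rw [hcbb.mul_pow, inv_pow] at hq2
    have hq3 : b ^ (r ^ 2) = (b ^ s) ^ (r ^ 2) := by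
      rw [← mul_inv_eq_one]; exact hq2
    rw [← pow_mul] at hq3
    have hmod : r ^ 2 ≡ s * r ^ 2 [MOD s ^ 2] := modEq_of_pow_eq_pow hob hq3
    have hmod' : 1 * r ^ 2 ≡ s * r ^ 2 [MOD s ^ 2] := by rwa [one_mul]
    have hgcd : Nat.gcd (s ^ 2) (r ^ 2) = 1 := (hcp.symm.pow_left 2).pow_right 2
    have h1s : (1 : ℕ) ≡ s [MOD s ^ 2] := Nat.ModEq.cancel_right_of_coprime hgcd hmod'
    have h1s' : (1 : ℕ) ≡ s [MOD s] := Nat.ModEq.of_dvd (dvd_pow_self s two_ne_zero) h1s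
    have hs0 : s ≡ 0 [MOD s] := (Nat.modEq_zero_iff_dvd).mpr dvd_rfl
    have := Nat.dvd_one.mp ((Nat.modEq_zero_iff_dvd).mp (h1s'.trans hs0))
    omega
  have d6 : a ^ r ≠ a ^ r * b := by
    intro he; exact hb1 (by rwa [eq_comm, mul_eq_left] at he)
  refine ⟨b ^ s, a * b ^ s, a ^ r, a ^ r * b, d1, ?_, d3, fun he => d4 he, d5, d6,
    ⟨d1, Or.inl hm1⟩, ⟨fun he => d4 he, Or.inr (pow_mem hm2 r)⟩, ⟨d6, Or.inl hm3⟩,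
    ⟨fun he => d3 he.symm, Or.inr (pow_mem hm4 s)⟩, ?_, ?_⟩
  · exact ne_of_orderOf_ne (by rw [hobs, hoar]; omega)
  · rintro ⟨hne, hmem | hmem⟩
    · have := orderOf_dvd_of_mem_zpowers hmem
      rw [hobs, hoar] at this
      exact prime_ne_dvd hr hs hrs this
    · have := orderOf_dvd_of_mem_zpowers hmem
      rw [hoar, hobs] at this
      exact prime_ne_dvd hs hr hrs.symm this
  · rintro ⟨hne, hmem | hmem⟩
    · -- a * b^s ∈ zpowers (a^r * b)
      obtain ⟨n, hn⟩ := exists_natpow_of_mem_zpowers hmem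
      rw [(hab.pow_left r).mul_pow, ← pow_mul] at hn
      have e : a ^ (r * n) * b ^ n = a ^ 1 * b ^ s := by rw [pow_one]; exact hn
      have hwn : (b ^ n) ^ (s ^ 2) = 1 := by
        rw [← pow_mul]
        exact orderOf_dvd_iff_pow_eq_one.mp (by rw [hob]; exact ⟨n, by ring⟩)
      have hproj : a ^ (r * n * s ^ 2) = a ^ (1 * s ^ 2) :=
        pow_proj (hab.pow_right n) (hab.pow_right s) e hwn kbs
      have hmod : r * n * s ^ 2 ≡ 1 * s ^ 2 [MOD r ^ 2] := modEq_of_pow_eq_pow hoa hproj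
      have hgcd : Nat.gcd (r ^ 2) (s ^ 2) = 1 := (hcp.pow_left 2).pow_right 2
      have hrn : r * n ≡ 1 [MOD r ^ 2] := Nat.ModEq.cancel_right_of_coprime hgcd hmod
      have hmr : r * n ≡ 1 [MOD r] := Nat.ModEq.of_dvd (dvd_pow_self r two_ne_zero) hrn
      have hzr : r * n ≡ 0 [MOD r] := (Nat.modEq_zero_iff_dvd).mpr (dvd_mul_right r n)
      have := Nat.dvd_one.mp ((Nat.modEq_zero_iff_dvd).mp (hmr.symm.trans hzr))
      omega
    · -- a^r * b ∈ zpowers (a * b^s)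
      obtain ⟨n, hn⟩ := exists_natpow_of_mem_zpowers hmem
      rw [(hab.pow_right s).mul_pow, ← pow_mul] at hn
      have e : b ^ (s * n) * a ^ n = b ^ 1 * a ^ r :=
        calc b ^ (s * n) * a ^ n = a ^ n * b ^ (s * n) := ((hab.pow_pow n (s * n)).eq).symm
          _ = a ^ r * b := hn
          _ = b ^ 1 * a ^ r := by rw [pow_one, (hab.pow_left r).eq]
      have hwn : (a ^ n) ^ (r ^ 2) = 1 := by
        rw [← pow_mul]
        exact orderOf_dvd_iff_pow_eq_one.mp (by rw [hoa]; exact ⟨n, by ring⟩)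
      have hproj : b ^ (s * n * r ^ 2) = b ^ (1 * r ^ 2) :=
        pow_proj (hab.symm.pow_right n) (hab.symm.pow_right r) e hwn kar
      have hmod : s * n * r ^ 2 ≡ 1 * r ^ 2 [MOD s ^ 2] := modEq_of_pow_eq_pow hob hproj
      have hgcd : Nat.gcd (s ^ 2) (r ^ 2) = 1 := (hcp.symm.pow_left 2).pow_right 2
      have hsn : s * n ≡ 1 [MOD s ^ 2] := Nat.ModEq.cancel_right_of_coprime hgcd hmod
      have hms : s * n ≡ 1 [MOD s] := Nat.ModEq.of_dvd (dvd_pow_self s two_ne_zero) hsn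
      have hzs : s * n ≡ 0 [MOD s] := (Nat.modEq_zero_iff_dvd).mpr (dvd_mul_right s n)
      have := Nat.dvd_one.mp ((Nat.modEq_zero_iff_dvd).mp (hms.symm.trans hzs))
      omega

/-- Configuration KC : two incomparable nontrivial p-elements sharing a common subgroup
element δ of order p, together with a commuting element of order q, give an induced C4. -/
lemma KC {p q : ℕ} (hp : p.Prime) (hq : q.Prime) (hpq : p ≠ q)
    {c x y δ : G} (hcx : Commute x c) (hcy : Commute y c) (hoc : orderOf c = q)
    {i j : ℕ} (hox : orderOf x = p ^ i) (hoy : orderOf y = p ^ j)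
    (hx1 : x ≠ 1) (hy1 : y ≠ 1) (hδ : orderOf δ = p)
    (hδx : δ ∈ zpowers x) (hδy : δ ∈ zpowers y)
    (hxy : x ≠ y) (hnxy : x ∉ zpowers y) (hnyx : y ∉ zpowers x) : pgHasInducedC4 G := by
  have hcopx : Nat.Coprime (orderOf x) (orderOf c) := by
    rw [hox, hoc]; exact (Nat.coprime_primes hp hq).mpr hpq |>.pow_left i
  have hcopy : Nat.Coprime (orderOf y) (orderOf c) := by
    rw [hoy, hoc]; exact (Nat.coprime_primes hp hq).mpr hpq |>.pow_left j
  have hmxc : c ∈ zpowers (x * c) := mem_zpowers_mul_right hcx hcopx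
  have hmyc : c ∈ zpowers (y * c) := mem_zpowers_mul_right hcy hcopy
  have hmx : x ∈ zpowers (x * c) := mem_zpowers_mul_left hcx hcopx
  have hmy : y ∈ zpowers (y * c) := mem_zpowers_mul_left hcy hcopy
  have hoxc : orderOf (x * c) = p ^ i * q := by
    rw [← hox, ← hoc]; exact hcx.orderOf_mul_eq_mul_orderOf_of_coprime hcopx
  have hoyc : orderOf (y * c) = p ^ j * q := by
    rw [← hoy, ← hoc]; exact hcy.orderOf_mul_eq_mul_orderOf_of_coprime hcopy
  have d1 : x * c ≠ c := fun he => hx1 (by rwa [mul_eq_right] at he)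
  have d2 : x * c ≠ y * c := fun he => hxy (mul_right_cancel he)
  have d3 : x * c ≠ δ := by
    intro he
    have h2 : c ∈ zpowers δ := he ▸ hmxc
    have := orderOf_dvd_of_mem_zpowers h2
    rw [hoc, hδ] at this
    exact prime_ne_dvd hp hq hpq this
  have d4 : c ≠ y * c := fun he => hy1 (by rwa [eq_comm, mul_eq_right] at he)
  have d5 : c ≠ δ := ne_of_orderOf_ne (by rw [hoc, hδ]; exact fun he => hpq he.symm)
  have d6 : y * c ≠ δ := by
    intro he
    have h2 : c ∈ zpowers δ := he ▸ hmyc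
    have := orderOf_dvd_of_mem_zpowers h2
    rw [hoc, hδ] at this
    exact prime_ne_dvd hp hq hpq this
  refine ⟨x * c, c, y * c, δ, d1, d2, d3, d4, d5, d6,
    ⟨d1, Or.inr hmxc⟩, ⟨d4, Or.inl hmyc⟩,
    ⟨d6, Or.inr (zpowers_le.mpr hmy hδy)⟩,
    ⟨fun he => d3 he.symm, Or.inl (zpowers_le.mpr hmx hδx)⟩, ?_, ?_⟩
  · -- ¬ adj (x*c) (y*c)
    rintro ⟨hne, hmem | hmem⟩
    · -- x*c ∈ zpowers (y*c)
      have hx2 : x ∈ zpowers (y * c) := by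
        have he : x = (x * c) * c⁻¹ := by group
        rw [he]; exact mul_mem hmem (inv_mem hmyc)
      have hdvd : orderOf x ∣ p ^ j * q := by rw [← hoyc]; exact orderOf_dvd_of_mem_zpowers hx2
      rw [hox] at hdvd
      have hdp : p ^ i ∣ p ^ j :=
        (Nat.Coprime.dvd_of_dvd_mul_right (((Nat.coprime_primes hp hq).mpr hpq).pow_left i)
          hdvd)
      have hxpj : x ^ (p ^ j) = 1 :=
        orderOf_dvd_iff_pow_eq_one.mp (by rw [hox]; exact hdp)
      exact hnxy (mem_zpowers_of_orderOf_eq hx2 hmy hoy hxpj)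
    · have hy2 : y ∈ zpowers (x * c) := by
        have he : y = (y * c) * c⁻¹ := by group
        rw [he]; exact mul_mem hmem (inv_mem hmxc)
      have hdvd : orderOf y ∣ p ^ i * q := by rw [← hoxc]; exact orderOf_dvd_of_mem_zpowers hy2
      rw [hoy] at hdvd
      have hdp : p ^ j ∣ p ^ i :=
        (Nat.Coprime.dvd_of_dvd_mul_right (((Nat.coprime_primes hp hq).mpr hpq).pow_left j)
          hdvd)
      have hypi : y ^ (p ^ i) = 1 :=
        orderOf_dvd_iff_pow_eq_one.mp (by rw [hoy]; exact hdp)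
      exact hnyx (mem_zpowers_of_orderOf_eq hy2 hmx hox hypi)
  · -- ¬ adj c δ
    rintro ⟨hne, hmem | hmem⟩
    · have := orderOf_dvd_of_mem_zpowers hmem
      rw [hoc, hδ] at this
      exact prime_ne_dvd hp hq hpq this
    · have := orderOf_dvd_of_mem_zpowers hmem
      rw [hδ, hoc] at this
      exact prime_ne_dvd hq hp hpq.symm this

lemma only_prime_pow {q : ℕ} (hq : q.Prime) :
    ∀ n, n ≠ 0 → (∀ s, s.Prime → s ∣ n → s = q) → ∃ e, n = q ^ e := by
  intro n
  induction n using Nat.strong_induction_on with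
  | _ n ih =>
    intro hn hprimes
    rcases eq_or_ne n 1 with rfl | h1
    · exact ⟨0, rfl⟩
    obtain ⟨s, hs, hsd⟩ := Nat.exists_prime_and_dvd h1
    obtain rfl := hprimes s hs hsd
    obtain ⟨m, rfl⟩ := hsd
    have hm0 : m ≠ 0 := by rintro rfl; simp at hn
    have hmlt : m < s * m := by
      have h2 := hs.one_lt
      have h3 := Nat.pos_of_ne_zero hm0
      nlinarith
    obtain ⟨e, rfl⟩ := ih m hmlt hm0 (fun s' hs' hd => hprimes s' hs' (hd.mul_left s))
    exact ⟨e + 1, by ring⟩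

end PGAux

open PGAux in
theorem structure_of_center_with_p2_and_q {G : Type*} [Group G] [Finite G]
    (h : pgC4Free G) (p q : ℕ) (hp : p.Prime) (hq : q.Prime) (hpq : p ≠ q)
    (z₁ : G) (hz₁ : z₁ ∈ Subgroup.center G) (hz₁o : orderOf z₁ = p ^ 2)
    (z₂ : G) (hz₂ : z₂ ∈ Subgroup.center G) (hz₂o : orderOf z₂ = q) :
    (∀ s : ℕ, s.Prime → s ∣ Nat.card G → s = p ∨ s = q) ∧
    (∀ P : Sylow p G,
        IsCyclic (P : Subgroup G) ∧ (P : Subgroup G).Normal ∧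
        ((Subgroup.centralizer ((P : Subgroup G) : Set G)).index = 1 ∨
         (Subgroup.centralizer ((P : Subgroup G) : Set G)).index = q)) ∧
    (∀ Q : Sylow q G, Monoid.exponent (Q : Subgroup G) = q) := by
  haveI hpF : Fact p.Prime := ⟨hp⟩
  haveI hqF : Fact q.Prime := ⟨hq⟩
  have hcz1 : ∀ g : G, Commute g z₁ := fun g => Subgroup.mem_center_iff.mp hz₁ g
  have hcz2 : ∀ g : G, Commute g z₂ := fun g => Subgroup.mem_center_iff.mp hz₂ g
  -- Claim 1 : only the primes p, q divide |G|
  have claim1 : ∀ s : ℕ, s.Prime → s ∣ Nat.card G → s = p ∨ s = q := by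
    intro s hs hsd
    by_contra hcon
    push_neg at hcon
    obtain ⟨hsp, hsq⟩ := hcon
    haveI := Fact.mk hs
    obtain ⟨t, hot⟩ := exists_prime_orderOf_dvd_card' s hsd
    exact h (KB hp hq hs hpq hsp hsq (hcz1 t) (hcz2 t) (hcz2 z₁) hot hz₁o hz₂o)
  -- Claim A : every element of order p lies in ⟨z₁⟩
  have claimA : ∀ t : G, orderOf t = p → t ∈ Subgroup.zpowers z₁ := by
    intro t ht
    by_contra hn
    exact h (KA hp hq hpq (hcz1 t) (hcz2 t) (hcz2 z₁) ht hz₁o hz₂o hn)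
  -- no element of order q²
  have noq2 : ∀ t : G, orderOf t ≠ q ^ 2 := by
    intro t ht
    exact h (KD hp hq hpq (hcz1 t).symm hz₁o ht)
  have noq2' : ∀ g : G, ¬ q ^ 2 ∣ orderOf g := by
    intro g hd
    have hM0 : orderOf g ≠ 0 := (orderOf_pos g).ne'
    have hdvd : orderOf g / q ^ 2 ∣ orderOf g := ⟨q ^ 2, (Nat.div_mul_cancel hd).symm⟩
    have : orderOf (g ^ (orderOf g / q ^ 2)) = q ^ 2 := by
      rw [orderOf_pow, Nat.gcd_eq_right hdvd, Nat.div_div_self hd hM0]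
    exact noq2 _ this
  -- order-p part of any nontrivial p-element contains z₁ ^ p
  have consPrime : ∀ y : G, ∀ k : ℕ, orderOf y = p ^ k → y ≠ 1 →
      z₁ ^ p ∈ Subgroup.zpowers y := by
    intro y k hk hy1
    have hk0 : k ≠ 0 := by
      rintro rfl
      rw [pow_zero] at hk
      exact hy1 (orderOf_eq_one_iff.mp hk)
    have hdvd : p ^ (k - 1) ∣ p ^ k := pow_dvd_pow p (by omega)
    have how : orderOf (y ^ p ^ (k - 1)) = p := by
      rw [orderOf_pow, hk, Nat.gcd_eq_right hdvd, Nat.pow_div (by omega) hp.pos,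
        show k - (k - 1) = 1 by omega, pow_one]
    have hwz : y ^ p ^ (k - 1) ∈ Subgroup.zpowers z₁ := claimA _ how
    have hz1p2 : (z₁ ^ p) ^ p = 1 := by
      rw [← pow_mul, ← sq, ← hz₁o, pow_orderOf_eq_one]
    have hmem : z₁ ^ p ∈ Subgroup.zpowers (y ^ p ^ (k - 1)) :=
      mem_zpowers_of_orderOf_eq (pow_mem (Subgroup.mem_zpowers z₁) p) hwz how hz1p2
    exact Subgroup.zpowers_le.mpr (pow_mem (Subgroup.mem_zpowers y) _) hmem
  have hz1p : orderOf (z₁ ^ p) = p := orderOf_pow_prime hp hz₁o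
  -- comparability of p-elements
  have comp : ∀ x y : G, (∃ i, orderOf x = p ^ i) → (∃ j, orderOf y = p ^ j) →
      x ∈ Subgroup.zpowers y ∨ y ∈ Subgroup.zpowers x := by
    rintro x y ⟨i, hi⟩ ⟨j, hj⟩
    rcases eq_or_ne x 1 with rfl | hx1
    · exact Or.inl (one_mem _)
    rcases eq_or_ne y 1 with rfl | hy1
    · exact Or.inr (one_mem _)
    by_contra hcon
    push_neg at hcon
    obtain ⟨hnxy, hnyx⟩ := hcon
    have hxy : x ≠ y := by rintro rfl; exact hnxy (Subgroup.mem_zpowers x)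
    exact h (KC hp hq hpq (hcz2 x) (hcz2 y) hz₂o hi hj hx1 hy1 hz1p
      (consPrime x i hi hx1) (consPrime y j hj hy1) hxy hnxy hnyx)
  -- the maximal p-element
  obtain ⟨x₀, hx₀S, hmax⟩ := Set.exists_max_image {g : G | ∃ k, orderOf g = p ^ k} orderOf
    (Set.toFinite _) ⟨z₁, 2, hz₁o⟩
  obtain ⟨m, hm⟩ := hx₀S
  have Pall : ∀ g : G, (∃ k, orderOf g = p ^ k) → g ∈ Subgroup.zpowers x₀ := by
    intro g hg
    rcases comp g x₀ hg ⟨m, hm⟩ with hmem | hmem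
    · exact hmem
    · obtain ⟨n, hn⟩ := exists_natpow_of_mem_zpowers hmem
      have h1 : orderOf (g ^ n) ∣ orderOf g := by
        rw [orderOf_pow]
        exact ⟨Nat.gcd (orderOf g) n, (Nat.div_mul_cancel (Nat.gcd_dvd_left _ _)).symm⟩
      have h2 : orderOf g ≤ orderOf (g ^ n) := by
        rw [hn]; exact hmax g hg
      have h3 : orderOf (g ^ n) = orderOf g :=
        le_antisymm (Nat.le_of_dvd (orderOf_pos g) h1) h2
      rw [orderOf_pow] at h3
      rcases Nat.div_eq_self.mp h3 with h6 | h6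
      · exact absurd h6 (orderOf_pos g).ne'
      · have hco : Nat.Coprime (orderOf g) n := h6
        have := mem_of_pow_mem_coprime hco (Subgroup.mem_zpowers (g ^ n))
        rwa [hn] at this
  have hx₀pow : ∀ {g : G}, g ∈ Subgroup.zpowers x₀ → ∃ k, orderOf g = p ^ k := by
    intro g hg
    have := orderOf_dvd_of_mem_zpowers hg
    rw [hm] at this
    obtain ⟨l, _, he⟩ := (Nat.dvd_prime_pow hp).mp this
    exact ⟨l, he⟩
  -- every Sylow p-subgroup equals ⟨x₀⟩
  have hPz : ∀ P : Sylow p G, (P : Subgroup G) = Subgroup.zpowers x₀ := by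
    intro P
    have hle : (P : Subgroup G) ≤ Subgroup.zpowers x₀ := by
      intro g hg
      apply Pall
      obtain ⟨k, hk⟩ := P.isPGroup' ⟨g, hg⟩
      have hg1 : g ^ p ^ k = 1 := by
        have := congrArg Subtype.val hk
        simpa using this
      obtain ⟨l, _, he⟩ := (Nat.dvd_prime_pow hp).mp (orderOf_dvd_iff_pow_eq_one.mpr hg1)
      exact ⟨l, he⟩
    have hpg : IsPGroup p (Subgroup.zpowers x₀) :=
      IsPGroup.of_card (by rw [Nat.card_zpowers, hm])
    exact (P.is_maximal' hpg hle).symm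
  have hcyc : IsCyclic (Subgroup.zpowers x₀ : Subgroup G) := by
    refine ⟨⟨⟨x₀, Subgroup.mem_zpowers x₀⟩, ?_⟩⟩
    rintro ⟨g, hg⟩
    obtain ⟨n, hn⟩ := Subgroup.mem_zpowers_iff.mp hg
    refine Subgroup.mem_zpowers_iff.mpr ⟨n, ?_⟩
    apply Subtype.ext
    rw [SubgroupClass.coe_zpow]
    exact hn
  have hnormal : (Subgroup.zpowers x₀ : Subgroup G).Normal := by
    constructor
    intro n hn g
    apply Pall
    obtain ⟨k, hk⟩ := hx₀pow hn
    exact ⟨k, by rw [orderOf_conj', hk]⟩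
  -- the conjugation character into (ZMod N)ˣ
  set N := orderOf x₀ with hN
  haveI : NeZero N := ⟨(orderOf_pos x₀).ne'⟩
  have hp2N : p ^ 2 ∣ N := by
    have := orderOf_dvd_of_mem_zpowers (Pall z₁ ⟨2, hz₁o⟩)
    rwa [hz₁o] at this
  have hpN : p ∣ N := dvd_trans (dvd_pow_self p two_ne_zero) hp2N
  have key : ∀ g : G, ∃ k : ℕ, g * x₀ * g⁻¹ = x₀ ^ k := by
    intro g
    obtain ⟨k, hk⟩ := exists_natpow_of_mem_zpowers
      (hnormal.conj_mem x₀ (Subgroup.mem_zpowers x₀) g)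
    exact ⟨k, hk.symm⟩
  choose kf hkf using key
  have hcopk : ∀ g : G, Nat.Coprime (kf g) N := by
    intro g
    have h1 : orderOf (x₀ ^ kf g) = N := by rw [← hkf g, orderOf_conj']
    rw [orderOf_pow] at h1
    rcases Nat.div_eq_self.mp h1 with h0 | h0
    · exact absurd h0 (NeZero.ne N)
    · exact Nat.Coprime.symm h0
  have congrKey : ∀ g g' : G, x₀ ^ kf (g * g') = x₀ ^ (kf g * kf g') := by
    intro g g'
    calc x₀ ^ kf (g * g') = g * g' * x₀ * (g * g')⁻¹ := (hkf _).symm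
      _ = g * (g' * x₀ * g'⁻¹) * g⁻¹ := by group
      _ = g * x₀ ^ kf g' * g⁻¹ := by rw [hkf g']
      _ = (g * x₀ * g⁻¹) ^ kf g' := by rw [conj_pow]
      _ = (x₀ ^ kf g) ^ kf g' := by rw [hkf g]
      _ = x₀ ^ (kf g * kf g') := by rw [← pow_mul]
  let rr : G →* (ZMod N)ˣ :=
    { toFun := fun g => ZMod.unitOfCoprime (kf g) (hcopk g)
      map_one' := by
        apply Units.ext
        have h1 : x₀ ^ kf 1 = x₀ ^ 1 := by rw [pow_one, ← hkf 1]; group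
        have h2 := modEq_of_pow_eq_pow hN.symm h1
        have h3 : ((kf 1 : ℕ) : ZMod N) = ((1 : ℕ) : ZMod N) :=
          (ZMod.natCast_eq_natCast_iff _ _ _).mpr h2
        simpa [ZMod.coe_unitOfCoprime] using h3
      map_mul' := by
        intro g g'
        apply Units.ext
        have h2 := modEq_of_pow_eq_pow hN.symm (congrKey g g')
        have h3 : ((kf (g * g') : ℕ) : ZMod N) = ((kf g * kf g' : ℕ) : ZMod N) :=
          (ZMod.natCast_eq_natCast_iff _ _ _).mpr h2
        simp only [ZMod.coe_unitOfCoprime, Units.val_mul]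
        rw [h3]; push_cast; ring }
  have hrr : ∀ g : G, (rr g : ZMod N) = ((kf g : ℕ) : ZMod N) := fun g => rfl
  have hker : ∀ g : G, g ∈ rr.ker ↔ g * x₀ = x₀ * g := by
    intro g
    rw [MonoidHom.mem_ker]
    constructor
    · intro hg
      have h1 : ((kf g : ℕ) : ZMod N) = ((1 : ℕ) : ZMod N) := by
        have := congrArg Units.val hg
        rw [hrr] at this
        simpa using this
      have h3 : x₀ ^ kf g = x₀ ^ 1 :=
        pow_eq_pow_of_modEq hN.symm ((ZMod.natCast_eq_natCast_iff _ _ _).mp h1)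
      rw [pow_one] at h3
      have h4 : g * x₀ * g⁻¹ = x₀ := by rw [hkf g, h3]
      calc g * x₀ = g * x₀ * g⁻¹ * g := by group
        _ = x₀ * g := by rw [h4]
    · intro hg
      have h4 : g * x₀ * g⁻¹ = x₀ := by rw [hg]; group
      have h3 : x₀ ^ kf g = x₀ ^ 1 := by rw [pow_one, ← hkf g, h4]
      apply Units.ext
      rw [hrr]
      have := (ZMod.natCast_eq_natCast_iff (kf g) 1 N).mpr (modEq_of_pow_eq_pow hN.symm h3)
      simpa using this
  have hkerC : rr.ker = Subgroup.centralizer ((Subgroup.zpowers x₀ : Subgroup G) : Set G) := by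
    ext g
    rw [hker, Subgroup.mem_centralizer_iff]
    constructor
    · intro hg h' hh'
      obtain ⟨n, hn⟩ := Subgroup.mem_zpowers_iff.mp hh'
      have hc : Commute g x₀ := hg
      have h5 := (hc.zpow_right n).eq
      rw [hn] at h5
      exact h5.symm
    · intro hg
      exact (hg x₀ (Subgroup.mem_zpowers x₀)).symm
  -- the index of the centralizer is a q-power
  have hPler : Subgroup.zpowers x₀ ≤ rr.ker := by
    intro g hg
    rw [hker]
    obtain ⟨n, hn⟩ := Subgroup.mem_zpowers_iff.mp hg
    rw [← hn]
    exact ((Commute.refl x₀).zpow_left n).eq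
  obtain ⟨P₁⟩ := (inferInstance : Nonempty (Sylow p G))
  haveI : Finite (Sylow p G) := by
    haveI : Subsingleton (Sylow p G) :=
      ⟨fun P Q => Sylow.ext (by rw [hPz P, hPz Q])⟩
    infer_instance
  haveI : (P₁ : Subgroup G).FiniteIndex := by
    constructor
    intro h0
    have h1 := Subgroup.card_mul_index (P₁ : Subgroup G)
    rw [h0, mul_zero] at h1
    exact (Nat.card_pos (α := G)).ne' h1.symm
  have hineq : rr.ker.index ∣ (P₁ : Subgroup G).index := by
    apply Subgroup.index_dvd_of_le
    rw [hPz P₁]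
    exact hPler
  have hqpow : ∃ e, rr.ker.index = q ^ e := by
    apply only_prime_pow hq
    · intro h0
      have h1 := Subgroup.card_mul_index rr.ker
      rw [h0, mul_zero] at h1
      exact (Nat.card_pos (α := G)).ne' h1.symm
    · intro s hs hsd
      rcases claim1 s hs (hsd.trans rr.ker.index_dvd_card) with rfl | rfl
      · exact absurd (hsd.trans hineq) (P₁.not_dvd_index)
      · rfl
  obtain ⟨e, he⟩ := hqpow
  -- e ≤ 1
  have he1 : e ≤ 1 := by
    by_contra he2
    push_neg at he2
    -- rr.range is a cyclic q-group of order q ^ e with e ≥ 2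
    have hcard : Nat.card rr.range = q ^ e := by
      rw [← Subgroup.index_ker, he]
    have hu1 : ∀ x : (ZMod N)ˣ, x ∈ (ZMod.unitsMap hpN).ker → ∃ k, orderOf x = p ^ k := by
      intro x hx
      have hkercard : Nat.card (ZMod.unitsMap (m := N) (n := p) hpN).ker * (p - 1)
          = Nat.totient N := by
        have hsurj := ZMod.unitsMap_surjective (m := N) (n := p) hpN
        have h1 := Subgroup.card_mul_index (ZMod.unitsMap (m := N) (n := p) hpN).ker
        rw [Subgroup.index_ker, MonoidHom.range_eq_top_of_surjective _ hsurj] at h1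
        have h2 : Nat.card (⊤ : Subgroup (ZMod p)ˣ) = p - 1 := by
          rw [Subgroup.card_top, Nat.card_eq_fintype_card, ZMod.card_units_eq_totient,
            Nat.totient_prime hp]
        rw [h2] at h1
        rw [h1, Nat.card_eq_fintype_card, ZMod.card_units_eq_totient]
      -- N = p ^ m', totient N = p^(m'-1) (p-1)
      have hm'2 : 2 ≤ m := by
        by_contra hlt
        push_neg at hlt
        interval_cases m
        · rw [hm, pow_zero] at hp2N
          have := Nat.le_of_dvd one_pos hp2N
          nlinarith [hp.two_le]
        · rw [hm, pow_one] at hp2N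
          have := Nat.le_of_dvd hp.pos hp2N
          nlinarith [hp.two_le]
      have htot : Nat.totient N = p ^ (m - 1) * (p - 1) := by
        rw [hm, Nat.totient_prime_pow hp (by omega)]
      rw [htot] at hkercard
      have hp1pos : 0 < p - 1 := by have := hp.two_le; omega
      have hkc : Nat.card (ZMod.unitsMap (m := N) (n := p) hpN).ker = p ^ (m - 1) :=
        Nat.eq_of_mul_eq_mul_right hp1pos hkercard
      have hpg : IsPGroup p (ZMod.unitsMap (m := N) (n := p) hpN).ker := IsPGroup.of_card hkc
      obtain ⟨k, hk⟩ := hpg ⟨x, hx⟩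
      have : x ^ p ^ k = 1 := by
        have := congrArg Subtype.val hk
        simpa using this
      obtain ⟨l, _, hl⟩ := (Nat.dvd_prime_pow hp).mp (orderOf_dvd_iff_pow_eq_one.mpr this)
      exact ⟨l, hl⟩
    -- injectivity of unitsMap on rr.range
    have hinj : Function.Injective ((ZMod.unitsMap hpN).comp rr.range.subtype) := by
      rw [injective_iff_map_eq_one]
      rintro ⟨x, hx⟩ hx1
      have hxq : orderOf x ∣ q ^ e := by
        have := Subgroup.orderOf_dvd_natCard rr.range hx
        rwa [hcard] at this
      obtain ⟨k, hk⟩ := hu1 x (by simpa using hx1)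
      obtain ⟨l, _, hl⟩ := (Nat.dvd_prime_pow hq).mp hxq
      have : p ^ k = q ^ l := hk ▸ hl
      have hord1 : orderOf x = 1 := by
        rcases Nat.eq_zero_or_pos k with rfl | hkpos
        · simpa using hk
        · exfalso
          have hpd : p ∣ q ^ l := by
            rw [← hl]
            exact hk ▸ dvd_pow_self p hkpos.ne'
          have := (Nat.prime_dvd_prime_iff_eq hp hq).mp (hp.dvd_of_dvd_pow hpd)
          exact hpq this
      exact Subtype.ext (orderOf_eq_one_iff.mp hord1)
    haveI hRcyc : IsCyclic rr.range := by
      have e1 := MonoidHom.ofInjective hinj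
      exact isCyclic_of_surjective e1.symm e1.symm.surjective
    obtain ⟨u, hu⟩ := IsCyclic.exists_generator (α := rr.range)
    have huord : orderOf u = q ^ e := by
      rw [orderOf_eq_card_of_forall_mem_zpowers hu, hcard]
    have huord' : orderOf (u : (ZMod N)ˣ) = q ^ e := by
      rw [← huord]
      exact orderOf_injective rr.range.subtype Subtype.coe_injective u
    obtain ⟨g, hg⟩ := MonoidHom.mem_range.mp u.2
    have hdvd : q ^ e ∣ orderOf g := by
      have h1 := orderOf_map_dvd rr g
      rw [hg, huord'] at h1
      exact h1
    exact noq2' g (dvd_trans (pow_dvd_pow q he2) hdvd)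
  have hidx : rr.ker.index = 1 ∨ rr.ker.index = q := by
    rcases Nat.le_one_iff_eq_zero_or_eq_one.mp he1 with rfl | rfl
    · left; simpa using he
    · right; simpa using he
  refine ⟨claim1, ?_, ?_⟩
  · intro P
    have hPeq := hPz P
    refine ⟨by rw [hPeq]; exact hcyc, by rw [hPeq]; exact hnormal, ?_⟩
    rw [hPeq, ← hkerC]
    exact hidx
  · intro Q
    have hexpdvd : Monoid.exponent (Q : Subgroup G) ∣ q := by
      apply Monoid.exponent_dvd_of_forall_pow_eq_one
      intro g
      obtain ⟨k, hk⟩ := Q.isPGroup' g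
      have hgo : orderOf (g : G) ∣ q ^ k := orderOf_dvd_iff_pow_eq_one.mpr (by
        have := congrArg Subtype.val hk
        simpa using this)
      obtain ⟨l, _, hl⟩ := (Nat.dvd_prime_pow hq).mp hgo
      have hl1 : l ≤ 1 := by
        by_contra hl2
        push_neg at hl2
        exact noq2' (g : G) (hl ▸ pow_dvd_pow q hl2)
      have hdq : orderOf (g : G) ∣ q := by
        rw [hl]
        rcases Nat.le_one_iff_eq_zero_or_eq_one.mp hl1 with rfl | rfl
        · simp
        · rw [pow_one]
      have hgq : (g : G) ^ q = 1 := orderOf_dvd_iff_pow_eq_one.mp hdq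
      have hco : ((g ^ q : (Q : Subgroup G)) : G) = ((1 : (Q : Subgroup G)) : G) := by
        push_cast
        exact hgq
      exact Subtype.ext hco
    have hqdvd : q ∣ Nat.card (Q : Subgroup G) := by
      rw [Sylow.card_eq_multiplicity]
      exact dvd_pow_self q (hq.factorization_pos_of_dvd (Nat.card_pos (α := G)).ne'
        (hz₂o ▸ orderOf_dvd_natCard z₂)).ne'
    obtain ⟨gq, hgq⟩ := exists_prime_orderOf_dvd_card' (G := (Q : Subgroup G)) q hqdvd
    have hqd2 : q ∣ Monoid.exponent (Q : Subgroup G) := by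
      have := Monoid.order_dvd_exponent gq
      rwa [hgq] at this
    exact Nat.dvd_antisymm hexpdvd hqd2
end
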